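/- arXiv:1010.6216 — 8 statements merged into one kernel-verified Lean document; each statement's English description precedes it below -/
import Mathlib

section
/- Given a real number r > 0, there exist positive real numbers s < t with s^t = t^s = r if and only if r > e^e. In that case, s and t are uniquely determined and satisfy 1 < s < e < t. -/
open Real Set

private lemma phiMono : StrictMonoOn (fun x : ℝ => x - Real.log x) (Ici 1) := by
  apply strictMonoOn_of_deriv_pos (convex_Ici 1)
  · exact continuous_id.continuousOn.sub
      (Real.continuousOn_log.mono (fun x hx =>
        Set.mem_compl_singleton_iff.mpr (ne_of_gt (lt_of_lt_of_le one_pos hx))))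
  · intro x hx
    rw [interior_Ici] at hx
    have hx0 : (0:ℝ) < x := lt_trans one_pos hx
    have hd : HasDerivAt (fun x : ℝ => x - Real.log x) (1 - x⁻¹) x :=
      (hasDerivAt_id x).sub (Real.hasDerivAt_log (ne_of_gt hx0))
    rw [hd.deriv]
    have : x⁻¹ < 1 := by
      rw [inv_lt_one_iff₀]; right; exact hx
    linarith

private lemma phiAnti : StrictAntiOn (fun x : ℝ => x - Real.log x) (Ioc 0 1) := by
  apply strictAntiOn_of_deriv_neg (convex_Ioc 0 1)
  · exact continuous_id.continuousOn.sub
      (Real.continuousOn_log.mono (fun x hx =>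
        Set.mem_compl_singleton_iff.mpr (ne_of_gt hx.1)))
  · intro x hx
    rw [interior_Ioc] at hx
    have hd : HasDerivAt (fun x : ℝ => x - Real.log x) (1 - x⁻¹) x :=
      (hasDerivAt_id x).sub (Real.hasDerivAt_log (ne_of_gt hx.1))
    rw [hd.deriv]
    have : 1 < x⁻¹ := (one_lt_inv₀ hx.1).mpr hx.2
    linarith

private lemma wMono : StrictMonoOn (fun x : ℝ => x - x⁻¹ - 2 * Real.log x) (Ioc 0 1) := by
  apply strictMonoOn_of_deriv_pos (convex_Ioc 0 1)
  · exact (continuous_id.continuousOn.sub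
      (continuousOn_inv₀.mono (fun x hx => Set.mem_compl_singleton_iff.mpr (ne_of_gt hx.1)))).sub
      ((Real.continuousOn_log.mono (fun x hx =>
        Set.mem_compl_singleton_iff.mpr (ne_of_gt hx.1))).const_smul (2:ℝ))
  · intro x hx
    rw [interior_Ioc] at hx
    have hx0 := hx.1
    have hd : HasDerivAt (fun x : ℝ => x - x⁻¹ - 2 * Real.log x)
        (1 - (-(x^2)⁻¹) - 2 * x⁻¹) x :=
      ((hasDerivAt_id x).sub (hasDerivAt_inv (ne_of_gt hx0))).sub
        ((Real.hasDerivAt_log (ne_of_gt hx0)).const_mul 2)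
    rw [hd.deriv]
    have h1 : 1 < x⁻¹ := (one_lt_inv₀ hx0).mpr hx.2
    have h2 : (x^2)⁻¹ = x⁻¹ * x⁻¹ := by rw [sq, mul_inv]
    nlinarith [sq_nonneg (x⁻¹ - 1)]

private lemma phi_lt_inv {a : ℝ} (h0 : 0 < a) (h1 : a < 1) :
    a - Real.log a < a⁻¹ - Real.log a⁻¹ := by
  have := wMono (Set.mem_Ioc.mpr ⟨h0, h1.le⟩) (Set.mem_Ioc.mpr ⟨one_pos, le_refl 1⟩) h1
  simp only [Real.log_one, Real.log_inv, inv_one] at this ⊢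
  linarith

private lemma exp_one_sub_lt {a : ℝ} (h0 : 0 < a) (h1 : a < 1) :
    Real.exp (1 - a) < 1 - Real.log a := by
  have hanti : StrictAntiOn (fun x : ℝ => 1 - Real.log x - Real.exp (1 - x)) (Ioc 0 1) := by
    apply strictAntiOn_of_deriv_neg (convex_Ioc 0 1)
    · exact (continuous_const.continuousOn.sub (Real.continuousOn_log.mono
        (fun x hx => Set.mem_compl_singleton_iff.mpr (ne_of_gt hx.1)))).sub
        (Real.continuous_exp.comp (continuous_const.sub continuous_id)).continuousOn
    · intro x hx
      rw [interior_Ioc] at hx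
      have hx0 := hx.1
      have hin : HasDerivAt (fun x : ℝ => 1 - x) (-1) x := by
        simpa using (hasDerivAt_id x).const_sub (1:ℝ)
      have hd : HasDerivAt (fun x : ℝ => 1 - Real.log x - Real.exp (1 - x))
          (0 - x⁻¹ - Real.exp (1 - x) * (-1)) x := by
        exact ((hasDerivAt_const x (1:ℝ)).sub (Real.hasDerivAt_log (ne_of_gt hx0))).sub
          ((Real.hasDerivAt_exp (1 - x)).comp x hin)
      rw [hd.deriv]
      have hlog : Real.log x < x - 1 := Real.log_lt_sub_one_of_pos hx0 (ne_of_lt hx.2)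
      have hxe : x < Real.exp (x - 1) := by
        calc x = Real.exp (Real.log x) := (Real.exp_log hx0).symm
        _ < Real.exp (x - 1) := Real.exp_lt_exp.mpr hlog
      have hx2 : Real.exp (1 - x) * x < 1 := by
        have := mul_lt_mul_of_pos_left hxe (Real.exp_pos (1 - x))
        rwa [← Real.exp_add, show 1 - x + (x - 1) = 0 by ring, Real.exp_zero] at this
      have : Real.exp (1 - x) < x⁻¹ := by
        rw [← one_div, lt_div_iff₀ hx0]
        linarith
      linarith
  have h := hanti (Set.mem_Ioc.mpr ⟨h0, h1.le⟩) (Set.mem_Ioc.mpr ⟨one_pos, le_refl 1⟩) h1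
  simp only [Real.log_one, sub_self, Real.exp_zero] at h
  linarith

private lemma pair_core {a b : ℝ} (hab : a < b) (h : a * Real.exp b = b * Real.exp a) :
    0 < a ∧ a < 1 ∧ 1 < b ∧ a * b < 1 ∧ 1 < Real.log a + b := by
  have hb0 : 0 < b := by
    rcases lt_trichotomy b 0 with hb | hb | hb
    · have ha : a < 0 := hab.trans hb
      have h' : (-a) * Real.exp b = (-b) * Real.exp a := by linarith
      have hc := congrArg Real.log h'
      rw [Real.log_mul (by linarith) (Real.exp_ne_zero b),
        Real.log_mul (by linarith) (Real.exp_ne_zero a), Real.log_exp, Real.log_exp] at hc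
      have hlog : Real.log (-b) < Real.log (-a) := Real.log_lt_log (by linarith) (by linarith)
      linarith
    · exfalso; subst hb
      simp only [Real.exp_zero, mul_one, zero_mul] at h
      exact absurd h (ne_of_lt (hab.trans_le (le_refl 0)))
    · exact hb
  have ha0 : 0 < a := by
    by_contra ha; push_neg at ha
    have h1 : a * Real.exp b ≤ 0 := mul_nonpos_of_nonpos_of_nonneg ha (Real.exp_pos b).le
    have h2 : 0 < b * Real.exp a := mul_pos hb0 (Real.exp_pos a)
    linarith [h]
  have hphi : a - Real.log a = b - Real.log b := by
    have hc := congrArg Real.log h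
    rw [Real.log_mul (ne_of_gt ha0) (Real.exp_ne_zero b),
      Real.log_mul (ne_of_gt hb0) (Real.exp_ne_zero a), Real.log_exp, Real.log_exp] at hc
    linarith
  have hb1 : 1 < b := by
    by_contra hb; push_neg at hb
    have := phiAnti (Set.mem_Ioc.mpr ⟨ha0, (hab.trans_le hb).le⟩) (Set.mem_Ioc.mpr ⟨hb0, hb⟩) hab
    simp only at this; linarith
  have ha1 : a < 1 := by
    by_contra ha; push_neg at ha
    have := phiMono (Set.mem_Ici.mpr ha) (Set.mem_Ici.mpr (ha.trans hab.le)) hab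
    simp only at this; linarith
  have hinv := phi_lt_inv ha0 ha1
  have hainv : 1 < a⁻¹ := (one_lt_inv₀ ha0).mpr ha1
  have habl : a * b < 1 := by
    have hblt : b < a⁻¹ := by
      by_contra hge; push_neg at hge
      have := phiMono.monotoneOn (Set.mem_Ici.mpr hainv.le)
        (Set.mem_Ici.mpr (hainv.le.trans hge)) hge
      linarith
    calc a * b < a * a⁻¹ := by exact mul_lt_mul_of_pos_left hblt ha0
    _ = 1 := mul_inv_cancel₀ (ne_of_gt ha0)
  have hebound := exp_one_sub_lt ha0 ha1
  have hexpb : Real.exp (1 - a) < b := by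
    by_contra hle; push_neg at hle
    have h2 := phiMono.monotoneOn (Set.mem_Ici.mpr hb1.le)
      (Set.mem_Ici.mpr (by nlinarith [Real.exp_pos (1-a)] : (1:ℝ) ≤ Real.exp (1 - a))) hle
    simp only [Real.log_exp] at h2
    linarith
  have hlb : 1 - a < Real.log b := by
    have := Real.log_lt_log (Real.exp_pos _) hexpb
    rwa [Real.log_exp] at this
  exact ⟨ha0, ha1, hb1, habl, by linarith⟩

private lemma pair_to_ab {r s t : ℝ} (hs : 0 < s) (hst : s < t)
    (h1 : s ^ t = r) (h2 : t ^ s = r) :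
    0 < Real.log s ∧ Real.log s < 1 ∧ 1 < Real.log t ∧
      Real.log s * Real.log t < 1 ∧ 1 < Real.log (Real.log s) + Real.log t ∧
      Real.log s * Real.exp (Real.log t) = Real.log r ∧
      Real.log t * Real.exp (Real.log s) = Real.log r := by
  have ht : 0 < t := hs.trans hst
  have hab : Real.log s < Real.log t := Real.log_lt_log hs hst
  have e1 : Real.log s * Real.exp (Real.log t) = Real.log r := by
    rw [Real.exp_log ht, ← h1, Real.log_rpow hs, mul_comm]
  have e2 : Real.log t * Real.exp (Real.log s) = Real.log r := by
    rw [Real.exp_log hs, ← h2, Real.log_rpow ht, mul_comm]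
  obtain ⟨c1, c2, c3, c4, c5⟩ := pair_core hab (e1.trans e2.symm)
  exact ⟨c1, c2, c3, c4, c5, e1, e2⟩

private lemma uniq_aux {L b b' : ℝ} (hL : 0 < L) (hb1 : 1 ≤ b)
    (hblog : Real.log L < b - Real.log b) (hle : b ≤ b')
    (hH : b * Real.exp (L * Real.exp (-b)) = L)
    (hH' : b' * Real.exp (L * Real.exp (-b')) = L) : b = b' := by
  have hmono : StrictMonoOn (fun x : ℝ => x * Real.exp (L * Real.exp (-x))) (Ici b) := by
    apply strictMonoOn_of_deriv_pos (convex_Ici b)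
    · exact (continuous_id.mul (Real.continuous_exp.comp
        (continuous_const.mul (Real.continuous_exp.comp continuous_neg)))).continuousOn
    · intro x hx
      rw [interior_Ici] at hx
      have hx1 : 1 < x := lt_of_le_of_lt hb1 hx
      have hx0 : (0:ℝ) < x := lt_trans one_pos hx1
      have hphix : b - Real.log b < x - Real.log x := by
        have := phiMono (Set.mem_Ici.mpr hb1) (Set.mem_Ici.mpr (hb1.trans hx.le)) hx
        simpa using this
      have hkey : x * (L * Real.exp (-x)) < 1 := by
        have hlt : Real.log x + Real.log L < x := by linarith
        have hxe := Real.exp_lt_exp.mpr hlt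
        rw [Real.exp_add, Real.exp_log hx0, Real.exp_log hL] at hxe
        rw [Real.exp_neg]
        rw [show x * (L * (Real.exp x)⁻¹) = (x * L) * (Real.exp x)⁻¹ by ring]
        rw [← one_div, mul_comm (x*L), div_mul_eq_mul_div, one_mul,
          div_lt_one (Real.exp_pos x)]
        exact hxe
      have hin : HasDerivAt (fun x : ℝ => L * Real.exp (-x)) (L * (Real.exp (-x) * (-1))) x :=
        (((Real.hasDerivAt_exp (-x)).comp x ((hasDerivAt_id x).neg))).const_mul L
      have hd : HasDerivAt (fun x : ℝ => x * Real.exp (L * Real.exp (-x)))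
          (1 * Real.exp (L * Real.exp (-x)) +
            x * (Real.exp (L * Real.exp (-x)) * (L * (Real.exp (-x) * (-1))))) x :=
        (hasDerivAt_id x).mul ((Real.hasDerivAt_exp _).comp x hin)
      rw [hd.deriv]
      have hE : 0 < Real.exp (L * Real.exp (-x)) := Real.exp_pos _
      calc (0:ℝ) < Real.exp (L * Real.exp (-x)) * (1 - x * (L * Real.exp (-x))) := by
            apply mul_pos hE; linarith
        _ = 1 * Real.exp (L * Real.exp (-x)) +
            x * (Real.exp (L * Real.exp (-x)) * (L * (Real.exp (-x) * (-1)))) := by ring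
  by_contra hne
  have hlt : b < b' := lt_of_le_of_ne hle hne
  have := hmono (Set.self_mem_Ici) (Set.mem_Ici.mpr hle) hlt
  simp only at this
  rw [hH, hH'] at this
  exact lt_irrefl L this

/-- For `r > 0` there exist `0 < s < t` with `s^t = t^s = r` iff `r > e^e`;
in that case `s, t` are unique and `1 < s < e < t`. -/
theorem exists_s_t_pow_eq_iff (r : ℝ) (hr : 0 < r) :
    ((∃ s t : ℝ, 0 < s ∧ s < t ∧ s ^ t = r ∧ t ^ s = r) ↔
        exp 1 ^ exp 1 < r) ∧
    (∀ s t s' t' : ℝ, 0 < s → s < t → s ^ t = r → t ^ s = r →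
        0 < s' → s' < t' → s' ^ t' = r → t' ^ s' = r → s = s' ∧ t = t') ∧
    (∀ s t : ℝ, 0 < s → s < t → s ^ t = r → t ^ s = r →
        1 < s ∧ s < exp 1 ∧ exp 1 < t) := by
  refine ⟨⟨?_, ?_⟩, ?_, ?_⟩
  · -- forward: pair exists → e^e < r
    rintro ⟨s, t, hs, hst, h1, h2⟩
    obtain ⟨c1, c2, c3, c4, c5, e1, e2⟩ := pair_to_ab hs hst h1 h2
    rw [Real.exp_one_rpow]
    have hkey : Real.exp 1 < Real.log r := by
      have heq : Real.exp (Real.log (Real.log s) + Real.log t)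
          = Real.log s * Real.exp (Real.log t) := by
        rw [Real.exp_add, Real.exp_log c1]
      calc Real.exp 1 < Real.exp (Real.log (Real.log s) + Real.log t) :=
            Real.exp_lt_exp.mpr c5
        _ = Real.log r := by rw [heq, e1]
    have := Real.exp_lt_exp.mpr hkey
    rwa [Real.exp_log hr] at this
  · -- backward: e^e < r → pair exists
    intro hre
    rw [Real.exp_one_rpow] at hre
    set L := Real.log r with hLdef
    have hL : Real.exp 1 < L := by
      have := Real.log_lt_log (Real.exp_pos _) hre
      rwa [Real.log_exp] at this
    have hL0 : 0 < L := lt_trans (Real.exp_pos 1) hL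
    have h1L : 1 < Real.log L := by
      have := Real.log_lt_log (Real.exp_pos 1) hL
      rwa [Real.log_exp] at this
    have hLL : Real.log L < L := by
      have := Real.log_lt_sub_one_of_pos hL0 (by nlinarith [Real.exp_pos 1, Real.add_one_le_exp (1:ℝ)] : L ≠ 1)
      linarith
    have hlogL0 : 0 < Real.log L := lt_trans one_pos h1L
    have helog : Real.exp 1 * Real.log L < L := by
      have hq0 : (0:ℝ) < L / Real.exp 1 := div_pos hL0 (Real.exp_pos 1)
      have hq1 : L / Real.exp 1 ≠ 1 := by
        have : 1 < L / Real.exp 1 := (one_lt_div (Real.exp_pos 1)).mpr hL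
        exact ne_of_gt this
      have := Real.log_lt_sub_one_of_pos hq0 hq1
      rw [Real.log_div (ne_of_gt hL0) (Real.exp_ne_zero 1), Real.log_exp] at this
      have h2 : Real.log L < L / Real.exp 1 := by linarith
      calc Real.exp 1 * Real.log L < Real.exp 1 * (L / Real.exp 1) :=
            mul_lt_mul_of_pos_left h2 (Real.exp_pos 1)
        _ = L := by field_simp
    set H : ℝ → ℝ := fun x => x * Real.exp (L * Real.exp (-x)) with hHdef
    have hcont : ContinuousOn H (Icc (Real.log L) L) :=
      (continuous_id.mul (Real.continuous_exp.comp
        (continuous_const.mul (Real.continuous_exp.comp continuous_neg)))).continuousOn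
    have hHlogL : H (Real.log L) = Real.log L * Real.exp 1 := by
      simp only [hHdef]
      rw [Real.exp_neg, Real.exp_log hL0, mul_inv_cancel₀ (ne_of_gt hL0)]
    have hHL : L ≤ H L := by
      have h1 : 1 < Real.exp (L * Real.exp (-L)) := by
        rw [Real.one_lt_exp_iff]
        exact mul_pos hL0 (Real.exp_pos _)
      simp only [hHdef]
      nlinarith
    obtain ⟨b, hbmem, hHb⟩ := intermediate_value_Icc hLL.le hcont
      ⟨by rw [hHlogL]; linarith, hHL⟩
    have hbgt : Real.log L < b := by
      rcases lt_or_eq_of_le hbmem.1 with h | h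
      · exact h
      · exfalso
        rw [← h, hHlogL] at hHb
        linarith
    have hexpneg : Real.exp (-b) < L⁻¹ := by
      calc Real.exp (-b) < Real.exp (-(Real.log L)) := Real.exp_lt_exp.mpr (by linarith)
        _ = L⁻¹ := by rw [Real.exp_neg, Real.exp_log hL0]
    set a := L * Real.exp (-b) with hadef
    have ha0 : 0 < a := mul_pos hL0 (Real.exp_pos _)
    have ha1 : a < 1 := by
      calc a < L * L⁻¹ := mul_lt_mul_of_pos_left hexpneg hL0
        _ = 1 := mul_inv_cancel₀ (ne_of_gt hL0)
    have hab : a < b := by linarith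
    refine ⟨Real.exp a, Real.exp b, Real.exp_pos a, Real.exp_lt_exp.mpr hab, ?_, ?_⟩
    · rw [Real.rpow_def_of_pos (Real.exp_pos a), Real.log_exp]
      have : a * Real.exp b = L := by
        rw [hadef, mul_assoc, ← Real.exp_add, neg_add_cancel, Real.exp_zero, mul_one]
      rw [this, hLdef, Real.exp_log hr]
    · rw [Real.rpow_def_of_pos (Real.exp_pos b), Real.log_exp]
      have : b * Real.exp a = L := hHb
      rw [this, hLdef, Real.exp_log hr]
  · -- uniqueness
    intro s t s' t' hs hst h1 h2 hs' hst' h1' h2'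
    have ht : 0 < t := hs.trans hst
    have ht' : 0 < t' := hs'.trans hst'
    obtain ⟨c1, c2, c3, c4, c5, e1, e2⟩ := pair_to_ab hs hst h1 h2
    obtain ⟨d1, d2, d3, d4, d5, f1, f2⟩ := pair_to_ab hs' hst' h1' h2'
    set L := Real.log r with hLdef
    set a := Real.log s
    set b := Real.log t
    set a' := Real.log s'
    set b' := Real.log t'
    have hL0 : 0 < L := by
      rw [← e1]; exact mul_pos c1 (Real.exp_pos _)
    have ha_eq : L * Real.exp (-b) = a := by
      rw [← e1, Real.exp_neg, mul_assoc, mul_inv_cancel₀ (Real.exp_ne_zero _), mul_one]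
    have ha_eq' : L * Real.exp (-b') = a' := by
      rw [← f1, Real.exp_neg, mul_assoc, mul_inv_cancel₀ (Real.exp_ne_zero _), mul_one]
    have hHb : b * Real.exp (L * Real.exp (-b)) = L := by rw [ha_eq]; exact e2
    have hHb' : b' * Real.exp (L * Real.exp (-b')) = L := by rw [ha_eq']; exact f2
    have hlogsum : Real.log a + Real.log b < 0 := by
      have h0 : Real.log (a * b) < 0 := Real.log_neg (mul_pos c1 (lt_trans one_pos c3)) c4
      rwa [Real.log_mul (ne_of_gt c1) (ne_of_gt (lt_trans one_pos c3))] at h0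
    have hlogsum' : Real.log a' + Real.log b' < 0 := by
      have h0 : Real.log (a' * b') < 0 := Real.log_neg (mul_pos d1 (lt_trans one_pos d3)) d4
      rwa [Real.log_mul (ne_of_gt d1) (ne_of_gt (lt_trans one_pos d3))] at h0
    have hlogL : Real.log L = Real.log a + b := by
      rw [← e1, Real.log_mul (ne_of_gt c1) (Real.exp_ne_zero _), Real.log_exp]
    have hlogL' : Real.log L = Real.log a' + b' := by
      rw [← f1, Real.log_mul (ne_of_gt d1) (Real.exp_ne_zero _), Real.log_exp]
    have hblog : Real.log L < b - Real.log b := by rw [hlogL]; linarith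
    have hblog' : Real.log L < b' - Real.log b' := by rw [hlogL']; linarith
    have hbb' : b = b' := by
      rcases le_total b b' with h | h
      · exact uniq_aux hL0 c3.le hblog h hHb hHb'
      · exact (uniq_aux hL0 d3.le hblog' h hHb' hHb).symm
    have htt' : t = t' := by
      rw [← Real.exp_log ht, ← Real.exp_log ht']
      exact congrArg Real.exp hbb'
    have haa' : a = a' := by
      have : a * Real.exp b = a' * Real.exp b := by
        rw [e1, hbb', f1]
      exact mul_right_cancel₀ (Real.exp_ne_zero b) this
    have hss' : s = s' := by
      rw [← Real.exp_log hs, ← Real.exp_log hs']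
      exact congrArg Real.exp haa'
    exact ⟨hss', htt'⟩
  · -- bounds
    intro s t hs hst h1 h2
    have ht : 0 < t := hs.trans hst
    obtain ⟨c1, c2, c3, _, _, _, _⟩ := pair_to_ab hs hst h1 h2
    refine ⟨?_, ?_, ?_⟩
    · have := Real.exp_lt_exp.mpr c1
      rwa [Real.exp_zero, Real.exp_log hs] at this
    · have := Real.exp_lt_exp.mpr c2
      rwa [Real.exp_log hs] at this
    · have := Real.exp_lt_exp.mpr c3
      rwa [Real.exp_log ht] at this
end

section
/- Assume the Gelfond–Schneider theorem: if α and β are algebraic complex numbers with α ≠ 0, α ≠ 1, and β irrational, then α^β is transcendental. Let a be a rational number with a ≥ e^{-1/e} that is not of the form n^n for any natural number n, and let t > 0 be a real number with t^t = a. Then t is transcendental. -/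
open Real

-- key arithmetic lemma: if q^p = a^d with gcd(p,d)=1, p,d ≥ 1, then q.den = 1
lemma den_eq_one_of_pow_eq_pow (q a : ℚ) (p : ℕ) (hq : q ≠ 0) (ha : a ≠ 0)
    (hp : Nat.Coprime p q.den) (h : q ^ p = a ^ q.den) : q.den = 1 := by
  by_contra hd
  -- q.den ≥ 2, pick a prime ℓ dividing q.den
  obtain ⟨ℓ, hℓ, hdvd⟩ := Nat.exists_prime_and_dvd hd
  haveI : Fact ℓ.Prime := ⟨hℓ⟩
  have hden0 : q.den ≠ 0 := q.den_nz
  have hv1 : 1 ≤ padicValNat ℓ q.den := one_le_padicValNat_of_dvd hden0 hdvd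
  -- ℓ does not divide q.num
  have hnotnum : ¬ (ℓ:ℤ) ∣ q.num := by
    intro hcon
    have : ℓ ∣ q.num.natAbs := Int.natCast_dvd_natCast.mp (Int.dvd_natAbs.mpr hcon)
    have := Nat.eq_one_of_dvd_coprimes q.reduced this hdvd
    exact hℓ.one_lt.ne' this
  have hvq : padicValRat ℓ q = -(padicValNat ℓ q.den : ℤ) := by
    rw [padicValRat_def, padicValInt.eq_zero_of_not_dvd hnotnum]
    ring
  -- valuation of both sides
  have hval : (p : ℤ) * padicValRat ℓ q = (q.den : ℤ) * padicValRat ℓ a := by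
    rw [← padicValRat.pow q, ← padicValRat.pow a, h]
  have hdvdval : (q.den : ℤ) ∣ (padicValNat ℓ q.den : ℤ) := by
    have h1 : (q.den : ℤ) ∣ (p : ℤ) * padicValRat ℓ q := ⟨_, hval⟩
    have h2 : IsCoprime (q.den : ℤ) (p : ℤ) := by
      rw [Int.isCoprime_iff_gcd_eq_one]
      simpa [Int.gcd, Nat.coprime_comm] using hp
    have := h2.dvd_of_dvd_mul_left h1
    rw [hvq] at this
    exact (dvd_neg.mp this)
  have hle : q.den ≤ padicValNat ℓ q.den :=
    Int.ofNat_le.mp (Int.le_of_dvd (by exact_mod_cast hv1) hdvdval)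
  have hpow : ℓ ^ padicValNat ℓ q.den ∣ q.den := pow_padicValNat_dvd
  have : 2 ^ q.den ≤ q.den := by
    calc 2 ^ q.den ≤ ℓ ^ padicValNat ℓ q.den :=
          Nat.pow_le_pow_left hℓ.two_le q.den |>.trans (Nat.pow_le_pow_right hℓ.pos hle)
      _ ≤ q.den := Nat.le_of_dvd (Nat.pos_of_ne_zero hden0) hpow
  exact absurd this (Nat.lt_two_pow_self (n := q.den)).not_ge

/-- Assuming Gelfond–Schneider, if `a ∈ ℚ`, `a ≥ e^(-1/e)`, `a` is not of the
form `n^n`, and `t > 0` satisfies `t^t = a`, then `t` is transcendental. -/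
theorem transcendental_of_self_pow_rat
    (hGS : ∀ α β : ℂ, IsAlgebraic ℚ α → IsAlgebraic ℚ β → α ≠ 0 → α ≠ 1 →
      (¬∃ q : ℚ, (q : ℂ) = β) → Transcendental ℚ (α ^ β))
    (a : ℚ) (ha : exp (-(exp 1)⁻¹) ≤ (a : ℝ))
    (hnn : ¬∃ n : ℕ, (a : ℝ) = (n : ℝ) ^ (n : ℕ))
    (t : ℝ) (ht : 0 < t) (htt : t ^ t = (a : ℝ)) :
    Transcendental ℚ t := by
  intro halg
  have ha0 : 0 < a := by
    have : (0:ℝ) < (a:ℝ) := htt ▸ Real.rpow_pos_of_pos ht _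
    exact_mod_cast this
  by_cases hrat : ∃ q : ℚ, (q : ℝ) = t
  · obtain ⟨q, rfl⟩ := hrat
    have hq0 : 0 < q := by exact_mod_cast ht
    set p := q.num.natAbs with hp
    have hnum : (p : ℤ) = q.num := Int.natAbs_of_nonneg (Rat.num_nonneg.mpr hq0.le)
    -- raise both sides to the power q.den
    have h1 : (q:ℝ) ^ (p : ℕ) = (a:ℝ) ^ (q.den : ℕ) := by
      have h2 : ((q:ℝ) ^ (q:ℝ)) ^ (q.den : ℝ) = (a:ℝ) ^ (q.den : ℝ) := by rw [htt]
      rw [← Real.rpow_natCast ((q:ℝ)) p, ← Real.rpow_natCast ((a:ℝ)) q.den,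
        ← Real.rpow_mul ht.le] at *
      rw [← h2]
      congr 1
      have : (q * (q.den : ℚ) : ℚ) = (q.num : ℚ) := by
        rw [Rat.mul_den_eq_num]
      have h3 : (q:ℝ) * (q.den : ℝ) = (q.num : ℝ) := by exact_mod_cast this
      rw [h3, ← hnum]
      push_cast
      ring
    have hQ : q ^ (p : ℕ) = a ^ q.den := by exact_mod_cast h1
    have hden : q.den = 1 := den_eq_one_of_pow_eq_pow q a p hq0.ne' ha0.ne'
      (by rw [hp]; exact q.reduced) hQ
    refine hnn ⟨p, ?_⟩
    have hqn : (q:ℝ) = (p:ℝ) := by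
      have : (q.num : ℚ) = q := Rat.den_eq_one_iff q |>.mp hden
      rw [← this, ← hnum]
      push_cast
      ring
    rw [← htt, hqn, ← Real.rpow_natCast ((p:ℝ)) p]
  · -- irrational case
    have hinj : Function.Injective (algebraMap ℝ ℂ) := (algebraMap ℝ ℂ).injective
    have htC : IsAlgebraic ℚ ((t:ℂ)) := by
      rw [show ((t:ℂ)) = algebraMap ℝ ℂ t from rfl]
      exact halg.algebraMap
    have hne0 : (t:ℂ) ≠ 0 := by exact_mod_cast ht.ne'
    have hne1 : (t:ℂ) ≠ 1 := by
      intro h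
      exact hrat ⟨1, by exact_mod_cast h.symm⟩
    have hnorat : ¬∃ q : ℚ, (q : ℂ) = (t:ℂ) := by
      rintro ⟨q, hq⟩
      exact hrat ⟨q, by exact_mod_cast hq⟩
    have := hGS _ _ htC htC hne0 hne1 hnorat
    apply this
    rw [← Complex.ofReal_cpow ht.le, htt]
    have : ((a:ℝ) : ℂ) = algebraMap ℚ ℂ a := by
      rw [eq_ratCast (algebraMap ℚ ℂ) a]; push_cast; ring
    rw [this]
    exact isAlgebraic_algebraMap a
end

section
/- Assume the Gelfond–Schneider theorem. Let a ≥ e^{-1/e} be a real number such that a^n is algebraic but irrational for every positive integer n, and let t > 0 satisfy t^t = a. Then t is transcendental. -/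
open Real

/-- Assuming Gelfond–Schneider, if `a ≥ e^(-1/e)` and every positive integer
power `a^n` is algebraic irrational, and `t > 0` satisfies `t^t = a`, then `t`
is transcendental. -/
theorem transcendental_of_self_pow_algebraic_irrational
    (hGS : ∀ α β : ℂ, IsAlgebraic ℚ α → IsAlgebraic ℚ β → α ≠ 0 → α ≠ 1 →
      (¬∃ q : ℚ, (q : ℂ) = β) → Transcendental ℚ (α ^ β))
    (a : ℝ) (ha : exp (-(exp 1)⁻¹) ≤ a)
    (halg : ∀ n : ℕ, 1 ≤ n → IsAlgebraic ℚ (a ^ n) ∧ ¬∃ q : ℚ, (q : ℝ) = a ^ n)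
    (t : ℝ) (ht : 0 < t) (htt : t ^ t = a) :
    Transcendental ℚ t := by
  intro htalg
  by_cases hq : ∃ q : ℚ, (q : ℝ) = t
  · -- rational case: a ^ q.den = t ^ q.num is rational
    obtain ⟨q, hqt⟩ := hq
    have hq0 : (0 : ℝ) < (q : ℝ) := hqt ▸ ht
    have hq0' : 0 < q := by exact_mod_cast hq0
    have hnum : 0 < q.num := Rat.num_pos.mpr hq0'
    have hmul : (q : ℝ) * (q.den : ℝ) = (q.num : ℝ) := by
      rw [Rat.cast_def]
      field_simp
    have key : a ^ q.den = ((q ^ q.num.toNat : ℚ) : ℝ) := by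
      rw [← htt, ← Real.rpow_natCast (t ^ t) q.den, ← Real.rpow_mul ht.le,
        ← hqt, hmul]
      have : ((q.num : ℝ)) = ((q.num.toNat : ℕ) : ℝ) := by
        exact_mod_cast (Int.toNat_of_nonneg hnum.le).symm
      rw [this, Real.rpow_natCast]
      push_cast
      ring
    exact (halg q.den q.pos).2 ⟨_, key.symm⟩
  · -- irrational algebraic case: Gelfond–Schneider gives t^t transcendental
    have ht1 : t ≠ 1 := by
      intro h
      rw [h, Real.one_rpow] at htt
      exact (halg 1 le_rfl).2 ⟨1, by rw [pow_one, ← htt]; norm_num⟩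
    have f : ℝ →ₐ[ℚ] ℂ := Complex.ofRealAm.restrictScalars ℚ
    have htalgC : IsAlgebraic ℚ (t : ℂ) :=
      htalg.algHom (Complex.ofRealAm.restrictScalars ℚ)
    have haalgC : IsAlgebraic ℚ (a : ℂ) := by
      have := (halg 1 le_rfl).1
      simpa using this.algHom (Complex.ofRealAm.restrictScalars ℚ)
    have hirr : ¬∃ q : ℚ, (q : ℂ) = (t : ℂ) := by
      rintro ⟨q, hqc⟩
      exact hq ⟨q, by exact_mod_cast hqc⟩
    have htrans := hGS t t htalgC htalgC (by exact_mod_cast ht.ne')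
      (by exact_mod_cast ht1) hirr
    have heq : (t : ℂ) ^ (t : ℂ) = (a : ℂ) := by
      rw [← Complex.ofReal_cpow ht.le, htt]
    rw [heq] at htrans
    exact htrans haalgC
end

section
/- Assume the Gelfond–Schneider theorem. Let r be a natural number with r > e^e and r ≠ 16, and let 0 < s < t be the real numbers with s^t = t^s = r. Then at least one of s, t is transcendental. -/
open Real

private lemma lt_two_pow_pred : ∀ n : ℕ, 3 ≤ n → n < 2 ^ (n - 1) := by
  intro n hn
  induction n with
  | zero => omega
  | succ m ih =>
    rcases Nat.lt_or_ge m 3 with h | h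
    · interval_cases m <;> omega
    · have h1 := ih (by omega)
      have h2 : 1 ≤ 2 ^ (m - 1) := Nat.one_le_two_pow
      have h3 : m + 1 - 1 = (m - 1) + 1 := by omega
      rw [h3, pow_succ]
      omega

/-- Assuming Gelfond–Schneider, if `r ∈ ℕ`, `r > e^e`, `r ≠ 16`, and
`0 < s < t` satisfy `s^t = t^s = r`, then at least one of `s, t` is
transcendental. -/
theorem not_both_algebraic
    (hGS : ∀ α β : ℂ, IsAlgebraic ℚ α → IsAlgebraic ℚ β → α ≠ 0 → α ≠ 1 →
      (¬∃ q : ℚ, (q : ℂ) = β) → Transcendental ℚ (α ^ β))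
    (r : ℕ) (hr : exp 1 ^ exp 1 < (r : ℝ)) (hr16 : r ≠ 16)
    (s t : ℝ) (hs : 0 < s) (hst : s < t)
    (h1 : s ^ t = (r : ℝ)) (h2 : t ^ s = (r : ℝ)) :
    ¬(IsAlgebraic ℚ s ∧ IsAlgebraic ℚ t) := by
  rintro ⟨has, hat⟩
  have ht0 : 0 < t := hs.trans hst
  have hrpos : (1 : ℝ) < (r : ℝ) := by
    refine lt_trans ?_ hr
    rw [Real.one_lt_rpow_iff_of_pos (exp_pos 1)]
    have : (1 : ℝ) < exp 1 := by
      have := Real.add_one_le_exp 1; linarith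
    exact Or.inl ⟨this, exp_pos 1⟩
  have hs1 : 1 < s := by
    by_contra hle
    push_neg at hle
    have : s ^ t ≤ 1 := Real.rpow_le_one hs.le hle ht0.le
    rw [h1] at this; linarith
  have ht1 : 1 < t := hs1.trans hst
  -- Step 1: Gelfond–Schneider gives rationality of both s and t.
  have key : ∀ x y : ℝ, 1 < x → 0 < y → x ^ y = (r : ℝ) → IsAlgebraic ℚ x →
      IsAlgebraic ℚ y → ∃ q : ℚ, (q : ℝ) = y := by
    intro x y hx hy hxy hax hay
    by_contra hne
    have hax' : IsAlgebraic ℚ ((x : ℂ)) := hax.algHom (Complex.ofRealAm.restrictScalars ℚ)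
    have hay' : IsAlgebraic ℚ ((y : ℂ)) := hay.algHom (Complex.ofRealAm.restrictScalars ℚ)
    have hx0 : (x : ℂ) ≠ 0 := by
      exact_mod_cast ne_of_gt (lt_trans one_pos hx)
    have hx1 : (x : ℂ) ≠ 1 := by
      exact_mod_cast ne_of_gt hx
    have hnq : ¬∃ q : ℚ, (q : ℂ) = (y : ℂ) := by
      rintro ⟨q, hq⟩
      exact hne ⟨q, by exact_mod_cast hq⟩
    have htr := hGS _ _ hax' hay' hx0 hx1 hnq
    have heq : (x : ℂ) ^ (y : ℂ) = ((r : ℕ) : ℂ) := by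
      rw [← Complex.ofReal_cpow (le_of_lt (lt_trans one_pos hx)), hxy]
      norm_cast
    rw [heq] at htr
    exact htr (isAlgebraic_nat r)
  obtain ⟨qt, hqt⟩ := key s t hs1 ht0 h1 has hat
  obtain ⟨qs, hqs⟩ := key t s ht1 hs h2 hat has
  -- Step 2: analytic identities
  set u : ℝ := t / s with hu_def
  have hu1 : 1 < u := (one_lt_div hs).mpr hst
  have hsu : s * u = t := by rw [hu_def, mul_comm, div_mul_cancel₀ t hs.ne']
  have hlogs : 0 < Real.log s := Real.log_pos hs1
  have tls : t * Real.log s = s * Real.log t := by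
    have e1 : Real.log (s ^ t) = t * Real.log s := Real.log_rpow hs t
    have e2 : Real.log (t ^ s) = s * Real.log t := Real.log_rpow ht0 s
    rw [h1] at e1; rw [h2] at e2; linarith
  have hlogt : Real.log t = u * Real.log s := by
    rw [hu_def]; field_simp; linarith [tls]
  have htsu : t = s ^ u := by
    rw [Real.rpow_def_of_pos hs, mul_comm, ← hlogt, Real.exp_log ht0]
  have key1 : s ^ (u - 1) = u := by
    rw [Real.rpow_sub hs, Real.rpow_one, ← htsu, hu_def]
  have key2 : s ^ (s * u) = (r : ℝ) := by rw [hsu, h1]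
  -- Step 3: rational / natural number bookkeeping
  have hqs1 : (1 : ℚ) < qs := by
    rw [← Rat.cast_lt (K := ℝ), hqs]; exact_mod_cast hs1
  set qu : ℚ := qt / qs with hqu_def
  have hqs0 : qs ≠ 0 := by positivity
  have hqu : (qu : ℝ) = u := by
    rw [hqu_def, Rat.cast_div, hqs, hqt]
  have hqu1 : (1 : ℚ) < qu := by
    rw [← Rat.cast_lt (K := ℝ), hqu]; exact_mod_cast hu1
  set A : ℕ := qs.num.toNat with hA_def
  set B : ℕ := qs.den with hB_def
  set P : ℕ := qu.num.toNat with hP_def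
  set Q : ℕ := qu.den with hQ_def
  have hqs_num_pos : 0 < qs.num := Rat.num_pos.mpr (lt_trans one_pos hqs1)
  have hqu_num_pos : 0 < qu.num := Rat.num_pos.mpr (lt_trans one_pos hqu1)
  have hA : (A : ℤ) = qs.num := Int.toNat_of_nonneg hqs_num_pos.le
  have hP : (P : ℤ) = qu.num := Int.toNat_of_nonneg hqu_num_pos.le
  have hApos : 0 < A := by omega
  have hPpos : 0 < P := by omega
  have hBpos : 0 < B := qs.pos
  have hQpos : 0 < Q := qu.pos
  -- qs * den = num, in ℚ
  have hqs_mul : qs * (B : ℚ) = (A : ℚ) := by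
    rw [hB_def, Rat.mul_den_eq_num]
    exact_mod_cast congrArg (fun z : ℤ => (z : ℚ)) hA.symm
  have hqu_mul : qu * (Q : ℚ) = (P : ℚ) := by
    rw [hQ_def, Rat.mul_den_eq_num]
    exact_mod_cast congrArg (fun z : ℤ => (z : ℚ)) hP.symm
  -- real versions
  have hsB : s * (B : ℝ) = (A : ℝ) := by
    rw [← hqs]; exact_mod_cast hqs_mul
  have huQ : u * (Q : ℝ) = (P : ℝ) := by
    rw [← hqu]; exact_mod_cast hqu_mul
  have hQP : Q < P := by
    have : (Q : ℚ) < (P : ℚ) := by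
      calc (Q : ℚ) = 1 * Q := (one_mul _).symm
      _ < qu * Q := by
        apply mul_lt_mul_of_pos_right hqu1
        exact_mod_cast hQpos
      _ = P := hqu_mul
    exact_mod_cast this
  -- Equation E2 : qs ^ (A*P) = r ^ (B*Q)
  have E2 : qs ^ (A * P) = ((r : ℕ) : ℚ) ^ (B * Q) := by
    have ex2 : ((A * P : ℕ) : ℝ) = (s * u) * ((B * Q : ℕ) : ℝ) := by
      push_cast
      rw [← hsB, ← huQ]; ring
    have : s ^ ((A * P : ℕ) : ℝ) = ((r : ℝ)) ^ ((B * Q : ℕ) : ℝ) := by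
      rw [ex2, Real.rpow_mul hs.le, key2]
    rw [Real.rpow_natCast, Real.rpow_natCast, ← hqs] at this
    exact_mod_cast this
  -- Equation E1 : qs ^ (P-Q) = qu ^ Q
  have E1 : qs ^ (P - Q) = qu ^ Q := by
    have ex1 : ((P - Q : ℕ) : ℝ) = (u - 1) * ((Q : ℕ) : ℝ) := by
      rw [Nat.cast_sub hQP.le]
      rw [← huQ]; ring
    have : s ^ ((P - Q : ℕ) : ℝ) = u ^ ((Q : ℕ) : ℝ) := by
      rw [ex1, Real.rpow_mul hs.le, key1]
    rw [Real.rpow_natCast, Real.rpow_natCast, ← hqs, ← hqu] at this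
    exact_mod_cast this
  -- From E2, denominators give B = 1
  have hB1 : B = 1 := by
    have hden := congrArg Rat.den E2
    rw [Rat.den_pow, Rat.den_pow] at hden
    simp only [Rat.den_natCast, one_pow] at hden
    have hne : A * P ≠ 0 := (Nat.mul_pos hApos hPpos).ne'
    have : B ^ (A * P) = 1 := hden
    exact (pow_eq_one_iff.mp this).resolve_right hne
  -- From E1, denominators give Q = 1
  have hQ1 : Q = 1 := by
    have hden := congrArg Rat.den E1
    rw [Rat.den_pow, Rat.den_pow] at hden
    rw [← hB_def, ← hQ_def, hB1, one_pow] at hden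
    exact (pow_eq_one_iff.mp hden.symm).resolve_right hQpos.ne'
  -- numerators
  have hnum2 : A ^ (A * P) = r ^ (B * Q) := by
    have h := congrArg Rat.num E2
    rw [Rat.num_pow, Rat.num_pow] at h
    simp only [Rat.num_natCast] at h
    rw [← hA] at h
    exact_mod_cast h
  have hnum1 : A ^ (P - Q) = P ^ Q := by
    have h := congrArg Rat.num E1
    rw [Rat.num_pow, Rat.num_pow] at h
    rw [← hA, ← hP] at h
    exact_mod_cast h
  -- A ≥ 2 and P ≥ 2
  have hA2 : 2 ≤ A := by
    have : (1 : ℚ) < (A : ℚ) := by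
      calc (1 : ℚ) < qs := hqs1
      _ = qs * (B : ℚ) := by rw [hB1]; push_cast; ring
      _ = (A : ℚ) := hqs_mul
    have : (1 : ℕ) < A := by exact_mod_cast this
    omega
  have hP2 : 2 ≤ P := by omega
  -- A ^ (P-1) = P forces P = 2, A = 2
  rw [hQ1, pow_one] at hnum1
  have hPe : P = 2 := by
    by_contra hne
    have hP3 : 3 ≤ P := by omega
    have : 2 ^ (P - 1) ≤ A ^ (P - 1) := Nat.pow_le_pow_left hA2 _
    rw [hnum1] at this
    have := lt_two_pow_pred P hP3
    omega
  have hAe : A = 2 := by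
    rw [hPe] at hnum1
    simpa using hnum1
  rw [hB1, hQ1, hAe, hPe] at hnum2
  norm_num at hnum2
  exact hr16 hnum2.symm
end

section
/- Assume Schanuel's conjecture. Then the numbers e, e^e, e^{e^e}, ... (the tower E₀ = e, Eₙ₊₁ = e^{Eₙ}) are algebraically independent over ℚ. -/
/-- Schanuel's conjecture. -/
def SchanuelConjecture : Prop :=
  ∀ (n : ℕ) (α : Fin n → ℂ), LinearIndependent ℚ α →
    ∃ g : Fin n → ℂ,
      (∀ i, g i ∈ Set.range α ∪ Set.range (fun i => Complex.exp (α i))) ∧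
      AlgebraicIndependent ℚ g

/-- The exponential tower `e, e^e, e^{e^e}, …`. -/
noncomputable def expTower : ℕ → ℝ
  | 0 => Real.exp 1
  | n + 1 => Real.exp (expTower n)

/-- Prepending `1` to an algebraically independent family over ℚ gives a
linearly independent family. -/
lemma consOne_linearIndependent {m : ℕ} {x : Fin m → ℂ}
    (hx : AlgebraicIndependent ℚ x) :
    LinearIndependent ℚ (Fin.cons 1 x : Fin (m + 1) → ℂ) := by
  rw [Fintype.linearIndependent_iff]
  intro g hg
  set p : MvPolynomial (Fin m) ℚ :=
    MvPolynomial.C (g 0) + ∑ i : Fin m, MvPolynomial.C (g i.succ) * MvPolynomial.X i with hp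
  have haev : MvPolynomial.aeval x p = 0 := by
    rw [hp]
    rw [Fin.sum_univ_succ] at hg
    simpa [Rat.smul_def, Algebra.algebraMap_eq_smul_one, Rat.smul_def] using hg
  have hp0 : p = 0 := algebraicIndependent_iff.mp hx p haev
  intro i
  refine Fin.cases ?_ ?_ i
  · have := congrArg (MvPolynomial.coeff 0) hp0
    simpa [p, MvPolynomial.coeff_sum, MvPolynomial.coeff_C_mul, MvPolynomial.coeff_X',
      Finsupp.single_eq_zero, eq_comm] using this
  · intro j
    have hne : (0 : Fin m →₀ ℕ) ≠ Finsupp.single j 1 := by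
      simp [eq_comm, Finsupp.single_eq_zero]
    have := congrArg (MvPolynomial.coeff (Finsupp.single j 1)) hp0
    simpa [p, MvPolynomial.coeff_sum, MvPolynomial.coeff_C_mul, MvPolynomial.coeff_X',
      MvPolynomial.coeff_C, if_neg hne, Finsupp.single_left_inj,
      Finsupp.single_eq_single_iff, Finset.sum_ite_eq'] using this

/-- The induction step, extracted: if `1, E₀, …, E_{m-1}` are ℚ-linearly
independent, then Schanuel gives algebraic independence of `E₀, …, E_m`. -/
lemma expTower_step (hS : SchanuelConjecture) (m : ℕ)
    (hli : LinearIndependent ℚ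
      (Fin.cons 1 (fun i : Fin m => ((expTower i : ℝ) : ℂ)) : Fin (m + 1) → ℂ)) :
    AlgebraicIndependent ℚ (fun i : Fin (m + 1) => ((expTower i : ℝ) : ℂ)) := by
  set α : Fin (m + 1) → ℂ := Fin.cons 1 (fun i : Fin m => ((expTower i : ℝ) : ℂ)) with hα
  set T : Fin (m + 1) → ℂ := fun i => ((expTower i : ℝ) : ℂ) with hT
  obtain ⟨g, hmem, hg⟩ := hS (m + 1) α hli
  have hexp : ∀ j : Fin (m + 1), Complex.exp (α j) = T j := by
    intro j
    refine Fin.cases ?_ ?_ j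
    · show Complex.exp (α 0) = T 0
      have h1 : α 0 = ((1 : ℝ) : ℂ) := by simp [hα]
      have h2 : T 0 = ((Real.exp 1 : ℝ) : ℂ) := by
        simp only [hT]
        norm_num [show expTower 0 = Real.exp 1 from rfl]
      rw [h1, h2, ← Complex.ofReal_exp]
    · intro i
      show Complex.exp (α i.succ) = T i.succ
      have h1 : α i.succ = ((expTower i : ℝ) : ℂ) := by simp [hα]
      have h2 : T i.succ = ((Real.exp (expTower i) : ℝ) : ℂ) := by
        simp only [hT, Fin.val_succ]
        norm_num [show expTower (i + 1) = Real.exp (expTower i) from rfl]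
      rw [h1, h2, ← Complex.ofReal_exp]
  have hrange : ∀ j, ∃ i, g j = T i := by
    intro j
    rcases hmem j with ⟨i, hi⟩ | ⟨i, hi⟩
    · -- g j = α i
      revert hi
      refine Fin.cases ?_ ?_ i
      · intro h
        exfalso
        have h1 : α (0 : Fin (m + 1)) = 1 := by simp [hα]
        rw [h1] at h
        exact hg.transcendental j (h ▸ isAlgebraic_one)
      · intro k h
        refine ⟨k.castSucc, ?_⟩
        rw [← h]
        simp [hα, hT]
    · have hi' : Complex.exp (α i) = g j := hi
      exact ⟨i, by rw [← hi', hexp]⟩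
  choose σ hσ using hrange
  have hσinj : Function.Injective σ := by
    intro a b hab
    exact hg.injective (by rw [hσ a, hσ b, hab])
  have hbij : Function.Bijective σ := (Finite.injective_iff_bijective).mp hσinj
  let e := Equiv.ofBijective σ hbij
  have hTg : T = g ∘ e.symm := by
    funext i
    have h3 : g (e.symm i) = T (σ (e.symm i)) := hσ _
    rw [Function.comp_apply, h3]
    congr 1
    exact (e.apply_symm_apply i).symm
  rw [hTg]
  exact hg.comp e.symm e.symm.injective

/-- Schanuel's conjecture implies the numbers `e, e^e, e^{e^e}, …` are
algebraically independent over ℚ. -/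
theorem expTower_algebraicIndependent (hS : SchanuelConjecture) (n : ℕ) :
    AlgebraicIndependent ℚ (fun i : Fin (n + 1) => expTower i) := by
  have key : ∀ m : ℕ, AlgebraicIndependent ℚ (fun i : Fin (m + 1) => ((expTower i : ℝ) : ℂ)) := by
    intro m
    induction m with
    | zero =>
      refine expTower_step hS 0 ?_
      rw [Fintype.linearIndependent_iff]
      intro g hg i
      fin_cases i
      simpa [Fin.sum_univ_succ] using hg
    | succ k ih =>
      exact expTower_step hS (k + 1) (consOne_linearIndependent ih)
  refine AlgebraicIndependent.of_comp ((Complex.ofRealAm.restrictScalars ℚ) : ℝ →ₐ[ℚ] ℂ) ?_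
  exact key n
end

section
/- Assume Schanuel's conjecture. Let z and w be complex numbers, neither equal to 0 or 1, such that z^w and w^z are algebraic (for some fixed choices of logarithms of z and w). Then z and w are either both rational or both transcendental. -/
open Complex Polynomial IntermediateField Set

noncomputable section

noncomputable section

/-- Transfer algebraicity along inclusion of images of two abstract coefficient fields. -/
theorem alg_mono {F₁ F₂ : Type*} [Field F₁] [Field F₂] [Algebra F₁ ℂ] [Algebra F₂ ℂ]
    (h : Set.range (algebraMap F₁ ℂ) ⊆ Set.range (algebraMap F₂ ℂ)) {x : ℂ}
    (hx : IsAlgebraic F₁ x) : IsAlgebraic F₂ x := by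
  have hinj := (algebraMap F₂ ℂ).injective
  have hex : ∀ c : F₁, ∃ d : F₂, algebraMap F₂ ℂ d = algebraMap F₁ ℂ c := fun c => h ⟨c, rfl⟩
  choose f hf using hex
  have hcomp : ∀ c, algebraMap F₂ ℂ (f c) = algebraMap F₁ ℂ c := hf
  let φ : F₁ →+* F₂ :=
  { toFun := f
    map_one' := hinj (by rw [hcomp, map_one, map_one])
    map_mul' := fun x y => hinj (by rw [hcomp, map_mul, map_mul, hcomp, hcomp])
    map_zero' := hinj (by rw [hcomp, map_zero, map_zero])
    map_add' := fun x y => hinj (by rw [hcomp, map_add, map_add, hcomp, hcomp]) }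
  obtain ⟨p, hp0, hpx⟩ := hx
  refine ⟨p.map φ, fun hc => hp0 (Polynomial.map_injective φ φ.injective (by simpa using hc)), ?_⟩
  rw [Polynomial.aeval_def, Polynomial.eval₂_map]
  have : (algebraMap F₂ ℂ).comp (φ : F₁ →+* F₂) = algebraMap F₁ ℂ := by
    ext c; exact hcomp c
  rw [this, ← Polynomial.aeval_def, hpx]

theorem trans_mono {F₁ F₂ : Type*} [Field F₁] [Field F₂] [Algebra F₁ ℂ] [Algebra F₂ ℂ]
    (h : Set.range (algebraMap F₁ ℂ) ⊆ Set.range (algebraMap F₂ ℂ)) {x : ℂ}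
    (hx : Transcendental F₂ x) : Transcendental F₁ x := fun ha => hx (alg_mono h ha)

theorem range_algebraMap_eq {F : Type*} [Field F] [Algebra F ℂ] (K : IntermediateField F ℂ) :
    Set.range (algebraMap ↥K ℂ) = (K : Set ℂ) := by
  ext x
  constructor
  · rintro ⟨y, rfl⟩; exact y.2
  · intro hx; exact ⟨⟨x, hx⟩, rfl⟩

/-- powers of a transcendental element are linearly independent -/
theorem plin {K : Type*} [Field K] [Algebra K ℂ] {a : ℂ} (ha : Transcendental K a)
    (n : ℕ) (f : ℕ → K)
    (h : ∑ i ∈ Finset.range n, algebraMap K ℂ (f i) * a ^ i = 0) :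
    ∀ i < n, f i = 0 := by
  rw [transcendental_iff] at ha
  have hq : (Polynomial.aeval a) (∑ i ∈ Finset.range n, Polynomial.C (f i) * Polynomial.X ^ i) = 0 := by
    rw [map_sum]
    simpa [Polynomial.aeval_def] using h
  have := ha _ hq
  intro i hi
  have hc := congrArg (fun p => Polynomial.coeff p i) this
  simpa [Polynomial.finset_sum_coeff, Polynomial.coeff_C_mul, Polynomial.coeff_X_pow,
    Finset.sum_ite_eq' (Finset.range n) i, hi] using hc

/-- Clearing denominators: algebraic over the intermediate field generated by the range of `v`
implies algebraic over the subalgebra generated by it. -/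
theorem bridge {F : Type*} [Field F] [Algebra F ℂ] {ι : Type*} (v : ι → ℂ) {x : ℂ}
    (hx : IsAlgebraic ↥(IntermediateField.adjoin F (Set.range v)) x) :
    IsAlgebraic ↥(Algebra.adjoin F (Set.range v)) x := by
  obtain ⟨p, hp0, hpx⟩ := hx
  have key : ∀ i : ℕ, ∃ u d : ℂ, u ∈ Algebra.adjoin F (Set.range v) ∧
      d ∈ Algebra.adjoin F (Set.range v) ∧ d ≠ 0 ∧ ((p.coeff i : ℂ)) * d = u := by
    intro i
    have hmem : (p.coeff i : ℂ) ∈ IntermediateField.adjoin F (Set.range v) := (p.coeff i).2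
    rw [IntermediateField.mem_adjoin_range_iff] at hmem
    obtain ⟨r, s, hrs⟩ := hmem
    by_cases hc : (p.coeff i : ℂ) = 0
    · exact ⟨0, 1, Subalgebra.zero_mem _, Subalgebra.one_mem _, one_ne_zero, by rw [hc]; ring⟩
    · have hs : MvPolynomial.aeval v s ≠ 0 := by
        intro h0
        rw [h0, div_zero] at hrs
        exact hc hrs
      refine ⟨MvPolynomial.aeval v r, MvPolynomial.aeval v s, ?_, ?_, hs, ?_⟩
      · rw [Algebra.adjoin_range_eq_range_aeval]; exact ⟨r, rfl⟩
      · rw [Algebra.adjoin_range_eq_range_aeval]; exact ⟨s, rfl⟩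
      · rw [hrs]; field_simp
  choose u d hu hd hdne hud using key
  set N := p.natDegree with hN
  set c : ℕ → ↥(Algebra.adjoin F (Set.range v)) := fun i =>
    ⟨u i * ∏ j ∈ (Finset.range (N + 1)).erase i, d j,
      Subalgebra.mul_mem _ (hu i) (Subalgebra.prod_mem _ fun j _ => hd j)⟩ with hcdef
  set q : Polynomial ↥(Algebra.adjoin F (Set.range v)) :=
    ∑ i ∈ Finset.range (N + 1), Polynomial.C (c i) * Polynomial.X ^ i with hq
  have hcoeff : ∀ k, k ∈ Finset.range (N + 1) → q.coeff k = c k := by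
    intro k hk
    rw [hq, Polynomial.finset_sum_coeff]
    rw [Finset.sum_eq_single k]
    · simp
    · intro b _ hbk
      simp [Polynomial.coeff_C_mul, Polynomial.coeff_X_pow, Ne.symm hbk]
    · intro hk'; exact absurd hk hk'
  refine ⟨q, ?_, ?_⟩
  · -- q ≠ 0
    intro h0
    have hNc : q.coeff N = c N := hcoeff N (by simp)
    rw [h0, Polynomial.coeff_zero] at hNc
    have hNc' : (0 : ℂ) = u N * ∏ j ∈ (Finset.range (N + 1)).erase N, d j := congrArg Subtype.val hNc
    have hlc0 : p.coeff N ≠ 0 := Polynomial.leadingCoeff_ne_zero.2 hp0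
    have hlc : (p.coeff N : ℂ) ≠ 0 := fun h => hlc0 (by exact_mod_cast h)
    have huN : u N ≠ 0 := by
      rw [← hud N]
      exact mul_ne_zero hlc (hdne N)
    exact (mul_ne_zero huN (Finset.prod_ne_zero_iff.2 fun j _ => hdne j)) hNc'.symm
  · -- evaluation
    have heval : (Polynomial.aeval x) q =
        ∑ i ∈ Finset.range (N + 1), (u i * ∏ j ∈ (Finset.range (N + 1)).erase i, d j) * x ^ i := by
      rw [hq, map_sum]
      refine Finset.sum_congr rfl fun i _ => ?_
      rw [map_mul, map_pow, Polynomial.aeval_X, Polynomial.aeval_C]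
      rfl
    rw [heval]
    have hterm : ∀ i ∈ Finset.range (N + 1),
        (u i * ∏ j ∈ (Finset.range (N + 1)).erase i, d j) * x ^ i =
        (∏ j ∈ Finset.range (N + 1), d j) * (((p.coeff i : ℂ)) * x ^ i) := by
      intro i hi
      rw [← hud i, ← Finset.prod_erase_mul _ _ hi]
      ring
    rw [Finset.sum_congr rfl hterm, ← Finset.mul_sum]
    have hsum : ∑ i ∈ Finset.range (N + 1), ((p.coeff i : ℂ)) * x ^ i = 0 := by
      have h1 := Polynomial.aeval_eq_sum_range (S := ℂ) (x := x) (p := p)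
      rw [hpx] at h1
      have h2 := h1.symm
      simpa [Algebra.smul_def, IntermediateField.algebraMap_apply] using h2
    rw [hsum, mul_zero]



theorem exchange {K : Type*} [Field K] [Algebra K ℂ] {a b : ℂ}
    (ha : Transcendental K a) (hab : IsAlgebraic ↥K⟮b⟯ a) :
    IsAlgebraic ↥K⟮a⟯ b := by
  obtain ⟨p, hp0, hpa⟩ := hab
  set N := p.natDegree with hN
  have key : ∀ i : ℕ, ∃ r s : K[X], (Polynomial.aeval b) s ≠ 0 ∧
      (p.coeff i : ℂ) * (Polynomial.aeval b) s = (Polynomial.aeval b) r := by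
    intro i
    by_cases hc : (p.coeff i : ℂ) = 0
    · exact ⟨0, 1, by simp, by simp [hc]⟩
    · have hmem : (p.coeff i : ℂ) ∈ K⟮b⟯ := (p.coeff i).2
      rw [IntermediateField.mem_adjoin_simple_iff] at hmem
      obtain ⟨r, s, hrs⟩ := hmem
      have hs : (Polynomial.aeval b) s ≠ 0 := by
        intro h0
        rw [h0, div_zero] at hrs
        exact hc hrs
      exact ⟨r, s, hs, by rw [hrs]; field_simp⟩
  choose r s hsne hcrs using key
  have hspoly : ∀ i, s i ≠ 0 := fun i h => hsne i (by rw [h, map_zero])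
  set φ := algebraMap K ↥K⟮a⟯ with hφ
  set α : ↥K⟮a⟯ := ⟨a, IntermediateField.mem_adjoin_simple_self K a⟩ with hα
  set m : ℕ → K[X] := fun i => r i * ∏ j ∈ (Finset.range (N + 1)).erase i, s j with hm
  set T : Polynomial ↥K⟮a⟯ :=
    ∑ i ∈ Finset.range (N + 1), Polynomial.C (α ^ i) * (m i).map φ with hT
  have hαpow : ∀ i : ℕ, (algebraMap ↥K⟮a⟯ ℂ) (α ^ i) = a ^ i := by
    intro i; rw [IntermediateField.algebraMap_apply]; push_cast; rfl
  refine ⟨T, ?_, ?_⟩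
  · -- T ≠ 0
    intro h0
    have hcoeffs : ∀ i, i < N + 1 → m i = 0 := by
      have hk : ∀ k : ℕ, ∀ i, i < N + 1 → (m i).coeff k = 0 := by
        intro k
        have hTk : T.coeff k = 0 := by rw [h0, Polynomial.coeff_zero]
        rw [hT, Polynomial.finset_sum_coeff] at hTk
        have hTk' : ∑ i ∈ Finset.range (N + 1),
            algebraMap K ℂ ((m i).coeff k) * a ^ i = 0 := by
          have := congrArg (algebraMap ↥K⟮a⟯ ℂ) hTk
          rw [map_sum, map_zero] at this
          rw [← this]
          refine Finset.sum_congr rfl fun i _ => ?_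
          rw [Polynomial.coeff_C_mul, Polynomial.coeff_map, map_mul, hαpow i, hφ,
            ← IsScalarTower.algebraMap_apply K ↥K⟮a⟯ ℂ]
          ring
        exact plin ha (N + 1) _ hTk'
      intro i hi
      ext k
      simpa using hk k i hi
    -- now p = 0
    apply hp0
    refine Polynomial.ext fun i => ?_
    rw [Polynomial.coeff_zero]
    by_cases hi : i < N + 1
    · have hmi := hcoeffs i hi
      rw [hm] at hmi
      have hri : r i = 0 := by
        rcases mul_eq_zero.1 hmi with h | h
        · exact h
        · exact absurd h (Finset.prod_ne_zero_iff.2 fun j _ => hspoly j)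
      have := hcrs i
      rw [hri, map_zero] at this
      have hci : (p.coeff i : ℂ) = 0 := by
        rcases mul_eq_zero.1 this with h | h
        · exact h
        · exact absurd h (hsne i)
      exact_mod_cast hci
    · push_neg at hi
      exact Polynomial.coeff_eq_zero_of_natDegree_lt (show p.natDegree < i by omega)
  · -- evaluation at b is 0
    have heval : (Polynomial.aeval b) T =
        ∑ i ∈ Finset.range (N + 1),
          a ^ i * ((Polynomial.aeval b) (r i) * ∏ j ∈ (Finset.range (N + 1)).erase i,
            (Polynomial.aeval b) (s j)) := by
      rw [hT, map_sum]
      refine Finset.sum_congr rfl fun i _ => ?_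
      rw [map_mul, Polynomial.aeval_C, hαpow i, Polynomial.aeval_map_algebraMap]
      simp only [hm, map_mul, map_prod]
    rw [heval]
    have hterm : ∀ i ∈ Finset.range (N + 1),
        a ^ i * ((Polynomial.aeval b) (r i) * ∏ j ∈ (Finset.range (N + 1)).erase i,
          (Polynomial.aeval b) (s j)) =
        (∏ j ∈ Finset.range (N + 1), (Polynomial.aeval b) (s j)) *
          ((p.coeff i : ℂ) * a ^ i) := by
      intro i hi
      rw [← hcrs i, ← Finset.prod_erase_mul _ _ hi]
      ring
    rw [Finset.sum_congr rfl hterm, ← Finset.mul_sum]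
    have hsum : ∑ i ∈ Finset.range (N + 1), ((p.coeff i : ℂ)) * a ^ i = 0 := by
      have h1 := Polynomial.aeval_eq_sum_range (S := ℂ) (x := a) (p := p)
      rw [hpa] at h1
      have h2 := h1.symm
      simpa [Algebra.smul_def, IntermediateField.algebraMap_apply] using h2
    rw [hsum, mul_zero]


-- placeholders for already-proved lemmas
theorem trans_el {K : Type*} [Field K] [Algebra K ℂ] {b x : ℂ} (hb : IsAlgebraic K b)
    (hx : IsAlgebraic ↥K⟮b⟯ x) : IsAlgebraic K x := by
  haveI h1 : Algebra.IsAlgebraic K K⟮b⟯ :=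
    IntermediateField.isAlgebraic_adjoin_simple hb.isIntegral
  haveI h2 : Algebra.IsIntegral K K⟮b⟯ := Algebra.isAlgebraic_iff_isIntegral.mp h1
  rw [isAlgebraic_iff_isIntegral] at hx ⊢
  exact isIntegral_trans x hx

/-- carrier of a ℚ-adjoin is inside a simple adjoin over a bigger base -/
theorem cf_le_adjK {s : Set ℂ} {K : IntermediateField ℚ ℂ} {c : ℂ}
    (h : s ⊆ insert c ↑K) :
    (IntermediateField.adjoin ℚ s : Set ℂ) ⊆ ((K⟮c⟯ : IntermediateField ↥K ℂ) : Set ℂ) := by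
  intro y hy
  have hT : (IntermediateField.adjoin ℚ s).toSubfield ≤
      (K⟮c⟯ : IntermediateField ↥K ℂ).toSubfield := by
    rw [IntermediateField.adjoin_toSubfield]
    apply Subfield.closure_le.2
    rintro z (⟨w, rfl⟩ | hz)
    · have : algebraMap ℚ ℂ w = ((w : ℚ) : ℂ) := eq_ratCast _ _
      rw [this]
      exact SubfieldClass.ratCast_mem _ w
    · rcases h hz with rfl | hzK
      · exact IntermediateField.subset_adjoin _ _ rfl
      · exact (K⟮c⟯ : IntermediateField ↥K ℂ).algebraMap_mem ⟨z, hzK⟩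
  exact hT hy

/-- carrier of a simple adjoin over a subfield base is inside any ℚ-interfield containing things -/
theorem adjK_le_cf {K T : IntermediateField ℚ ℂ} {c : ℂ} (hK : (K : Set ℂ) ⊆ ↑T) (hc : c ∈ T) :
    ((K⟮c⟯ : IntermediateField ↥K ℂ) : Set ℂ) ⊆ ↑T := by
  intro y hy
  have hT : (K⟮c⟯ : IntermediateField ↥K ℂ).toSubfield ≤ T.toSubfield := by
    rw [IntermediateField.adjoin_toSubfield]
    apply Subfield.closure_le.2
    rintro z (⟨w, rfl⟩ | hz)
    · exact hK w.2
    · rcases hz with rfl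
      exact hc
  exact hT hy

theorem lmain : ∀ (n : ℕ) (x : Fin n → ℂ) (s : Finset ℂ) (u : Set ℂ),
    (∀ i, Transcendental ↥(IntermediateField.adjoin ℚ (u ∪ x '' {j | j ≠ i})) (x i)) →
    (∀ i, IsAlgebraic ↥(IntermediateField.adjoin ℚ (u ∪ ↑s)) (x i)) → n ≤ s.card := by
  intro n
  induction n with
  | zero => intro x s u _ _; exact Nat.zero_le _
  | succ n IH =>
    intro x s u H Halg
    classical
    have htr0 : ∀ t : Set ℂ, t ⊆ u ∪ x '' {j | j ≠ 0} →
        Transcendental ↥(IntermediateField.adjoin ℚ t) (x 0) := by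
      intro t ht
      refine trans_mono ?_ (H 0)
      rw [range_algebraMap_eq, range_algebraMap_eq]
      exact SetLike.coe_subset_coe.2 (IntermediateField.adjoin.mono _ _ _ ht)
    set P : Finset ℂ → Prop :=
      fun t => IsAlgebraic ↥(IntermediateField.adjoin ℚ (u ∪ ↑t)) (x 0) with hP
    have hPs : P s := Halg 0
    have hcand : (s.powerset.filter fun t => P t).Nonempty :=
      ⟨s, Finset.mem_filter.2 ⟨Finset.mem_powerset.2 le_rfl, hPs⟩⟩
    obtain ⟨t₀, ht₀mem, ht₀min⟩ :=
      Finset.exists_min_image (s.powerset.filter fun t => P t) Finset.card hcand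
    have ht₀s : t₀ ⊆ s := Finset.mem_powerset.1 (Finset.mem_filter.1 ht₀mem).1
    have hPt₀ : P t₀ := (Finset.mem_filter.1 ht₀mem).2
    have ht₀ne : t₀.Nonempty := by
      rcases Finset.eq_empty_or_nonempty t₀ with h | h
      · exfalso
        refine htr0 (u ∪ ↑t₀) ?_ hPt₀
        rw [h]
        simp
      · exact h
    obtain ⟨b, hb⟩ := ht₀ne
    set K₀ := IntermediateField.adjoin ℚ (u ∪ ↑(t₀.erase b)) with hK₀
    have htrK₀ : Transcendental ↥K₀ (x 0) := by
      intro halg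
      have hPer : P (t₀.erase b) := halg
      have h1 : t₀.card ≤ (t₀.erase b).card :=
        ht₀min _ (Finset.mem_filter.2
          ⟨Finset.mem_powerset.2 ((Finset.erase_subset _ _).trans ht₀s), hPer⟩)
      have h2 := Finset.card_erase_of_mem hb
      have h3 : 0 < t₀.card := Finset.card_pos.2 ⟨b, hb⟩
      omega
    have hab : IsAlgebraic ↥(K₀⟮b⟯ : IntermediateField ↥K₀ ℂ) (x 0) := by
      refine alg_mono ?_ hPt₀
      rw [range_algebraMap_eq, range_algebraMap_eq]
      apply cf_le_adjK
      intro y hy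
      rcases hy with hyu | hyt
      · exact Set.mem_insert_of_mem _ (IntermediateField.subset_adjoin _ _ (Or.inl hyu))
      · by_cases hyb : y = b
        · exact hyb ▸ Set.mem_insert _ _
        · exact Set.mem_insert_of_mem _ (IntermediateField.subset_adjoin _ _
            (Or.inr (Finset.mem_coe.2 (Finset.mem_erase.2 ⟨hyb, hyt⟩))))
    have hex : IsAlgebraic ↥(K₀⟮x 0⟯ : IntermediateField ↥K₀ ℂ) b := exchange htrK₀ hab
    set u' : Set ℂ := insert (x 0) u with hu'
    set s' := s.erase b with hs'
    set Nf := IntermediateField.adjoin ℚ (u' ∪ ↑s') with hNf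
    have hK₀Nf : (K₀ : Set ℂ) ⊆ ↑Nf := by
      refine SetLike.coe_subset_coe.2 (IntermediateField.adjoin.mono _ _ _ ?_)
      apply Set.union_subset_union
      · exact Set.subset_insert _ _
      · exact Finset.coe_subset.2 (Finset.erase_subset_erase _ ht₀s)
    have hx0Nf : x 0 ∈ Nf := IntermediateField.subset_adjoin _ _ (Or.inl (Set.mem_insert _ _))
    have hbN : IsAlgebraic ↥Nf b := by
      refine alg_mono ?_ hex
      rw [range_algebraMap_eq, range_algebraMap_eq]
      exact adjK_le_cf hK₀Nf hx0Nf
    have halg' : ∀ i : Fin n, IsAlgebraic ↥Nf (x i.succ) := by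
      intro i
      have h1 : IsAlgebraic ↥(Nf⟮b⟯ : IntermediateField ↥Nf ℂ) (x i.succ) := by
        refine alg_mono ?_ (Halg i.succ)
        rw [range_algebraMap_eq, range_algebraMap_eq]
        apply cf_le_adjK
        intro y hy
        rcases hy with hyu | hys
        · exact Set.mem_insert_of_mem _
            (IntermediateField.subset_adjoin _ _ (Or.inl (Set.mem_insert_of_mem _ hyu)))
        · by_cases hyb : y = b
          · exact hyb ▸ Set.mem_insert _ _
          · exact Set.mem_insert_of_mem _ (IntermediateField.subset_adjoin _ _
              (Or.inr (Finset.mem_coe.2 (Finset.mem_erase.2 ⟨hyb, hys⟩))))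
      exact trans_el hbN h1
    have H' : ∀ i : Fin n, Transcendental
        ↥(IntermediateField.adjoin ℚ (u' ∪ (fun j : Fin n => x j.succ) '' {j | j ≠ i})) (x i.succ) := by
      intro i
      have hset : u' ∪ (fun j : Fin n => x j.succ) '' {j | j ≠ i} =
          u ∪ x '' {j | j ≠ i.succ} := by
        ext y
        simp only [hu', Set.mem_union, Set.mem_insert_iff, Set.mem_image, Set.mem_setOf_eq]
        constructor
        · rintro ((rfl | hyu) | ⟨j, hj, rfl⟩)
          · exact Or.inr ⟨0, (Fin.succ_ne_zero i).symm, rfl⟩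
          · exact Or.inl hyu
          · exact Or.inr ⟨j.succ, fun hc => hj (Fin.succ_injective _ hc), rfl⟩
        · rintro (hyu | ⟨j, hj, rfl⟩)
          · exact Or.inl (Or.inr hyu)
          · rcases Fin.eq_zero_or_eq_succ j with rfl | ⟨k, rfl⟩
            · exact Or.inl (Or.inl rfl)
            · exact Or.inr ⟨k, fun hc => hj (by rw [hc]), rfl⟩
      rw [hset]
      exact H i.succ
    have hn : n ≤ s'.card := IH (fun j => x j.succ) s' u' H' halg'
    have hbs : b ∈ s := ht₀s hb
    have hc1 : s'.card = s.card - 1 := Finset.card_erase_of_mem hbs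
    have hc2 : 0 < s.card := Finset.card_pos.2 ⟨b, hbs⟩
    omega

theorem hindep {n : ℕ} {x : Fin (n + 1) → ℂ} (hx : AlgebraicIndependent ℚ x) (i : Fin (n + 1)) :
    Transcendental ↥(IntermediateField.adjoin ℚ (x '' {j | j ≠ i})) (x i) := by
  have hrest : AlgebraicIndependent ℚ (x ∘ i.succAbove) :=
    hx.comp _ Fin.succAbove_right_injective
  have hopt : AlgebraicIndependent ℚ (fun o : Option (Fin n) => o.elim (x i) (x ∘ i.succAbove)) := by
    have h1 : AlgebraicIndependent ℚ (x ∘ (finSuccEquiv' i).symm) :=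
      hx.comp _ (Equiv.injective _)
    have h2 : (x ∘ (finSuccEquiv' i).symm) =
        fun o : Option (Fin n) => o.elim (x i) (x ∘ i.succAbove) := by
      funext o
      cases o with
      | none => simp [finSuccEquiv'_symm_none]
      | some j => simp [finSuccEquiv'_symm_some]
    rwa [h2] at h1
  have htr := (hrest.option_iff_transcendental (x i)).1 hopt
  intro halg
  apply htr
  have himg : x '' {j | j ≠ i} = Set.range (x ∘ i.succAbove) := by
    rw [Set.range_comp, Fin.range_succAbove]
    rfl
  rw [himg] at halg
  exact bridge _ halg

theorem cor {n m : ℕ} (x : Fin (n + 1) → ℂ) (y : Fin m → ℂ) (hmn : m < n + 1)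
    (hx : AlgebraicIndependent ℚ x)
    (halg : ∀ i, IsAlgebraic ↥(IntermediateField.adjoin ℚ (Set.range y)) (x i)) : False := by
  classical
  have H : ∀ i, Transcendental
      ↥(IntermediateField.adjoin ℚ ((∅ : Set ℂ) ∪ x '' {j | j ≠ i})) (x i) := by
    intro i
    rw [Set.empty_union]
    exact hindep hx i
  have Halg : ∀ i, IsAlgebraic
      ↥(IntermediateField.adjoin ℚ ((∅ : Set ℂ) ∪ ↑(Finset.image y Finset.univ))) (x i) := by
    intro i
    have : ((Finset.image y Finset.univ : Finset ℂ) : Set ℂ) = Set.range y := by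
      rw [Finset.coe_image, Finset.coe_univ, Set.image_univ]
    rw [Set.empty_union, this]
    exact halg i
  have hle := lmain (n + 1) x (Finset.image y Finset.univ) ∅ H Halg
  have : (Finset.image y Finset.univ).card ≤ m := by
    calc (Finset.image y Finset.univ).card ≤ Finset.univ.card := Finset.card_image_le
    _ = m := by simp
  omega

-- algebraicity helpers over an adjoined field
theorem qalg_mem {S : Set ℂ} {x : ℂ} (h : x ∈ S) :
    IsAlgebraic ↥(IntermediateField.adjoin ℚ S) x := by
  have := isAlgebraic_algebraMap (R := ↥(IntermediateField.adjoin ℚ S)) (A := ℂ)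
    ⟨x, IntermediateField.subset_adjoin _ _ h⟩
  simpa using this

theorem qalg_base {S : Set ℂ} {x : ℂ} (h : IsAlgebraic ℚ x) :
    IsAlgebraic ↥(IntermediateField.adjoin ℚ S) x :=
  h.tower_top ↥(IntermediateField.adjoin ℚ S)

theorem qalg_mul {F : Type*} [Field F] [Algebra F ℂ] {a b : ℂ}
    (ha : IsAlgebraic F a) (hb : IsAlgebraic F b) : IsAlgebraic F (a * b) := by
  rw [isAlgebraic_iff_isIntegral] at *
  exact ha.mul hb

theorem qalg_add {F : Type*} [Field F] [Algebra F ℂ] {a b : ℂ}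
    (ha : IsAlgebraic F a) (hb : IsAlgebraic F b) : IsAlgebraic F (a + b) := by
  rw [isAlgebraic_iff_isIntegral] at *
  exact ha.add hb

theorem qalg_inv {F : Type*} [Field F] [Algebra F ℂ] {a : ℂ}
    (ha : IsAlgebraic F a) : IsAlgebraic F a⁻¹ :=
  IsAlgebraic.inv_iff.2 ha

theorem qalg_neg {F : Type*} [Field F] [Algebra F ℂ] {a : ℂ}
    (ha : IsAlgebraic F a) : IsAlgebraic F (-a) := by
  rw [isAlgebraic_iff_isIntegral] at *
  exact ha.neg


theorem qalg_pow {F : Type*} [Field F] [Algebra F ℂ] {a : ℂ} (n : ℕ)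
    (ha : IsAlgebraic F a) : IsAlgebraic F (a ^ n) := by
  rw [isAlgebraic_iff_isIntegral] at *
  exact ha.pow n

theorem mainRat (z w mu : ℂ) (q : ℚ) (hq : z = (q : ℂ)) (hz0 : z ≠ 0)
    (hm : Complex.exp mu = w) (hwz : IsAlgebraic ℚ (Complex.exp (z * mu))) :
    IsAlgebraic ℚ w := by
  have hq0 : q ≠ 0 := fun h => hz0 (by rw [hq, h]; norm_num)
  have hnum : q.num ≠ 0 := Rat.num_ne_zero.2 hq0
  have hden : (q.den : ℚ) ≠ 0 := by exact_mod_cast q.den_ne_zero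
  have h0 : (q.num : ℚ) = q * (q.den : ℚ) := (div_eq_iff hden).1 (Rat.num_div_den q)
  have hdq : (q : ℂ) * ((q.den : ℂ)) = ((q.num : ℂ)) := by
    exact_mod_cast (congrArg (fun r : ℚ => (r : ℂ)) h0).symm
  have hkey : Complex.exp (z * mu) ^ (q.den : ℕ) = w ^ (q.num : ℤ) := by
    rw [← Complex.exp_nat_mul, ← hm, ← Complex.exp_int_mul]
    congr 1
    rw [hq]
    linear_combination mu * hdq
  have halg : IsAlgebraic ℚ (w ^ (q.num : ℤ)) := by
    rw [← hkey]
    exact qalg_pow _ hwz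
  have hw0 : w ≠ 0 := by rw [← hm]; exact Complex.exp_ne_zero mu
  rcases lt_trichotomy q.num 0 with hn | hn | hn
  · have hm' : w ^ (q.num : ℤ) = (w⁻¹) ^ (-q.num).toNat := by
      rw [inv_pow, ← zpow_natCast, Int.toNat_of_nonneg (show (0:ℤ) ≤ -q.num by omega), zpow_neg]
      simp
    rw [hm'] at halg
    have := IsAlgebraic.of_pow (n := (-q.num).toNat) (by omega) halg
    exact IsAlgebraic.inv_iff.1 (by simpa using this)
  · exact absurd hn hnum
  · have hm' : w ^ (q.num : ℤ) = w ^ q.num.toNat := by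
      rw [← zpow_natCast, Int.toNat_of_nonneg (by omega)]
    rw [hm'] at halg
    exact IsAlgebraic.of_pow (by omega) halg

theorem mainGS (hS : SchanuelConjecture) (z w lam : ℂ) (hlam : lam ≠ 0)
    (hl : Complex.exp lam = z) (hz_alg : IsAlgebraic ℚ z) (hw_alg : IsAlgebraic ℚ w)
    (hw_irr : ∀ q : ℚ, w ≠ (q : ℂ)) (hzw : IsAlgebraic ℚ (Complex.exp (w * lam))) : False := by
  have hirrw : ∀ a b : ℚ, (a : ℂ) + (b : ℂ) * w = 0 → a = 0 ∧ b = 0 := by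
    intro a b h
    by_cases hb : b = 0
    · refine ⟨?_, hb⟩
      rw [hb] at h
      push_cast at h
      exact_mod_cast by simpa using h
    · exfalso
      apply hw_irr (-(a / b))
      have hbne : (b : ℂ) ≠ 0 := by exact_mod_cast hb
      have hdiv : (a : ℂ) / (b : ℂ) = -w := by
        rw [div_eq_iff hbne]
        linear_combination h
      push_cast
      rw [hdiv, neg_neg]
  have hlin : LinearIndependent ℚ ![lam, w * lam] := by
    rw [Fintype.linearIndependent_iff]
    intro g hg
    have hg' : ((g 0 : ℂ) + (g 1 : ℂ) * w) * lam = 0 := by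
      have := hg
      rw [Fin.sum_univ_two] at this
      simp only [Matrix.cons_val_zero, Matrix.cons_val_one, Matrix.head_cons,
        Rat.smul_def] at this
      linear_combination this
    have h2 : (g 0 : ℂ) + (g 1 : ℂ) * w = 0 := by
      rcases mul_eq_zero.1 hg' with h | h
      · exact h
      · exact absurd h hlam
    have := hirrw _ _ h2
    intro i
    fin_cases i
    · exact this.1
    · exact this.2
  obtain ⟨g, hmem, hind⟩ := hS 2 ![lam, w * lam] hlin
  refine cor (n := 1) g ![lam] (by norm_num) hind ?_
  intro i
  have hlammem : lam ∈ Set.range ![lam] := ⟨0, rfl⟩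
  rcases hmem i with ⟨j, hj⟩ | ⟨j, hj⟩ <;> rw [← hj] <;> fin_cases j
  · exact qalg_mem hlammem
  · exact qalg_mul (qalg_base hw_alg) (qalg_mem hlammem)
  · show IsAlgebraic _ (Complex.exp lam)
    rw [hl]; exact qalg_base hz_alg
  · show IsAlgebraic _ (Complex.exp (w * lam))
    exact qalg_base hzw

theorem main2 (hS : SchanuelConjecture) (z w lam mu : ℂ) (hz0 : z ≠ 0)
    (hlam : lam ≠ 0) (hmu : mu ≠ 0)
    (hl : Complex.exp lam = z) (hm : Complex.exp mu = w)
    (hzw : IsAlgebraic ℚ (Complex.exp (w * lam)))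
    (hwz : IsAlgebraic ℚ (Complex.exp (z * mu)))
    (hw_alg : IsAlgebraic ℚ w) (hw_irr : ∀ q : ℚ, w ≠ (q : ℂ))
    (hz_tr : Transcendental ℚ z) : False := by
  have hirrw : ∀ a b : ℚ, (a : ℂ) + (b : ℂ) * w = 0 → a = 0 ∧ b = 0 := by
    intro a b h
    by_cases hb : b = 0
    · refine ⟨?_, hb⟩
      rw [hb] at h
      push_cast at h
      exact_mod_cast by simpa using h
    · exfalso
      apply hw_irr (-(a / b))
      have hbne : (b : ℂ) ≠ 0 := by exact_mod_cast hb
      have hdiv : (a : ℂ) / (b : ℂ) = -w := by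
        rw [div_eq_iff hbne]
        linear_combination h
      push_cast
      rw [hdiv, neg_neg]
  have zlin : ∀ c₀ c₁ : ℂ, IsAlgebraic ℚ c₀ → IsAlgebraic ℚ c₁ →
      c₀ + c₁ * z = 0 → c₁ = 0 ∧ c₀ = 0 := by
    intro c₀ c₁ h₀ h₁ h
    by_cases hc : c₁ = 0
    · refine ⟨hc, ?_⟩
      rw [hc] at h
      simpa using h
    · exfalso
      apply hz_tr
      have hz_eq : z = -c₀ / c₁ := by
        rw [eq_div_iff hc]
        linear_combination h
      rw [hz_eq, div_eq_mul_inv]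
      exact qalg_mul (qalg_neg h₀) (qalg_inv h₁)
  by_cases hLI : LinearIndependent ℚ ![lam, mu, w * lam, z * mu]
  · obtain ⟨g, hmem, hind⟩ := hS 4 _ hLI
    refine cor (n := 3) g ![lam, mu, z] (by norm_num) hind ?_
    intro i
    have m0 : lam ∈ Set.range ![lam, mu, z] := ⟨0, rfl⟩
    have m1 : mu ∈ Set.range ![lam, mu, z] := ⟨1, rfl⟩
    have m2 : z ∈ Set.range ![lam, mu, z] := ⟨2, rfl⟩
    rcases hmem i with ⟨j, hj⟩ | ⟨j, hj⟩ <;> rw [← hj] <;> fin_cases j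
    · exact qalg_mem m0
    · exact qalg_mem m1
    · exact qalg_mul (qalg_base hw_alg) (qalg_mem m0)
    · exact qalg_mul (qalg_mem m2) (qalg_mem m1)
    · show IsAlgebraic _ (Complex.exp lam)
      rw [hl]; exact qalg_mem m2
    · show IsAlgebraic _ (Complex.exp mu)
      rw [hm]; exact qalg_base hw_alg
    · show IsAlgebraic _ (Complex.exp (w * lam))
      exact qalg_base hzw
    · show IsAlgebraic _ (Complex.exp (z * mu))
      exact qalg_base hwz
  · rw [Fintype.not_linearIndependent_iff] at hLI
    obtain ⟨g, hrel, j, hgj⟩ := hLI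
    rw [Fin.sum_univ_four] at hrel
    simp only [Matrix.cons_val_zero, Matrix.cons_val_one, Matrix.head_cons,
      Matrix.cons_val_two, Matrix.cons_val_three, Matrix.tail_cons, Matrix.head_fin_const,
      Rat.smul_def] at hrel
    set a := g 0 with ha'
    set b := g 1 with hb'
    set c := g 2 with hc'
    set d := g 3 with hd'
    set A : ℂ := (a : ℂ) + (c : ℂ) * w with hA
    set B : ℂ := (b : ℂ) + (d : ℂ) * z with hB
    have hAalg : IsAlgebraic ℚ A :=
      qalg_add (isAlgebraic_rat ℚ a) (qalg_mul (isAlgebraic_rat ℚ c) hw_alg)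
    have hrel' : A * lam + B * mu = 0 := by
      rw [hA, hB]
      linear_combination hrel
    have hg0 : ¬(a = 0 ∧ b = 0 ∧ c = 0 ∧ d = 0) := by
      rintro ⟨h1, h2, h3, h4⟩
      fin_cases j
      · exact hgj h1
      · exact hgj h2
      · exact hgj h3
      · exact hgj h4
    have hAzero : A = 0 → a = 0 ∧ c = 0 := fun h => hirrw a c h
    have hBzero : B = 0 → b = 0 ∧ d = 0 := by
      intro h
      have h2 := zlin (b : ℂ) (d : ℂ) (isAlgebraic_rat ℚ b) (isAlgebraic_rat ℚ d) h
      exact ⟨by exact_mod_cast h2.2, by exact_mod_cast h2.1⟩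
    have hAne : A ≠ 0 := by
      intro h
      obtain ⟨ha0, hc0⟩ := hAzero h
      have hBmu : B * mu = 0 := by
        rw [h] at hrel'
        linear_combination hrel'
      have hB0 : B = 0 := by
        rcases mul_eq_zero.1 hBmu with h' | h'
        · exact h'
        · exact absurd h' hmu
      obtain ⟨hb0, hd0⟩ := hBzero hB0
      exact hg0 ⟨ha0, hb0, hc0, hd0⟩
    have hBne : B ≠ 0 := by
      intro h
      obtain ⟨hb0, hd0⟩ := hBzero h
      have hAlam : A * lam = 0 := by
        rw [h] at hrel'
        linear_combination hrel'
      have hA0 : A = 0 := by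
        rcases mul_eq_zero.1 hAlam with h' | h'
        · exact h'
        · exact absurd h' hlam
      obtain ⟨ha0, hc0⟩ := hAzero hA0
      exact hg0 ⟨ha0, hb0, hc0, hd0⟩
    have hmu_eq : mu = -(A * lam) / B := by
      rw [eq_div_iff hBne]
      linear_combination hrel'
    have hmu'' : B * mu + A * lam = 0 := by
      rw [hmu_eq]
      field_simp
      ring
    by_cases hb0 : b = 0
    · -- case b = 0 : use ![lam, w*lam, mu] over ![lam, z]
      have hd0 : d ≠ 0 := by
        intro h
        exact hBne (by rw [hB, hb0, h]; push_cast; ring)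
      have hdC : (d : ℂ) ≠ 0 := by exact_mod_cast hd0
      have hlin3 : LinearIndependent ℚ ![lam, w * lam, mu] := by
        rw [Fintype.linearIndependent_iff]
        intro g' hg'
        rw [Fin.sum_univ_three] at hg'
        simp only [Matrix.cons_val_zero, Matrix.cons_val_one, Matrix.head_cons,
          Matrix.cons_val_two, Matrix.tail_cons, Rat.smul_def] at hg'
        have h3 : ((g' 0 : ℂ) + (g' 1 : ℂ) * w) * lam + (g' 2 : ℂ) * mu = 0 := by
          linear_combination hg'
        have h4 : (((g' 0 : ℂ) + (g' 1 : ℂ) * w) * B - (g' 2 : ℂ) * A) * lam = 0 := by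
          linear_combination B * h3 - (g' 2 : ℂ) * hmu''
        have h5 : ((g' 0 : ℂ) + (g' 1 : ℂ) * w) * B - (g' 2 : ℂ) * A = 0 := by
          rcases mul_eq_zero.1 h4 with h' | h'
          · exact h'
          · exact absurd h' hlam
        have h6 : -((g' 2 : ℂ) * A) + (((g' 0 : ℂ) + (g' 1 : ℂ) * w) * (d : ℂ)) * z = 0 := by
          rw [hB, hb0] at h5
          push_cast at h5 ⊢
          linear_combination h5
        have h7 := zlin _ _
          (qalg_neg (qalg_mul (isAlgebraic_rat ℚ (g' 2)) hAalg))
          (qalg_mul (qalg_add (isAlgebraic_rat ℚ (g' 0))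
            (qalg_mul (isAlgebraic_rat ℚ (g' 1)) hw_alg)) (isAlgebraic_rat ℚ d)) h6
        have hpq : (g' 0 : ℂ) + (g' 1 : ℂ) * w = 0 := by
          rcases mul_eq_zero.1 h7.1 with h' | h'
          · exact h'
          · exact absurd h' hdC
        obtain ⟨hp, hq⟩ := hirrw _ _ hpq
        have hr : (g' 2 : ℂ) = 0 := by
          have h8 : (g' 2 : ℂ) * A = 0 := by
            have := h7.2
            linear_combination -this
          rcases mul_eq_zero.1 h8 with h' | h'
          · exact h'
          · exact absurd h' hAne
        intro i
        fin_cases i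
        · exact hp
        · exact hq
        · exact_mod_cast hr
      obtain ⟨g2, hmem, hind⟩ := hS 3 _ hlin3
      refine cor (n := 2) g2 ![lam, z] (by norm_num) hind ?_
      intro i
      have m0 : lam ∈ Set.range ![lam, z] := ⟨0, rfl⟩
      have m1 : z ∈ Set.range ![lam, z] := ⟨1, rfl⟩
      have hBalg : IsAlgebraic ↥(IntermediateField.adjoin ℚ (Set.range ![lam, z])) B := by
        rw [hB]
        exact qalg_add (qalg_base (isAlgebraic_rat ℚ b))
          (qalg_mul (qalg_base (isAlgebraic_rat ℚ d)) (qalg_mem m1))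
      have hmualg : IsAlgebraic ↥(IntermediateField.adjoin ℚ (Set.range ![lam, z])) mu := by
        rw [hmu_eq, div_eq_mul_inv]
        exact qalg_mul (qalg_neg (qalg_mul (qalg_base hAalg) (qalg_mem m0))) (qalg_inv hBalg)
      rcases hmem i with ⟨j', hj⟩ | ⟨j', hj⟩ <;> rw [← hj] <;> fin_cases j'
      · exact qalg_mem m0
      · exact qalg_mul (qalg_base hw_alg) (qalg_mem m0)
      · exact hmualg
      · show IsAlgebraic _ (Complex.exp lam)
        rw [hl]; exact qalg_mem m1
      · show IsAlgebraic _ (Complex.exp (w * lam))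
        exact qalg_base hzw
      · show IsAlgebraic _ (Complex.exp mu)
        rw [hm]; exact qalg_base hw_alg
    · -- case b ≠ 0 : use ![lam, w*lam, z*mu] over ![lam, z]
      have hbC : (b : ℂ) ≠ 0 := by exact_mod_cast hb0
      have hlin3 : LinearIndependent ℚ ![lam, w * lam, z * mu] := by
        rw [Fintype.linearIndependent_iff]
        intro g' hg'
        rw [Fin.sum_univ_three] at hg'
        simp only [Matrix.cons_val_zero, Matrix.cons_val_one, Matrix.head_cons,
          Matrix.cons_val_two, Matrix.tail_cons, Rat.smul_def] at hg'
        have h3 : ((g' 0 : ℂ) + (g' 1 : ℂ) * w) * lam + (g' 2 : ℂ) * (z * mu) = 0 := by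
          linear_combination hg'
        have h4 : (((g' 0 : ℂ) + (g' 1 : ℂ) * w) * B - (g' 2 : ℂ) * A * z) * lam = 0 := by
          linear_combination B * h3 - (g' 2 : ℂ) * z * hmu''
        have h5 : ((g' 0 : ℂ) + (g' 1 : ℂ) * w) * B - (g' 2 : ℂ) * A * z = 0 := by
          rcases mul_eq_zero.1 h4 with h' | h'
          · exact h'
          · exact absurd h' hlam
        have h6 : ((g' 0 : ℂ) + (g' 1 : ℂ) * w) * (b : ℂ) +
            (((g' 0 : ℂ) + (g' 1 : ℂ) * w) * (d : ℂ) - (g' 2 : ℂ) * A) * z = 0 := by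
          rw [hB] at h5
          linear_combination h5
        have h7 := zlin _ _
          (qalg_mul (qalg_add (isAlgebraic_rat ℚ (g' 0))
            (qalg_mul (isAlgebraic_rat ℚ (g' 1)) hw_alg)) (isAlgebraic_rat ℚ b))
          (qalg_add (qalg_mul (qalg_add (isAlgebraic_rat ℚ (g' 0))
            (qalg_mul (isAlgebraic_rat ℚ (g' 1)) hw_alg)) (isAlgebraic_rat ℚ d))
            (qalg_neg (qalg_mul (isAlgebraic_rat ℚ (g' 2)) hAalg)))
          (by linear_combination h6)
        have hpq : (g' 0 : ℂ) + (g' 1 : ℂ) * w = 0 := by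
          rcases mul_eq_zero.1 h7.2 with h' | h'
          · exact h'
          · exact absurd h' hbC
        obtain ⟨hp, hq⟩ := hirrw _ _ hpq
        have hr : (g' 2 : ℂ) = 0 := by
          have h8 : (g' 2 : ℂ) * A = 0 := by
            linear_combination -h7.1 + (d : ℂ) * hpq
          rcases mul_eq_zero.1 h8 with h' | h'
          · exact h'
          · exact absurd h' hAne
        intro i
        fin_cases i
        · exact hp
        · exact hq
        · exact_mod_cast hr
      obtain ⟨g2, hmem, hind⟩ := hS 3 _ hlin3
      refine cor (n := 2) g2 ![lam, z] (by norm_num) hind ?_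
      intro i
      have m0 : lam ∈ Set.range ![lam, z] := ⟨0, rfl⟩
      have m1 : z ∈ Set.range ![lam, z] := ⟨1, rfl⟩
      have hBalg : IsAlgebraic ↥(IntermediateField.adjoin ℚ (Set.range ![lam, z])) B := by
        rw [hB]
        exact qalg_add (qalg_base (isAlgebraic_rat ℚ b))
          (qalg_mul (qalg_base (isAlgebraic_rat ℚ d)) (qalg_mem m1))
      have hzmualg : IsAlgebraic ↥(IntermediateField.adjoin ℚ (Set.range ![lam, z])) (z * mu) := by
        have hzmu_eq : z * mu = -(A * lam * z) / B := by
          rw [eq_div_iff hBne]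
          linear_combination z * hmu''
        rw [hzmu_eq, div_eq_mul_inv]
        exact qalg_mul (qalg_neg (qalg_mul (qalg_mul (qalg_base hAalg) (qalg_mem m0))
          (qalg_mem m1))) (qalg_inv hBalg)
      rcases hmem i with ⟨j', hj⟩ | ⟨j', hj⟩ <;> rw [← hj] <;> fin_cases j'
      · exact qalg_mem m0
      · exact qalg_mul (qalg_base hw_alg) (qalg_mem m0)
      · exact hzmualg
      · show IsAlgebraic _ (Complex.exp lam)
        rw [hl]; exact qalg_mem m1
      · show IsAlgebraic _ (Complex.exp (w * lam))
        exact qalg_base hzw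
      · show IsAlgebraic _ (Complex.exp (z * mu))
        exact qalg_base hwz

end

/-- Main theorem: assuming Schanuel's conjecture, if `z, w ∉ {0,1}` and
`z^w = exp (w·λ)` and `w^z = exp (z·μ)` are algebraic (where `exp λ = z`,
`exp μ = w`), then `z` and `w` are both rational or both transcendental. -/
theorem both_rational_or_both_transcendental (hS : SchanuelConjecture)
    (z w lam mu : ℂ)
    (hz0 : z ≠ 0) (hz1 : z ≠ 1) (hw0 : w ≠ 0) (hw1 : w ≠ 1)
    (hl : Complex.exp lam = z) (hm : Complex.exp mu = w)
    (hzw : IsAlgebraic ℚ (Complex.exp (w * lam)))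
    (hwz : IsAlgebraic ℚ (Complex.exp (z * mu))) :
    ((∃ q : ℚ, z = (q : ℂ)) ∧ (∃ q : ℚ, w = (q : ℂ))) ∨
      (Transcendental ℚ z ∧ Transcendental ℚ w) := by
  have hlam : lam ≠ 0 := by
    intro h
    exact hz1 (by rw [← hl, h, Complex.exp_zero])
  have hmu : mu ≠ 0 := by
    intro h
    exact hw1 (by rw [← hm, h, Complex.exp_zero])
  by_cases hza : IsAlgebraic ℚ z <;> by_cases hwa : IsAlgebraic ℚ w
  · -- both algebraic : both rational
    left
    constructor
    · by_contra hzq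
      push_neg at hzq
      exact mainGS hS w z mu hmu hm hwa hza hzq hwz
    · by_contra hwq
      push_neg at hwq
      exact mainGS hS z w lam hlam hl hza hwa hwq hzw
  · -- z algebraic, w transcendental : contradiction
    exfalso
    by_cases hzq : ∃ q : ℚ, z = (q : ℂ)
    · obtain ⟨q, hq⟩ := hzq
      exact hwa (mainRat z w mu q hq hz0 hm hwz)
    · push_neg at hzq
      exact main2 hS w z mu lam hw0 hmu hlam hm hl hwz hzw hza hzq hwa
  · -- z transcendental, w algebraic : contradiction
    exfalso
    by_cases hwq : ∃ q : ℚ, w = (q : ℂ)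
    · obtain ⟨q, hq⟩ := hwq
      exact hza (mainRat w z lam q hq hw0 hl hzw)
    · push_neg at hwq
      exact main2 hS z w lam mu hz0 hlam hmu hl hm hzw hwz hwa hwq hza
  · right
    exact ⟨hza, hwa⟩
end
end

section
/- Assume Schanuel's conjecture. If r > e^e is a natural number with r ≠ 16 (or more generally r satisfies the hypotheses of Proposition 1.4), and 0 < s < t are real numbers with s^t = t^s = r, then both s and t are transcendental. -/
open Real

private lemma not_ai_aux {n : ℕ} {w : Fin n → ℂ} {a : ℂ} (ha : IsAlgebraic ℚ a)
    (M N : MvPolynomial (Fin n) ℚ) (ψ : Fin n → Polynomial ℚ)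
    (hM : MvPolynomial.aeval w M = a * MvPolynomial.aeval w N)
    (hψM : MvPolynomial.aeval ψ M = Polynomial.X)
    (hψN : MvPolynomial.aeval ψ N = 1) :
    ¬ AlgebraicIndependent ℚ w := by
  intro hai
  have hint := ha.isIntegral
  set P := minpoly ℚ a with hPdef
  have hPne : P ≠ 0 := minpoly.ne_zero hint
  set d := P.natDegree with hddef
  set F : MvPolynomial (Fin n) ℚ :=
    ∑ i ∈ Finset.range (d + 1), MvPolynomial.C (P.coeff i) * M ^ i * N ^ (d - i) with hF
  have hzero : MvPolynomial.aeval w F = 0 := by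
    rw [hF, map_sum]
    have heq : ∀ i ∈ Finset.range (d + 1),
        MvPolynomial.aeval w (MvPolynomial.C (P.coeff i) * M ^ i * N ^ (d - i))
          = (P.coeff i • a ^ i) * (MvPolynomial.aeval w N) ^ d := by
      intro i hi
      rw [Finset.mem_range, Nat.lt_succ_iff] at hi
      rw [map_mul, map_mul, map_pow, map_pow, hM, MvPolynomial.aeval_C, mul_pow,
        Algebra.smul_def]
      conv_rhs => rw [← Nat.add_sub_cancel' hi, pow_add]
      ring
    rw [Finset.sum_congr rfl heq, ← Finset.sum_mul]
    have : ∑ i ∈ Finset.range (d + 1), P.coeff i • a ^ i = 0 := by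
      rw [← Polynomial.aeval_eq_sum_range, minpoly.aeval]
    rw [this, zero_mul]
  have hFne : F ≠ 0 := by
    intro h0
    have := congrArg (MvPolynomial.aeval ψ) h0
    rw [hF] at this
    simp only [map_sum, map_mul, map_pow, hψM, hψN, one_pow, mul_one,
      MvPolynomial.aeval_C, map_zero] at this
    have hP : ∑ i ∈ Finset.range (d + 1),
        (algebraMap ℚ (Polynomial ℚ)) (P.coeff i) * Polynomial.X ^ i = P := by
      conv_rhs => rw [Polynomial.as_sum_range' P (d+1) (Nat.lt_succ_self d)]
      refine Finset.sum_congr rfl fun i _ => ?_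
      rw [Polynomial.algebraMap_eq, Polynomial.C_mul_X_pow_eq_monomial]
    exact hPne (by rw [← hP, this])
  exact hFne (algebraicIndependent_iff.mp hai F hzero)



private lemma not_ai_pair {a u v : ℂ} (ha : IsAlgebraic ℚ a) (h : u = a * v) :
    ¬ AlgebraicIndependent ℚ ![u, v] :=
  not_ai_aux ha (MvPolynomial.X 0) (MvPolynomial.X 1) ![Polynomial.X, 1]
    (by simp [h]) (by simp) (by simp)

private lemma not_ai_triple {a x y z : ℂ} (ha : IsAlgebraic ℚ a) (h : x * y = a * z) :
    ¬ AlgebraicIndependent ℚ ![x, y, z] :=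
  not_ai_aux ha (MvPolynomial.X 0 * MvPolynomial.X 1) (MvPolynomial.X 2) ![Polynomial.X, 1, 1]
    (by simp [h]) (by simp) (by simp)

private lemma ai_sub2 {g : Fin 3 → ℂ} (hg : AlgebraicIndependent ℚ g) (i j : Fin 3)
    (hij : i ≠ j) : AlgebraicIndependent ℚ ![g i, g j] := by
  have h := hg.comp ![i, j] (by
    intro a b hab
    fin_cases a <;> fin_cases b <;> simp_all)
  have he : ![g i, g j] = g ∘ ![i, j] := by funext x; fin_cases x <;> simp
  rwa [he]

private lemma ai_sub3 {g : Fin 3 → ℂ} (hg : AlgebraicIndependent ℚ g) (i j k : Fin 3)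
    (hij : i ≠ j) (hik : i ≠ k) (hjk : j ≠ k) :
    AlgebraicIndependent ℚ ![g i, g j, g k] := by
  have h := hg.comp ![i, j, k] (by
    intro a b hab
    fin_cases a <;> fin_cases b <;> simp_all)
  have he : ![g i, g j, g k] = g ∘ ![i, j, k] := by funext x; fin_cases x <;> simp
  rwa [he]

private lemma ai_id2 {g : Fin 2 → ℂ} (hg : AlgebraicIndependent ℚ g) :
    AlgebraicIndependent ℚ ![g 0, g 1] := by
  have he : ![g 0, g 1] = g := by funext x; fin_cases x <;> rfl
  rwa [he]

private lemma ai_swap2 {g : Fin 2 → ℂ} (hg : AlgebraicIndependent ℚ g) :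
    AlgebraicIndependent ℚ ![g 1, g 0] := by
  have h := hg.comp ![1, 0] (by intro a b hab; fin_cases a <;> fin_cases b <;> simp_all)
  have he : ![g 1, g 0] = g ∘ ![1, 0] := by funext x; fin_cases x <;> simp
  rwa [he]

private lemma no_two {A B : ℂ} (hAB : ¬ AlgebraicIndependent ℚ ![A, B])
    {g : Fin 2 → ℂ} (hmem : ∀ i, g i = A ∨ g i = B) (hg : AlgebraicIndependent ℚ g) :
    False := by
  have hinj := hg.injective
  rcases hmem 0 with h0|h0 <;> rcases hmem 1 with h1|h1
  · exact absurd (hinj (h0.trans h1.symm)) (by decide)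
  · exact hAB (by rw [← h0, ← h1]; exact ai_id2 hg)
  · exact hAB (by rw [← h1, ← h0]; exact ai_swap2 hg)
  · exact absurd (hinj (h0.trans h1.symm)) (by decide)

private lemma no_three {A B C D : ℂ}
    (hBC : ¬ AlgebraicIndependent ℚ ![B, C])
    (hABD : ¬ AlgebraicIndependent ℚ ![D, A, B])
    (hACD : ¬ AlgebraicIndependent ℚ ![D, A, C])
    {g : Fin 3 → ℂ} (hmem : ∀ i, g i = A ∨ g i = B ∨ g i = C ∨ g i = D)
    (hg : AlgebraicIndependent ℚ g) : False := by
  have hinj := hg.injective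
  rcases hmem 0 with h0|h0|h0|h0 <;> rcases hmem 1 with h1|h1|h1|h1 <;>
    rcases hmem 2 with h2|h2|h2|h2 <;>
    first
    | exact absurd (hinj (h0.trans h1.symm)) (by decide)
    | exact absurd (hinj (h0.trans h2.symm)) (by decide)
    | exact absurd (hinj (h1.trans h2.symm)) (by decide)
    | exact hBC (by rw [← h0, ← h1]; exact ai_sub2 hg 0 1 (by decide))
    | exact hBC (by rw [← h0, ← h2]; exact ai_sub2 hg 0 2 (by decide))
    | exact hBC (by rw [← h1, ← h0]; exact ai_sub2 hg 1 0 (by decide))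
    | exact hBC (by rw [← h1, ← h2]; exact ai_sub2 hg 1 2 (by decide))
    | exact hBC (by rw [← h2, ← h0]; exact ai_sub2 hg 2 0 (by decide))
    | exact hBC (by rw [← h2, ← h1]; exact ai_sub2 hg 2 1 (by decide))
    | exact hABD (by rw [← h0, ← h1, ← h2]; exact ai_sub3 hg 0 1 2 (by decide) (by decide) (by decide))
    | exact hABD (by rw [← h0, ← h2, ← h1]; exact ai_sub3 hg 0 2 1 (by decide) (by decide) (by decide))
    | exact hABD (by rw [← h1, ← h0, ← h2]; exact ai_sub3 hg 1 0 2 (by decide) (by decide) (by decide))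
    | exact hABD (by rw [← h1, ← h2, ← h0]; exact ai_sub3 hg 1 2 0 (by decide) (by decide) (by decide))
    | exact hABD (by rw [← h2, ← h0, ← h1]; exact ai_sub3 hg 2 0 1 (by decide) (by decide) (by decide))
    | exact hABD (by rw [← h2, ← h1, ← h0]; exact ai_sub3 hg 2 1 0 (by decide) (by decide) (by decide))
    | exact hACD (by rw [← h0, ← h1, ← h2]; exact ai_sub3 hg 0 1 2 (by decide) (by decide) (by decide))
    | exact hACD (by rw [← h0, ← h2, ← h1]; exact ai_sub3 hg 0 2 1 (by decide) (by decide) (by decide))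
    | exact hACD (by rw [← h1, ← h0, ← h2]; exact ai_sub3 hg 1 0 2 (by decide) (by decide) (by decide))
    | exact hACD (by rw [← h1, ← h2, ← h0]; exact ai_sub3 hg 1 2 0 (by decide) (by decide) (by decide))
    | exact hACD (by rw [← h2, ← h0, ← h1]; exact ai_sub3 hg 2 0 1 (by decide) (by decide) (by decide))
    | exact hACD (by rw [← h2, ← h1, ← h0]; exact ai_sub3 hg 2 1 0 (by decide) (by decide) (by decide))


private lemma pow_aux (m n : ℕ) (hm : 3 ≤ m) (hmn : m ≤ n) : (n + 1) ^ m < m * n ^ m := by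
  have hn0 : (0:ℝ) < (n:ℝ) := by
    have : 3 ≤ n := hm.trans hmn
    exact_mod_cast Nat.lt_of_lt_of_le (by norm_num) this
  have h1 : ((n:ℝ) + 1) < (n:ℝ) * Real.exp (1 / n) := by
    have := Real.add_one_lt_exp (x := 1 / (n:ℝ)) (by positivity)
    calc (n:ℝ) + 1 = (n:ℝ) * (1 / n + 1) := by field_simp; ring
    _ < (n:ℝ) * Real.exp (1 / n) := by
        exact (mul_lt_mul_iff_right₀ hn0).mpr this
  have h2 : ((n:ℝ) + 1) ^ m < ((n:ℝ) * Real.exp (1 / n)) ^ m := by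
    apply pow_lt_pow_left₀ h1 (by positivity)
    omega
  have h3 : ((n:ℝ) * Real.exp (1 / n)) ^ m = (n:ℝ) ^ m * Real.exp (m * (1 / n)) := by
    rw [mul_pow, ← Real.exp_nat_mul]
  have h4 : Real.exp ((m:ℝ) * (1 / n)) ≤ Real.exp 1 := by
    apply Real.exp_le_exp.mpr
    rw [mul_one_div]
    exact div_le_one_of_le₀ (by exact_mod_cast hmn) hn0.le
  have h5 : Real.exp 1 < 3 := Real.exp_one_lt_d9.trans (by norm_num)
  have key : ((n:ℝ) + 1) ^ m < (m:ℝ) * (n:ℝ) ^ m := by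
    calc ((n:ℝ) + 1) ^ m < (n:ℝ) ^ m * Real.exp (m * (1 / n)) := by rw [← h3]; exact h2
    _ ≤ (n:ℝ) ^ m * Real.exp 1 := by
        exact mul_le_mul_of_nonneg_left h4 (by positivity)
    _ < (n:ℝ) ^ m * 3 := by
        exact (mul_lt_mul_iff_right₀ (by positivity)).mpr h5
    _ ≤ (m:ℝ) * (n:ℝ) ^ m := by
        rw [mul_comm]
        apply mul_le_mul_of_nonneg_right _ (by positivity)
        exact_mod_cast hm
  have : (((n + 1) ^ m : ℕ) : ℝ) < ((m * n ^ m : ℕ) : ℝ) := by push_cast; exact key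
  exact_mod_cast this

private lemma eq_sixteen {m n : ℕ} (hm : 2 ≤ m) (hmn : m < n) (h : m ^ n = n ^ m) :
    m ^ n = 16 := by
  rcases eq_or_lt_of_le hm with h2 | h3
  · -- m = 2
    subst h2
    -- h : 2 ^ n = n ^ 2, n ≥ 3
    have hn3 : 3 ≤ n := hmn
    by_cases hn : n = 3
    · subst hn; simp at h
    by_cases hn4 : n = 4
    · subst hn4; rfl
    · exfalso
      have hn5 : 5 ≤ n := by omega
      have key : ∀ k, 5 ≤ k → k ^ 2 < 2 ^ k := by
        intro k hk
        induction k, hk using Nat.le_induction with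
        | base => norm_num
        | succ k hk ih =>
            have : (k + 1) ^ 2 ≤ 2 * k ^ 2 := by nlinarith
            calc (k + 1) ^ 2 ≤ 2 * k ^ 2 := this
            _ < 2 * 2 ^ k := by omega
            _ = 2 ^ (k + 1) := by ring
      have := key n hn5
      omega
  · -- 3 ≤ m : contradiction
    have key : ∀ k, m + 1 ≤ k → k ^ m < m ^ k := by
      intro k hk
      induction k, hk using Nat.le_induction with
      | base =>
          have := pow_aux m m h3 le_rfl
          calc (m + 1) ^ m < m * m ^ m := this
          _ = m ^ (m + 1) := by ring
      | succ k hk ih =>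
          have h1 := pow_aux m k h3 (by omega)
          calc (k + 1) ^ m < m * k ^ m := h1
          _ < m * m ^ k := by
              have hmpos : 0 < m := by omega
              exact Nat.mul_lt_mul_of_pos_left ih hmpos
          _ = m ^ (k + 1) := by ring
    have := key n (by omega)
    omega


private lemma algC {x : ℝ} (h : IsAlgebraic ℚ x) : IsAlgebraic ℚ (x : ℂ) := by
  have : (x : ℂ) = algebraMap ℝ ℂ x := rfl
  rw [this, isAlgebraic_algebraMap_iff (algebraMap ℝ ℂ).injective]
  exact h

private lemma algR_of_C {x : ℝ} (h : IsAlgebraic ℚ (x : ℂ)) : IsAlgebraic ℚ x := by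
  have hx : (x : ℂ) = algebraMap ℝ ℂ x := rfl
  rw [hx, isAlgebraic_algebraMap_iff (algebraMap ℝ ℂ).injective] at h
  exact h

private lemma algQ (q : ℚ) : IsAlgebraic ℚ ((q : ℝ)) := by
  have : (q : ℝ) = algebraMap ℚ ℝ q := by norm_num
  rw [this]
  exact isAlgebraic_algebraMap q

private lemma algNatC (k : ℕ) : IsAlgebraic ℚ ((k : ℂ)) := by
  have : ((k : ℂ)) = algebraMap ℚ ℂ (k : ℚ) := by push_cast; rfl
  rw [this]
  exact isAlgebraic_algebraMap _

private lemma IsAlg.mul' {x y : ℝ} (hx : IsAlgebraic ℚ x) (hy : IsAlgebraic ℚ y) :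
    IsAlgebraic ℚ (x * y) :=
  isAlgebraic_iff_isIntegral.mpr (hx.isIntegral.mul hy.isIntegral)

private lemma IsAlg.add' {x y : ℝ} (hx : IsAlgebraic ℚ x) (hy : IsAlgebraic ℚ y) :
    IsAlgebraic ℚ (x + y) :=
  isAlgebraic_iff_isIntegral.mpr (hx.isIntegral.add hy.isIntegral)

private lemma IsAlg.neg' {x : ℝ} (hx : IsAlgebraic ℚ x) : IsAlgebraic ℚ (-x) :=
  isAlgebraic_iff_isIntegral.mpr hx.isIntegral.neg

private lemma IsAlg.div' {x y : ℝ} (hx : IsAlgebraic ℚ x) (hy : IsAlgebraic ℚ y) :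
    IsAlgebraic ℚ (x / y) := by
  rw [div_eq_mul_inv]
  exact IsAlg.mul' hx hy.inv

private lemma rpow_rat_eq {x : ℝ} (hx : 0 < x) {q : ℚ} (hq : 0 < q) {k : ℕ}
    (h : x ^ (q : ℝ) = k) : x ^ q.num.toNat = (k : ℝ) ^ q.den := by
  have hnum : (0:ℤ) < q.num := Rat.num_pos.mpr hq
  have hA : ((q.num.toNat : ℕ) : ℝ) = ((q.num : ℤ) : ℝ) := by
    exact_mod_cast Int.toNat_of_nonneg hnum.le
  have hqd : (q : ℝ) * (q.den : ℝ) = ((q.num : ℤ) : ℝ) := by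
    have h0 : ((q.num : ℚ) / (q.den : ℚ)) = q := Rat.num_div_den q
    have hd : ((q.den : ℚ)) ≠ 0 := by
      exact_mod_cast q.den_nz
    rw [div_eq_iff hd] at h0
    exact_mod_cast (congrArg (Rat.cast : ℚ → ℝ) h0).symm
  calc x ^ q.num.toNat = x ^ ((q.num.toNat : ℕ) : ℝ) := (Real.rpow_natCast x _).symm
  _ = x ^ ((q : ℝ) * (q.den : ℝ)) := by rw [hA, ← hqd]
  _ = (x ^ (q:ℝ)) ^ ((q.den : ℕ) : ℝ) := by rw [Real.rpow_mul hx.le]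
  _ = ((k:ℝ)) ^ ((q.den : ℕ) : ℝ) := by rw [h]
  _ = (k : ℝ) ^ q.den := Real.rpow_natCast _ _

private lemma alg_of_rpow_rat {x : ℝ} (hx : 0 < x) {q : ℚ} (hq : 0 < q) {k : ℕ}
    (h : x ^ (q : ℝ) = k) : IsAlgebraic ℚ x := by
  have key := rpow_rat_eq hx hq h
  have hA : 0 < q.num.toNat := by
    have := Rat.num_pos.mpr hq
    omega
  refine ⟨Polynomial.X ^ q.num.toNat - Polynomial.C ((k : ℚ) ^ q.den),
    Polynomial.X_pow_sub_C_ne_zero hA _, ?_⟩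
  rw [map_sub, Polynomial.aeval_X_pow, Polynomial.aeval_C]
  rw [key]
  push_cast
  ring

private lemma nat_of_rpow_rat {q1 q2 : ℚ} (hq1 : 1 < q1) (hq2 : 0 < q2) {k : ℕ}
    (h : (q1 : ℝ) ^ ((q2 : ℝ)) = k) : ∃ m : ℕ, q1 = m ∧ 2 ≤ m := by
  have hq1p : (0:ℝ) < (q1 : ℝ) := by exact_mod_cast hq1.trans' one_pos
  have key := rpow_rat_eq hq1p hq2 h
  have hrat : q1 ^ q2.num.toNat = (k : ℚ) ^ q2.den := by
    have : ((q1 ^ q2.num.toNat : ℚ) : ℝ) = (((k:ℚ) ^ q2.den : ℚ) : ℝ) := by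
      push_cast
      exact key
    exact_mod_cast this
  have hden : q1.den ^ q2.num.toNat = 1 := by
    have := congrArg Rat.den hrat
    rw [Rat.den_pow, Rat.den_pow] at this
    simpa using this
  have hd1 : q1.den = 1 := by
    have hA : 0 < q2.num.toNat := by have := Rat.num_pos.mpr hq2; omega
    exact (pow_eq_one_iff.mp hden).resolve_right (Nat.pos_iff_ne_zero.mp hA)
  have hnum : (0:ℤ) < q1.num := Rat.num_pos.mpr (hq1.trans' one_pos)
  refine ⟨q1.num.toNat, ?_, ?_⟩
  · have := Rat.num_div_den q1
    rw [hd1] at this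
    push_cast at this
    rw [div_one] at this
    rw [← this]
    exact_mod_cast (congrArg (Int.cast : ℤ → ℚ) (Int.toNat_of_nonneg hnum.le)).symm
  · by_contra hlt
    push_neg at hlt
    interval_cases h' : q1.num.toNat
    · omega
    · -- q1.num.toNat = 1 → q1 = 1 contradiction with 1 < q1
      have : q1.num = 1 := by omega
      have : q1 = 1 := by
        rw [← Rat.num_div_den q1, hd1, this]; norm_num
      exact absurd (this ▸ hq1) (lt_irrefl 1)

private lemma real_lin3 {c : Fin 3 → ℚ} {x y z : ℝ}
    (h : c 0 • ((x:ℂ)) + c 1 • ((y:ℂ)) + c 2 • ((z:ℂ)) = 0) :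
    (c 0 : ℝ) * x + (c 1 : ℝ) * y + (c 2 : ℝ) * z = 0 := by
  rw [Rat.smul_def, Rat.smul_def, Rat.smul_def] at h
  have h' : (((c 0:ℝ) * x + (c 1:ℝ) * y + (c 2:ℝ) * z : ℝ) : ℂ) = 0 := by
    push_cast
    exact_mod_cast h
  exact_mod_cast h'

private lemma real_lin2 {c : Fin 2 → ℚ} {x y : ℝ}
    (h : c 0 • ((x:ℂ)) + c 1 • ((y:ℂ)) = 0) :
    (c 0 : ℝ) * x + (c 1 : ℝ) * y = 0 := by
  rw [Rat.smul_def, Rat.smul_def] at h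
  have h' : (((c 0:ℝ) * x + (c 1:ℝ) * y : ℝ) : ℂ) = 0 := by
    push_cast
    exact_mod_cast h
  exact_mod_cast h'


/-- Assuming Schanuel's conjecture, if `r ∈ ℕ`, `r > e^e`, `r ≠ 16`, and
`0 < s < t` with `s^t = t^s = r`, then `s` and `t` are both transcendental. -/
theorem both_transcendental (hS : SchanuelConjecture)
    (r : ℕ) (hr : exp 1 ^ exp 1 < (r : ℝ)) (hr16 : r ≠ 16)
    (s t : ℝ) (hs : 0 < s) (hst : s < t)
    (h1 : s ^ t = (r : ℝ)) (h2 : t ^ s = (r : ℝ)) :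
    Transcendental ℚ s ∧ Transcendental ℚ t := by
  have ht0 : 0 < t := hs.trans hst
  have hee : Real.exp 1 ^ Real.exp 1 = Real.exp (Real.exp 1) := by
    rw [Real.rpow_def_of_pos (Real.exp_pos 1), Real.log_exp, one_mul]
  have he1 : (1:ℝ) < Real.exp 1 := by
    exact lt_trans (by norm_num) Real.exp_one_gt_d9
  have hr1 : (1:ℝ) < (r:ℝ) := by
    have h2' : Real.exp 1 < Real.exp (Real.exp 1) := Real.exp_lt_exp.mpr he1
    rw [hee] at hr
    linarith
  have hr0 : (0:ℝ) < (r:ℝ) := by linarith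
  have hs1 : (1:ℝ) < s := by
    by_contra hle
    push_neg at hle
    have : s ^ t ≤ 1 := Real.rpow_le_one hs.le hle ht0.le
    rw [h1] at this
    linarith
  have ht1 : (1:ℝ) < t := hs1.trans hst
  have hls : 0 < Real.log s := Real.log_pos hs1
  have hlt : 0 < Real.log t := Real.log_pos ht1
  have hlr : 0 < Real.log r := Real.log_pos hr1
  have e1 : t * Real.log s = Real.log r := by rw [← h1, Real.log_rpow hs]
  have e2 : s * Real.log t = Real.log r := by rw [← h2, Real.log_rpow ht0]
  have e3 : t * Real.log s = s * Real.log t := by rw [e1, e2]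
  have cE1 : ((Real.log r : ℝ) : ℂ) = (t:ℂ) * ((Real.log s : ℝ):ℂ) := by
    rw [← e1]; push_cast; ring
  have cE2 : ((Real.log r : ℝ) : ℂ) = (s:ℂ) * ((Real.log t : ℝ):ℂ) := by
    rw [← e2]; push_cast; ring
  have cE3 : (t:ℂ) * ((Real.log s : ℝ):ℂ) = (s:ℂ) * ((Real.log t : ℝ):ℂ) := by
    rw [← cE1, ← cE2]
  have hexpS : Complex.exp ((Real.log s : ℝ):ℂ) = ((s:ℝ):ℂ) := by
    rw [← Complex.ofReal_exp, Real.exp_log hs]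
  have hexpT : Complex.exp ((Real.log t : ℝ):ℂ) = ((t:ℝ):ℂ) := by
    rw [← Complex.ofReal_exp, Real.exp_log ht0]
  have hexpR : Complex.exp ((Real.log r : ℝ):ℂ) = (((r:ℝ)):ℂ) := by
    rw [← Complex.ofReal_exp, Real.exp_log hr0]
  have hralgC : IsAlgebraic ℚ (((r:ℝ)):ℂ) := by
    have := algNatC r
    rwa [← Complex.ofReal_natCast] at this
  have halg1 : IsAlgebraic ℚ (1:ℂ) := by
    have := algNatC 1
    rwa [Nat.cast_one] at this
  -- Case A : both algebraic
  have caseA : IsAlgebraic ℚ s → IsAlgebraic ℚ t → False := by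
    intro hsA htA
    have hSalg : IsAlgebraic ℚ ((s:ℝ):ℂ) := algC hsA
    have hTalg : IsAlgebraic ℚ ((t:ℝ):ℂ) := algC htA
    have hqt : ∃ q : ℚ, (q:ℝ) = t := by
      by_cases hli : LinearIndependent ℚ ![((Real.log s:ℝ):ℂ), ((Real.log r:ℝ):ℂ)]
      · exfalso
        obtain ⟨g, hgmem, hgai⟩ := hS 2 _ hli
        have hmem2 : ∀ i, g i = ((Real.log r:ℝ):ℂ) ∨ g i = ((Real.log s:ℝ):ℂ) := by
          intro i
          have htr := hgai.transcendental i
          rcases hgmem i with hm | hm <;> rw [Set.mem_range] at hm <;> obtain ⟨j, hj⟩ := hm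
          · fin_cases j
            · exact Or.inr hj.symm
            · exact Or.inl hj.symm
          · exfalso
            fin_cases j
            · replace hj : Complex.exp ((Real.log s:ℝ):ℂ) = g i := hj
              rw [hexpS] at hj
              exact htr (by rw [← hj]; exact hSalg)
            · replace hj : Complex.exp ((Real.log r:ℝ):ℂ) = g i := hj
              rw [hexpR] at hj
              exact htr (by rw [← hj]; exact hralgC)
        exact no_two (not_ai_pair hTalg cE1) hmem2 hgai
      · obtain ⟨c, hsum, i, hi⟩ := Fintype.not_linearIndependent_iff.mp hli
        rw [Fin.sum_univ_two] at hsum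
        simp only [Matrix.cons_val_zero, Matrix.cons_val_one, Matrix.head_cons] at hsum
        have E := real_lin2 hsum
        have key : ((c 0 : ℝ) + (c 1:ℝ) * t) * Real.log s = 0 := by
          linear_combination E + (c 1 : ℝ) * e1
        have E2 : (c 0 : ℝ) + (c 1:ℝ) * t = 0 := by
          rcases mul_eq_zero.mp key with h | h
          · exact h
          · exact absurd h hls.ne'
        have hc1 : (c 1 : ℝ) ≠ 0 := by
          intro h0
          have hc0 : (c 0:ℝ) = 0 := by rw [h0] at E2; linarith
          fin_cases i
          · exact hi (by exact_mod_cast hc0)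
          · exact hi (by exact_mod_cast h0)
        refine ⟨-(c 0) / (c 1), ?_⟩
        push_cast
        field_simp
        linarith [E2]
    have hqs : ∃ q : ℚ, (q:ℝ) = s := by
      by_cases hli : LinearIndependent ℚ ![((Real.log t:ℝ):ℂ), ((Real.log r:ℝ):ℂ)]
      · exfalso
        obtain ⟨g, hgmem, hgai⟩ := hS 2 _ hli
        have hmem2 : ∀ i, g i = ((Real.log r:ℝ):ℂ) ∨ g i = ((Real.log t:ℝ):ℂ) := by
          intro i
          have htr := hgai.transcendental i
          rcases hgmem i with hm | hm <;> rw [Set.mem_range] at hm <;> obtain ⟨j, hj⟩ := hm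
          · fin_cases j
            · exact Or.inr hj.symm
            · exact Or.inl hj.symm
          · exfalso
            fin_cases j
            · replace hj : Complex.exp ((Real.log t:ℝ):ℂ) = g i := hj
              rw [hexpT] at hj
              exact htr (by rw [← hj]; exact hTalg)
            · replace hj : Complex.exp ((Real.log r:ℝ):ℂ) = g i := hj
              rw [hexpR] at hj
              exact htr (by rw [← hj]; exact hralgC)
        exact no_two (not_ai_pair hSalg cE2) hmem2 hgai
      · obtain ⟨c, hsum, i, hi⟩ := Fintype.not_linearIndependent_iff.mp hli
        rw [Fin.sum_univ_two] at hsum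
        simp only [Matrix.cons_val_zero, Matrix.cons_val_one, Matrix.head_cons] at hsum
        have E := real_lin2 hsum
        have key : ((c 0 : ℝ) + (c 1:ℝ) * s) * Real.log t = 0 := by
          linear_combination E + (c 1 : ℝ) * e2
        have E2 : (c 0 : ℝ) + (c 1:ℝ) * s = 0 := by
          rcases mul_eq_zero.mp key with h | h
          · exact h
          · exact absurd h hlt.ne'
        have hc1 : (c 1 : ℝ) ≠ 0 := by
          intro h0
          have hc0 : (c 0:ℝ) = 0 := by rw [h0] at E2; linarith
          fin_cases i
          · exact hi (by exact_mod_cast hc0)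
          · exact hi (by exact_mod_cast h0)
        refine ⟨-(c 0) / (c 1), ?_⟩
        push_cast
        field_simp
        linarith [E2]
    obtain ⟨q2, hq2t⟩ := hqt
    obtain ⟨q1, hq1s⟩ := hqs
    have hq1 : 1 < q1 := by
      have := hs1
      rw [← hq1s] at this
      exact_mod_cast this
    have hq2 : 1 < q2 := by
      have := ht1
      rw [← hq2t] at this
      exact_mod_cast this
    obtain ⟨m, hm, hm2⟩ := nat_of_rpow_rat (q1 := q1) (q2 := q2) hq1 (by linarith) (k := r)
      (by rw [← hq1s, ← hq2t] at h1; exact h1)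
    obtain ⟨n, hn, hn2⟩ := nat_of_rpow_rat (q1 := q2) (q2 := q1) hq2 (by linarith) (k := r)
      (by rw [← hq2t, ← hq1s] at h2; exact h2)
    have hsm : s = (m:ℝ) := by rw [← hq1s, hm]; norm_cast
    have htn : t = (n:ℝ) := by rw [← hq2t, hn]; norm_cast
    have hmn : m < n := by
      have := hst
      rw [hsm, htn] at this
      exact_mod_cast this
    have hmnr : m ^ n = r := by
      have hx : ((m:ℕ):ℝ) ^ (((n:ℕ)):ℝ) = (r:ℝ) := by rw [← hsm, ← htn]; exact h1
      rw [Real.rpow_natCast] at hx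
      exact_mod_cast hx
    have hnmr : n ^ m = r := by
      have hx : ((n:ℕ):ℝ) ^ (((m:ℕ)):ℝ) = (r:ℝ) := by rw [← hsm, ← htn]; exact h2
      rw [Real.rpow_natCast] at hx
      exact_mod_cast hx
    have h16 := eq_sixteen hm2 hmn (by rw [hmnr, hnmr])
    rw [hmnr] at h16
    exact hr16 h16
  -- Case B : s algebraic, t transcendental
  have caseB : IsAlgebraic ℚ s → ¬ IsAlgebraic ℚ t → False := by
    intro hsA htT
    have hSalg : IsAlgebraic ℚ ((s:ℝ):ℂ) := algC hsA
    have hsirr : ∀ q : ℚ, (q:ℝ) ≠ s := by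
      intro q hq
      have hq0 : 0 < q := by
        have h' : (0:ℝ) < (q:ℝ) := by rw [hq]; exact hs
        exact_mod_cast h'
      exact htT (alg_of_rpow_rat ht0 hq0 (k := r) (by rw [hq]; exact h2))
    have hlin : LinearIndependent ℚ
        ![((Real.log s:ℝ):ℂ), ((Real.log t:ℝ):ℂ), ((Real.log r:ℝ):ℂ)] := by
      rw [Fintype.linearIndependent_iff]
      intro c hc
      rw [Fin.sum_univ_three] at hc
      simp only [Matrix.cons_val_zero, Matrix.cons_val_one, Matrix.head_cons,
        Matrix.cons_val_two, Matrix.tail_cons] at hc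
      have E := real_lin3 hc
      have key : ((c 0:ℝ) * s + (c 1:ℝ) * t + (c 2:ℝ) * (s*t)) * Real.log s = 0 := by
        linear_combination s * E + (c 1:ℝ) * e3 + (c 2:ℝ) * s * e1
      have E2 : (c 0:ℝ) * s + (c 1:ℝ) * t + (c 2:ℝ) * (s*t) = 0 := by
        rcases mul_eq_zero.mp key with h | h
        · exact h
        · exact absurd h hls.ne'
      by_cases hz : (c 1:ℝ) + (c 2:ℝ) * s = 0
      · have hc0 : (c 0:ℝ) = 0 := by
          have h5 : (c 0:ℝ) * s = 0 := by linear_combination E2 - t * hz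
          rcases mul_eq_zero.mp h5 with h | h
          · exact h
          · linarith
        have hc2 : (c 2:ℝ) = 0 := by
          by_contra hne
          have hne' : (c 2:ℝ) ≠ 0 := hne
          exact hsirr (-(c 1)/(c 2)) (by push_cast; field_simp; linarith [hz])
        have hc1 : (c 1:ℝ) = 0 := by rw [hc2] at hz; linarith
        intro i
        fin_cases i
        · exact_mod_cast hc0
        · exact_mod_cast hc1
        · exact_mod_cast hc2
      · exfalso
        apply htT
        have htval : t = (-(c 0:ℝ) * s) / ((c 1:ℝ) + (c 2:ℝ) * s) := by
          rw [eq_div_iff hz]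
          linear_combination E2
        rw [htval]
        exact IsAlg.div' (IsAlg.mul' (IsAlg.neg' (algQ (c 0))) hsA)
          (IsAlg.add' (algQ (c 1)) (IsAlg.mul' (algQ (c 2)) hsA))
    obtain ⟨g, hgmem, hgai⟩ := hS 3 _ hlin
    have hmem4 : ∀ i, g i = ((Real.log s:ℝ):ℂ) ∨ g i = ((Real.log r:ℝ):ℂ) ∨
        g i = ((Real.log t:ℝ):ℂ) ∨ g i = ((t:ℝ):ℂ) := by
      intro i
      have htr := hgai.transcendental i
      rcases hgmem i with hm | hm <;> rw [Set.mem_range] at hm <;> obtain ⟨j, hj⟩ := hm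
      · fin_cases j
        · exact Or.inl hj.symm
        · exact Or.inr (Or.inr (Or.inl hj.symm))
        · exact Or.inr (Or.inl hj.symm)
      · fin_cases j
        · replace hj : Complex.exp ((Real.log s:ℝ):ℂ) = g i := hj
          rw [hexpS] at hj
          exact absurd (by rw [← hj]; exact hSalg) htr
        · replace hj : Complex.exp ((Real.log t:ℝ):ℂ) = g i := hj
          rw [hexpT] at hj
          exact Or.inr (Or.inr (Or.inr hj.symm))
        · replace hj : Complex.exp ((Real.log r:ℝ):ℂ) = g i := hj
          rw [hexpR] at hj
          exact absurd (by rw [← hj]; exact hralgC) htr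
    exact no_three (not_ai_pair hSalg cE2)
      (not_ai_triple halg1 (by rw [one_mul]; exact cE1.symm))
      (not_ai_triple hSalg cE3) hmem4 hgai
  -- Case C : s transcendental, t algebraic
  have caseC : ¬ IsAlgebraic ℚ s → IsAlgebraic ℚ t → False := by
    intro hsT htA
    have hTalg : IsAlgebraic ℚ ((t:ℝ):ℂ) := algC htA
    have htirr : ∀ q : ℚ, (q:ℝ) ≠ t := by
      intro q hq
      have hq0 : 0 < q := by
        have h' : (0:ℝ) < (q:ℝ) := by rw [hq]; exact ht0
        exact_mod_cast h'
      exact hsT (alg_of_rpow_rat hs hq0 (k := r) (by rw [hq]; exact h1))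
    have hlin : LinearIndependent ℚ
        ![((Real.log s:ℝ):ℂ), ((Real.log t:ℝ):ℂ), ((Real.log r:ℝ):ℂ)] := by
      rw [Fintype.linearIndependent_iff]
      intro c hc
      rw [Fin.sum_univ_three] at hc
      simp only [Matrix.cons_val_zero, Matrix.cons_val_one, Matrix.head_cons,
        Matrix.cons_val_two, Matrix.tail_cons] at hc
      have E := real_lin3 hc
      have key : ((c 0:ℝ) * s + (c 1:ℝ) * t + (c 2:ℝ) * (s*t)) * Real.log s = 0 := by
        linear_combination s * E + (c 1:ℝ) * e3 + (c 2:ℝ) * s * e1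
      have E2 : (c 0:ℝ) * s + (c 1:ℝ) * t + (c 2:ℝ) * (s*t) = 0 := by
        rcases mul_eq_zero.mp key with h | h
        · exact h
        · exact absurd h hls.ne'
      by_cases hz : (c 0:ℝ) + (c 2:ℝ) * t = 0
      · have hc1 : (c 1:ℝ) = 0 := by
          have h5 : (c 1:ℝ) * t = 0 := by linear_combination E2 - s * hz
          rcases mul_eq_zero.mp h5 with h | h
          · exact h
          · linarith
        have hc2 : (c 2:ℝ) = 0 := by
          by_contra hne
          have hne' : (c 2:ℝ) ≠ 0 := hne
          exact htirr (-(c 0)/(c 2)) (by push_cast; field_simp; linarith [hz])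
        have hc0 : (c 0:ℝ) = 0 := by rw [hc2] at hz; linarith
        intro i
        fin_cases i
        · exact_mod_cast hc0
        · exact_mod_cast hc1
        · exact_mod_cast hc2
      · exfalso
        apply hsT
        have hsval : s = (-(c 1:ℝ) * t) / ((c 0:ℝ) + (c 2:ℝ) * t) := by
          rw [eq_div_iff hz]
          linear_combination E2
        rw [hsval]
        exact IsAlg.div' (IsAlg.mul' (IsAlg.neg' (algQ (c 1))) htA)
          (IsAlg.add' (algQ (c 0)) (IsAlg.mul' (algQ (c 2)) htA))
    obtain ⟨g, hgmem, hgai⟩ := hS 3 _ hlin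
    have hmem4 : ∀ i, g i = ((Real.log t:ℝ):ℂ) ∨ g i = ((Real.log r:ℝ):ℂ) ∨
        g i = ((Real.log s:ℝ):ℂ) ∨ g i = ((s:ℝ):ℂ) := by
      intro i
      have htr := hgai.transcendental i
      rcases hgmem i with hm | hm <;> rw [Set.mem_range] at hm <;> obtain ⟨j, hj⟩ := hm
      · fin_cases j
        · exact Or.inr (Or.inr (Or.inl hj.symm))
        · exact Or.inl hj.symm
        · exact Or.inr (Or.inl hj.symm)
      · fin_cases j
        · replace hj : Complex.exp ((Real.log s:ℝ):ℂ) = g i := hj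
          rw [hexpS] at hj
          exact Or.inr (Or.inr (Or.inr hj.symm))
        · replace hj : Complex.exp ((Real.log t:ℝ):ℂ) = g i := hj
          rw [hexpT] at hj
          exact absurd (by rw [← hj]; exact hTalg) htr
        · replace hj : Complex.exp ((Real.log r:ℝ):ℂ) = g i := hj
          rw [hexpR] at hj
          exact absurd (by rw [← hj]; exact hralgC) htr
    exact no_three (not_ai_pair hTalg cE1)
      (not_ai_triple halg1 (by rw [one_mul]; exact cE2.symm))
      (not_ai_triple hTalg cE3.symm) hmem4 hgai
  constructor
  · intro hsA
    by_cases htA : IsAlgebraic ℚ t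
    · exact caseA hsA htA
    · exact caseB hsA htA
  · intro htA
    by_cases hsA : IsAlgebraic ℚ s
    · exact caseA hsA htA
    · exact caseC hsA htA
end

section
/- Assume Schanuel's conjecture. Then there exist transcendental positive real numbers x, y and transcendental positive reals s ≠ t such that x^y, y^x, s^t, t^s are all integers, with x^y ≠ y^x and s^t = t^s. -/
open MvPolynomial in
lemma dmon {n : ℕ} {g : Fin n → ℂ} (hg : AlgebraicIndependent ℚ g)
    {c : ℂ} (hc : IsAlgebraic ℚ c)
    {E F : Fin n →₀ ℕ} (hEF : E ≠ F)
    (hrel : (∏ j, g j ^ E j) = c * ∏ j, g j ^ F j) : False := by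
  have hcI : IsIntegral ℚ c := hc.isIntegral
  set q := minpoly ℚ c with hqdef
  have hq0 : Polynomial.aeval c q = 0 := minpoly.aeval ℚ c
  have hmonic : q.Monic := minpoly.monic hcI
  set d := q.natDegree with hd
  set w : ℕ → (Fin n →₀ ℕ) := fun i => i • E + (d - i) • F with hw
  have hwinj : ∀ i ≤ d, w i = w d → i = d := by
    intro i hid hwi
    by_contra hne
    apply hEF
    ext t
    have h1 := DFunLike.congr_fun hwi t
    simp only [w, Finsupp.add_apply, Finsupp.smul_apply, smul_eq_mul] at h1
    have key : i * E t + (d - i) * F t = i * E t + (d - i) * E t := by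
      calc i * E t + (d - i) * F t = d * E t + (d - d) * F t := h1
        _ = d * E t := by simp
        _ = (i + (d - i)) * E t := by congr 1; omega
        _ = i * E t + (d - i) * E t := by rw [Nat.add_mul]
    have h2 := Nat.add_left_cancel key
    exact (Nat.eq_of_mul_eq_mul_left (by omega) h2).symm
  set P : MvPolynomial (Fin n) ℚ :=
    ∑ i ∈ Finset.range (d + 1), monomial (w i) (q.coeff i) with hP
  have hPeval : MvPolynomial.aeval g P = 0 := by
    rw [hP, map_sum]
    have hterm : ∀ i ∈ Finset.range (d + 1),
        MvPolynomial.aeval g (monomial (w i) (q.coeff i))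
          = (algebraMap ℚ ℂ (q.coeff i) * c ^ i) * (∏ j, g j ^ F j) ^ d := by
      intro i hi
      rw [MvPolynomial.aeval_monomial]
      have hprod : (w i).prod (fun j k => g j ^ k)
          = (∏ j, g j ^ E j) ^ i * (∏ j, g j ^ F j) ^ (d - i) := by
        rw [Finsupp.prod_fintype _ _ (fun j => pow_zero _)]
        rw [← Finset.prod_pow, ← Finset.prod_pow, ← Finset.prod_mul_distrib]
        apply Finset.prod_congr rfl
        intro j _
        simp only [w, Finsupp.add_apply, Finsupp.smul_apply, smul_eq_mul]
        rw [pow_add]; ring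
      have hid : i + (d - i) = d := by
        have := Finset.mem_range.mp hi; omega
      have key : (c * ∏ j, g j ^ F j) ^ i * (∏ j, g j ^ F j) ^ (d - i)
          = c ^ i * (∏ j, g j ^ F j) ^ d := by
        rw [mul_pow, mul_assoc, ← pow_add, hid]
      rw [hprod, hrel, key]; ring
    rw [Finset.sum_congr rfl hterm, ← Finset.sum_mul]
    have hzero : (∑ i ∈ Finset.range (d + 1), algebraMap ℚ ℂ (q.coeff i) * c ^ i) = 0 := by
      have h := (Polynomial.aeval_eq_sum_range (p := q) c).symm.trans hq0
      rw [← h]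
      apply Finset.sum_congr rfl
      intro i _
      rw [Algebra.smul_def]
    rw [hzero, zero_mul]
  have hP0 : P = 0 := algebraicIndependent_iff.1 hg P hPeval
  have hcoeff : MvPolynomial.coeff (w d) P = q.coeff d := by
    rw [hP, MvPolynomial.coeff_sum]
    rw [Finset.sum_eq_single d]
    · simp [MvPolynomial.coeff_monomial]
    · intro i hi hne
      rw [MvPolynomial.coeff_monomial, if_neg]
      intro hwi
      exact hne (hwinj i (by have := Finset.mem_range.mp hi; omega) hwi)
    · intro h; exact absurd (Finset.self_mem_range_succ d) h
  rw [hP0] at hcoeff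
  simp only [MvPolynomial.coeff_zero] at hcoeff
  have h1 : q.coeff d = 1 := hmonic.coeff_natDegree
  rw [h1] at hcoeff
  exact one_ne_zero hcoeff.symm

lemma algRatC (r : ℚ) : IsAlgebraic ℚ (r : ℂ) := by
  have := isAlgebraic_algebraMap (R := ℚ) (A := ℂ) r
  simpa [eq_ratCast] using this

lemma algRatR (r : ℚ) : IsAlgebraic ℚ (r : ℝ) := by
  have := isAlgebraic_algebraMap (R := ℚ) (A := ℝ) r
  simpa [eq_ratCast] using this

lemma algC_of_algR {r : ℝ} (h : IsAlgebraic ℚ r) : IsAlgebraic ℚ (r : ℂ) := by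
  have := (isAlgebraic_algebraMap_iff (R := ℚ) (S := ℝ) (A := ℂ)
    (Complex.ofReal_injective)).mpr h
  simpa using this

lemma algR_of_algC {r : ℝ} (h : IsAlgebraic ℚ (r : ℂ)) : IsAlgebraic ℚ r := by
  apply (isAlgebraic_algebraMap_iff (R := ℚ) (S := ℝ) (A := ℂ)
    (Complex.ofReal_injective)).mp
  simpa using h

lemma IsAlgebraicQ.mul {K : Type*} [Field K] [Algebra ℚ K] {a b : K}
    (ha : IsAlgebraic ℚ a) (hb : IsAlgebraic ℚ b) : IsAlgebraic ℚ (a * b) := by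
  rw [isAlgebraic_iff_isIntegral] at *
  exact ha.mul hb

lemma IsAlgebraicQ.add {K : Type*} [Field K] [Algebra ℚ K] {a b : K}
    (ha : IsAlgebraic ℚ a) (hb : IsAlgebraic ℚ b) : IsAlgebraic ℚ (a + b) := by
  rw [isAlgebraic_iff_isIntegral] at *
  exact ha.add hb

lemma IsAlgebraicQ.div {K : Type*} [Field K] [Algebra ℚ K] {a b : K}
    (ha : IsAlgebraic ℚ a) (hb : IsAlgebraic ℚ b) : IsAlgebraic ℚ (a / b) := by
  rw [div_eq_mul_inv]
  exact IsAlgebraicQ.mul ha hb.inv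

lemma dep2 {m : ℕ} {g : Fin m → ℂ} (hg : AlgebraicIndependent ℚ g) {i j : Fin m}
    (hij : i ≠ j) {c : ℂ} (hc : IsAlgebraic ℚ c) (h : g i = c * g j) : False := by
  have hinj : Function.Injective ![i, j] := by
    intro a b hab
    fin_cases a <;> fin_cases b <;> simp_all
  have h2 := hg.comp ![i, j] hinj
  apply dmon h2 hc (E := Finsupp.single 0 1) (F := Finsupp.single 1 1) ?_ ?_
  · intro hEF; have := DFunLike.congr_fun hEF 0; simp at this
  · rw [Fin.prod_univ_two, Fin.prod_univ_two]
    simp [Finsupp.single_apply, h]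

lemma dep3 {m : ℕ} {g : Fin m → ℂ} (hg : AlgebraicIndependent ℚ g) {i j l : Fin m}
    (hij : i ≠ j) (hil : i ≠ l) (hjl : j ≠ l) {c : ℂ} (hc : IsAlgebraic ℚ c)
    (h : g i * g j = c * g l) : False := by
  have hinj : Function.Injective ![i, j, l] := by
    intro a b hab
    fin_cases a <;> fin_cases b <;> simp_all
  have h2 := hg.comp ![i, j, l] hinj
  apply dmon h2 hc (E := Finsupp.single 0 1 + Finsupp.single 1 1)
    (F := Finsupp.single 2 1) ?_ ?_
  · intro hEF; have := DFunLike.congr_fun hEF 0; simp at this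
  · rw [Fin.prod_univ_three, Fin.prod_univ_three]
    simp [Finsupp.single_apply, h]

lemma missSurj {s : Fin 3 → Fin 4} (hinj : Function.Injective s) (m : Fin 4)
    (hm : ∀ i, s i ≠ m) : ∀ u : Fin 4, u ≠ m → ∃ i, s i = u := by
  intro u hu
  by_contra hno
  push_neg at hno
  have h1 : (Finset.univ.image s).card = 3 := by
    rw [Finset.card_image_of_injective _ hinj]; simp
  have hsub : Finset.univ.image s ⊆ (Finset.univ.erase m).erase u := by
    intro z hz
    obtain ⟨i, _, rfl⟩ := Finset.mem_image.mp hz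
    exact Finset.mem_erase.mpr ⟨hno i, Finset.mem_erase.mpr ⟨hm i, Finset.mem_univ _⟩⟩
  have h2 := Finset.card_le_card hsub
  have h3 : ((Finset.univ.erase m).erase u).card = 2 := by
    rw [Finset.card_erase_of_mem (Finset.mem_erase.mpr ⟨hu, Finset.mem_univ _⟩),
      Finset.card_erase_of_mem (Finset.mem_univ _)]
    simp
  omega

lemma transSolve {y A B : ℝ} (hy : Transcendental ℚ y) (hA : IsAlgebraic ℚ A)
    (hB : IsAlgebraic ℚ B) (hB0 : B ≠ 0) (h : B * y = A) : False := by
  apply hy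
  have hyy : y = A / B := by
    rw [eq_div_iff hB0]; linarith [h]
  rw [hyy]
  exact IsAlgebraicQ.div hA hB

lemma ratLogAlg {z : ℝ} (hz : 0 < z) {t : ℚ} (ht : 0 < t)
    (h : Real.log z = (t : ℝ) * Real.log 17) : IsAlgebraic ℚ z := by
  have h17 : (0:ℝ) < 17 := by norm_num
  have hz' : z = (17 : ℝ) ^ (t : ℝ) := by
    rw [← Real.exp_log hz, h, Real.rpow_def_of_pos h17, mul_comm]
  have hnum : 0 < t.num := Rat.num_pos.mpr ht
  have hden : 0 < t.den := t.pos
  have htnum : (t.num : ℝ) = (t : ℝ) * (t.den : ℝ) := by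
    rw [Rat.cast_def]
    field_simp
  have htden : (t : ℝ) * (t.den : ℝ) = (t.num.toNat : ℝ) := by
    rw [← htnum]
    exact_mod_cast (Int.toNat_of_nonneg hnum.le).symm
  have hpow : z ^ (t.den : ℕ) = (17 : ℝ) ^ (t.num.toNat) := by
    rw [hz', ← Real.rpow_natCast ((17:ℝ) ^ (t:ℝ)) t.den, ← Real.rpow_mul (le_of_lt h17),
      htden, Real.rpow_natCast]
  have halg : IsAlgebraic ℚ (z ^ (t.den : ℕ)) := by
    rw [hpow]
    have : ((17:ℝ)) ^ (t.num.toNat) = ((17 ^ t.num.toNat : ℚ) : ℝ) := by push_cast; ring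
    rw [this]; exact algRatR _
  exact halg.of_pow hden

lemma ratPow17 {ρ : ℚ} (hρ : 1 < ρ) {a b : ℕ} (ha : 0 < a) (h : ρ ^ a = (17:ℚ) ^ b) :
    ∃ m : ℕ, ρ = (17:ℚ) ^ m ∧ m * a = b := by
  have h17 : Nat.Prime 17 := by norm_num
  have hden : ρ.den = 1 := by
    have h1 := congrArg Rat.den h
    have h2 : ((17:ℚ) ^ b) = (((17:ℕ) ^ b : ℕ) : ℚ) := by push_cast; ring
    rw [Rat.den_pow, h2, Rat.den_natCast] at h1
    by_contra hne
    have h2le : 2 ≤ ρ.den := by have := ρ.pos; omega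
    have hlt : 1 < ρ.den ^ a := Nat.one_lt_pow (by omega) h2le
    omega
  have hρint : ρ = (ρ.num : ℚ) := by
    rw [← Rat.num_div_den ρ, hden]; simp
  have hnumpos : 1 < ρ.num := by
    by_contra hc
    push_neg at hc
    have : ρ ≤ 1 := by rw [hρint]; exact_mod_cast hc
    linarith
  set n : ℕ := ρ.num.toNat with hn
  have hcastn : (ρ.num : ℚ) = (n : ℚ) := by
    rw [hn]; norm_cast; omega
  have hn1 : 1 < n := by omega
  have hnat : n ^ a = 17 ^ b := by
    have : ((n : ℚ)) ^ a = ((17:ℕ) : ℚ) ^ b := by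
      rw [← hcastn, ← hρint] at *
      push_cast
      exact_mod_cast h
    exact_mod_cast this
  have hfac := congrArg Nat.factorization hnat
  rw [Nat.factorization_pow, Nat.factorization_pow] at hfac
  set m := n.factorization 17 with hm
  have hsingle : n.factorization = Finsupp.single 17 m := by
    ext p
    by_cases hp : p = 17
    · subst hp; simp [hm]
    · have hthis := DFunLike.congr_fun hfac p
      simp only [Finsupp.smul_apply, smul_eq_mul] at hthis
      rw [h17.factorization] at hthis
      simp only [Finsupp.single_apply] at hthis ⊢
      have hcond : ¬ (17 = p) := fun hh => hp hh.symm
      rw [if_neg hcond] at hthis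
      rw [if_neg hcond]
      rw [mul_zero, Nat.mul_eq_zero] at hthis
      exact hthis.resolve_left (by omega)
  have hn_eq : n = 17 ^ m := by
    have hprod := Nat.factorization_prod_pow_eq_self (show n ≠ 0 by omega)
    rw [hsingle] at hprod
    rw [← hprod, Finsupp.prod_single_index]
    exact pow_zero _
  have hma : a * m = b := by
    have hthis := DFunLike.congr_fun hfac 17
    simp only [Finsupp.smul_apply, smul_eq_mul] at hthis
    rw [h17.factorization] at hthis
    simpa using hthis
  refine ⟨m, ?_, by rw [mul_comm]; exact hma⟩
  rw [hρint, hcastn, hn_eq]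
  push_cast
  ring

lemma gelfondSchneider (hS : SchanuelConjecture) {u v : ℝ}
    (hu : 1 < u) (hualg : IsAlgebraic ℚ u) (hvirr : ∀ r : ℚ, (r:ℝ) ≠ v)
    (hvalg : IsAlgebraic ℚ v)
    (hwalg : IsAlgebraic ℚ (Real.exp (v * Real.log u))) : False := by
  have hlogu : Real.log u ≠ 0 := ne_of_gt (Real.log_pos hu)
  set α : Fin 2 → ℂ := ![(Real.log u : ℂ), (v : ℂ) * (Real.log u : ℂ)] with hα
  have hlin : LinearIndependent ℚ α := by
    rw [Fintype.linearIndependent_iff]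
    intro q hq
    rw [Fin.sum_univ_two] at hq
    simp only [hα, Matrix.cons_val_zero, Matrix.cons_val_one, Matrix.head_cons,
      Rat.smul_def] at hq
    have hreal : ((q 0 : ℝ) + (q 1 : ℝ) * v) * Real.log u = 0 := by
      have h2 : ((((q 0 : ℝ) + (q 1 : ℝ) * v) * Real.log u : ℝ) : ℂ) = 0 := by
        push_cast
        linear_combination hq
      exact_mod_cast h2
    have hsum : (q 0 : ℝ) + (q 1 : ℝ) * v = 0 := by
      rcases mul_eq_zero.mp hreal with h | h
      · exact h
      · exact absurd h hlogu
    by_cases hq1 : q 1 = 0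
    · intro i
      fin_cases i
      · have : (q 0 : ℝ) = 0 := by
          rw [hq1] at hsum; push_cast at hsum; linarith
        exact_mod_cast this
      · exact hq1
    · exfalso
      apply hvirr (-(q 0) / q 1)
      have hne : (q 1 : ℝ) ≠ 0 := by exact_mod_cast hq1
      push_cast
      field_simp
      linarith
  obtain ⟨g, hmem, hg⟩ := hS 2 α hlin
  simp only [Set.mem_union, Set.mem_range] at hmem
  have hupos : (0:ℝ) < u := lt_trans one_pos hu
  have hexp0 : Complex.exp (α 0) = (u : ℂ) := by
    simp only [hα, Matrix.cons_val_zero]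
    rw [← Complex.ofReal_exp, Real.exp_log hupos]
  have hexp1 : Complex.exp (α 1) = (Real.exp (v * Real.log u) : ℂ) := by
    simp only [hα, Matrix.cons_val_one, Matrix.head_cons, Matrix.cons_val_zero]
    rw [← Complex.ofReal_mul, ← Complex.ofReal_exp]
  have hslot : ∀ i, g i = α 0 ∨ g i = α 1 := by
    intro i
    have htr := hg.transcendental i
    rcases hmem i with h | h
    · rcases Fin.exists_fin_two.mp h with hj | hj
      · left; exact hj.symm
      · right; exact hj.symm
    · exfalso
      rcases Fin.exists_fin_two.mp h with hj | hj
      · exact htr (by rw [← hj, hexp0]; exact algC_of_algR hualg)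
      · exact htr (by rw [← hj, hexp1]; exact algC_of_algR hwalg)
  have hvC : IsAlgebraic ℚ ((v : ℂ)) := algC_of_algR hvalg
  have hone : IsAlgebraic ℚ (1 : ℂ) := by simpa using algRatC 1
  have hα1 : α 1 = (v:ℂ) * α 0 := by simp [hα]
  have h0 := hslot 0
  have h1 := hslot 1
  rcases h0 with h0 | h0 <;> rcases h1 with h1 | h1
  · exact dep2 hg (show (0:Fin 2) ≠ 1 by decide) hone (by rw [h0, h1, one_mul])
  · exact dep2 hg (show (1:Fin 2) ≠ 0 by decide) hvC (by rw [h0, h1, hα1])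
  · exact dep2 hg (show (0:Fin 2) ≠ 1 by decide) hvC (by rw [h0, h1, hα1])
  · exact dep2 hg (show (0:Fin 2) ≠ 1 by decide) hone (by rw [h0, h1, one_mul])

lemma log17pos : (0:ℝ) < Real.log 17 := Real.log_pos (by norm_num)

lemma bothAlg (hS : SchanuelConjecture) {x y : ℝ} (hx : 1 < x) (hy : 1 < y)
    (k : ℕ) (hk : 1 ≤ k) (h1 : y * Real.log x = (k : ℝ) * Real.log 17)
    (h2 : x * Real.log y = Real.log 17)
    (hxalg : IsAlgebraic ℚ x) (hyalg : IsAlgebraic ℚ y) : False := by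
  have hL17 := log17pos
  have hxpos : (0:ℝ) < x := lt_trans one_pos hx
  have hypos : (0:ℝ) < y := lt_trans one_pos hy
  by_cases hyr : ∃ r : ℚ, (r : ℝ) = y
  · by_cases hxr : ∃ r : ℚ, (r : ℝ) = x
    · obtain ⟨ry, hry⟩ := hyr
      obtain ⟨rx, hrx⟩ := hxr
      have hry1 : 1 < ry := by
        have : (1:ℝ) < (ry:ℝ) := by rw [hry]; exact hy
        exact_mod_cast this
      have hrx1 : 1 < rx := by
        have : (1:ℝ) < (rx:ℝ) := by rw [hrx]; exact hx
        exact_mod_cast this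
      set a := ry.num.toNat with hadef
      have hanum : ((a:ℤ)) = ry.num := Int.toNat_of_nonneg (by positivity)
      have hapos : 0 < a := by
        have : 1 < ry.num := by
          by_contra hc
          push_neg at hc
          have h1le : ry ≤ 1 := by
            rw [← Rat.num_div_den ry]
            rw [div_le_one (by exact_mod_cast ry.pos)]
            calc (ry.num : ℚ) ≤ 1 := by exact_mod_cast hc
              _ ≤ (ry.den : ℚ) := by exact_mod_cast ry.pos
          linarith
        omega
      have hnumcast : ((ry.num : ℝ)) = (ry:ℝ) * (ry.den : ℝ) := by
        rw [Rat.cast_def]; field_simp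
      have e1 : Real.log ((rx:ℝ) ^ a) = Real.log ((17:ℝ) ^ (k * ry.den)) := by
        rw [Real.log_pow, Real.log_pow]
        have hcast : ((a:ℝ)) = (ry:ℝ) * (ry.den : ℝ) := by
          rw [← hnumcast]; exact_mod_cast congrArg (Int.cast : ℤ → ℝ) hanum
        rw [hcast]
        push_cast
        rw [hrx]
        rw [← hry] at h1
        nlinarith [h1]
      have e2 : (rx:ℝ) ^ a = (17:ℝ) ^ (k * ry.den) := by
        have hpx : (0:ℝ) < (rx:ℝ) ^ a := by positivity
        have hp17 : (0:ℝ) < (17:ℝ) ^ (k * ry.den) := by positivity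
        rw [← Real.exp_log hpx, e1, Real.exp_log hp17]
      have e3 : rx ^ a = (17:ℚ) ^ (k * ry.den) := by exact_mod_cast e2
      obtain ⟨m, hmx, _⟩ := ratPow17 hrx1 hapos e3
      have hm0 : m ≠ 0 := by
        intro hm
        rw [hm, pow_zero] at hmx
        rw [hmx] at hrx1
        exact lt_irrefl _ hrx1
      -- second equation
      have e4 : Real.log ((ry:ℝ) ^ (17 ^ m)) = Real.log ((17:ℝ) ^ 1) := by
        rw [Real.log_pow, Real.log_pow]
        have hxval : (rx:ℝ) = ((17:ℝ)) ^ m := by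
          rw [hmx]; push_cast; ring
        rw [← hry, ← hrx, hxval] at h2
        push_cast
        nlinarith [h2]
      have e5 : (ry:ℝ) ^ (17 ^ m) = (17:ℝ) ^ 1 := by
        have hpy : (0:ℝ) < (ry:ℝ) ^ (17 ^ m) := by positivity
        rw [← Real.exp_log hpy, e4, Real.exp_log (by positivity)]
      have e6 : ry ^ (17 ^ m) = (17:ℚ) ^ 1 := by exact_mod_cast e5
      obtain ⟨m', _, hm'⟩ := ratPow17 hry1 (by positivity) e6
      have : 17 ^ m = 1 := Nat.eq_one_of_mul_eq_one_left hm'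
      have : m = 0 := by
        by_contra hmm
        have : 17 ^ m ≥ 17 := by
          calc 17 ^ m ≥ 17 ^ 1 := Nat.pow_le_pow_right (by norm_num) (by omega)
            _ = 17 := by norm_num
        omega
      exact hm0 this
    · push_neg at hxr
      apply gelfondSchneider hS hy hyalg hxr hxalg
      rw [h2, Real.exp_log (by norm_num : (0:ℝ) < 17)]
      exact algRatR 17
  · push_neg at hyr
    apply gelfondSchneider hS hx hxalg hyr hyalg
    rw [h1, Real.exp_nat_mul, Real.exp_log (by norm_num : (0:ℝ) < 17)]
    have : ((17:ℝ)) ^ k = ((17 ^ k : ℚ) : ℝ) := by push_cast; ring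
    rw [this]
    exact algRatR _

lemma fin3_or {p : Fin 3 → Prop} (h : ∃ j, p j) : p 0 ∨ p 1 ∨ p 2 := by
  obtain ⟨⟨jv, hl⟩, hj⟩ := h
  interval_cases jv
  · exact Or.inl hj
  · exact Or.inr (Or.inl hj)
  · exact Or.inr (Or.inr hj)

lemma engineX (hS : SchanuelConjecture) {x y : ℝ} (hx : 1 < x) (hy : 1 < y)
    (k : ℕ) (hk : 1 ≤ k) (h1 : y * Real.log x = (k : ℝ) * Real.log 17)
    (h2 : x * Real.log y = Real.log 17)
    (hxalg : IsAlgebraic ℚ x) (hytr : Transcendental ℚ y) : False := by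
  have hL17 := log17pos
  have hLx : (0:ℝ) < Real.log x := Real.log_pos hx
  have hLy : (0:ℝ) < Real.log y := Real.log_pos hy
  have hxpos : (0:ℝ) < x := lt_trans one_pos hx
  have hypos : (0:ℝ) < y := lt_trans one_pos hy
  have hkpos : (0:ℝ) < (k:ℝ) := by exact_mod_cast hk
  set α : Fin 3 → ℂ := ![(Real.log x : ℂ), (Real.log y : ℂ), (Real.log 17 : ℂ)] with hα
  have hxnotrat : ∀ r : ℚ, (r:ℝ) = x → False := by
    intro r hr
    apply hytr
    have hrpos : 0 < r := by
      have : (0:ℝ) < (r:ℝ) := by rw [hr]; exact hxpos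
      exact_mod_cast this
    apply ratLogAlg hypos (t := r⁻¹) (by positivity)
    rw [← hr] at h2
    have hrne : (r:ℝ) ≠ 0 := by positivity
    push_cast
    field_simp
    linarith [h2]
  have hlin : LinearIndependent ℚ α := by
    rw [Fintype.linearIndependent_iff]
    intro q hq
    rw [Fin.sum_univ_three] at hq
    have hq' : (q 0 : ℂ) * (Real.log x : ℂ) + (q 1 : ℂ) * (Real.log y : ℂ)
        + (q 2 : ℂ) * (Real.log 17 : ℂ) = 0 := by
      simpa [hα, Rat.smul_def] using hq
    have hreal : (q 0 : ℝ) * Real.log x + (q 1 : ℝ) * Real.log y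
        + (q 2 : ℝ) * Real.log 17 = 0 := by
      have h3 : (((q 0 : ℝ) * Real.log x + (q 1 : ℝ) * Real.log y
        + (q 2 : ℝ) * Real.log 17 : ℝ) : ℂ) = 0 := by
        push_cast
        linear_combination hq'
      exact_mod_cast h3
    have hz : (((q 0:ℝ) * k * x + ((q 1:ℝ) + (q 2:ℝ) * x) * y) * Real.log y) = 0 := by
      linear_combination y * hreal - (q 0:ℝ) * h1 + ((q 0:ℝ) * k + (q 2:ℝ) * y) * h2
    have hkey : (q 0:ℝ) * k * x + ((q 1:ℝ) + (q 2:ℝ) * x) * y = 0 := by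
      rcases mul_eq_zero.mp hz with h | h
      · exact h
      · exact absurd h (ne_of_gt hLy)
    by_cases hB : (q 1 : ℝ) + (q 2 : ℝ) * x = 0
    · have hq0 : q 0 = 0 := by
        have h4 : (q 0 : ℝ) * (k * x) = 0 := by
          rw [hB] at hkey; linarith [hkey]
        rcases mul_eq_zero.mp h4 with h | h
        · exact_mod_cast h
        · exact absurd h (by positivity)
      by_cases hq2 : q 2 = 0
      · have hq1 : q 1 = 0 := by
          have : (q 1 : ℝ) = 0 := by
            have : ((q 2 : ℚ) : ℝ) = 0 := by exact_mod_cast hq2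
            rw [this] at hB; linarith
          exact_mod_cast this
        intro i; fin_cases i <;> assumption
      · exfalso
        apply hxnotrat (-(q 1)/(q 2))
        have hne : (q 2:ℝ) ≠ 0 := by exact_mod_cast hq2
        push_cast
        field_simp
        linarith [hB]
    · exfalso
      refine transSolve hytr (A := -((q 0:ℝ) * k * x)) (B := (q 1:ℝ) + (q 2:ℝ) * x)
        ?_ ?_ hB (by linarith [hkey])
      · have he : -((q 0:ℝ)*k*x) = ((-(q 0) * k : ℚ):ℝ) * x := by push_cast; ring
        rw [he]; exact IsAlgebraicQ.mul (algRatR _) hxalg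
      · exact IsAlgebraicQ.add (algRatR _) (IsAlgebraicQ.mul (algRatR _) hxalg)
  obtain ⟨g, hmem, hg⟩ := hS 3 α hlin
  simp only [Set.mem_union, Set.mem_range] at hmem
  have hexp0 : Complex.exp (α 0) = (x:ℂ) := by
    simp only [hα, Matrix.cons_val_zero]
    rw [← Complex.ofReal_exp, Real.exp_log hxpos]
  have hexp1 : Complex.exp (α 1) = (y:ℂ) := by
    simp only [hα, Matrix.cons_val_one, Matrix.head_cons, Matrix.cons_val_zero]
    rw [← Complex.ofReal_exp, Real.exp_log hypos]
  have hexp2 : Complex.exp (α 2) = (17:ℂ) := by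
    have : α 2 = ((Real.log 17 : ℝ) : ℂ) := by simp [hα]
    rw [this, ← Complex.ofReal_exp, Real.exp_log (by norm_num : (0:ℝ) < 17)]
    norm_num
  set v : Fin 4 → ℂ := ![α 0, α 1, α 2, (y:ℂ)] with hv
  have hslot : ∀ i, ∃ j : Fin 4, g i = v j := by
    intro i
    have htr := hg.transcendental i
    rcases hmem i with h | h
    · rcases fin3_or h with hj | hj | hj
      · exact ⟨0, hj.symm⟩
      · exact ⟨1, hj.symm⟩
      · exact ⟨2, hj.symm⟩
    · rcases fin3_or h with hj | hj | hj
      · exact absurd (by rw [← hj, hexp0]; exact algC_of_algR hxalg) htr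
      · exact ⟨3, by rw [← hj, hexp1]; simp [hv]⟩
      · exact absurd (by rw [← hj, hexp2]; simpa using algRatC 17) htr
  choose sfun hsfun using hslot
  have hsinj : Function.Injective sfun := by
    intro i j hij
    apply hg.injective
    rw [hsfun i, hsfun j, hij]
  have hkC : IsAlgebraic ℚ ((k:ℕ) : ℂ) := by
    have : ((k:ℕ) : ℂ) = ((k : ℚ) : ℂ) := by push_cast; ring
    rw [this]; exact algRatC _
  by_cases hhit : (∃ i, sfun i = 1) ∧ (∃ i, sfun i = 2)
  · obtain ⟨⟨i1, hi1⟩, ⟨i2, hi2⟩⟩ := hhit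
    have hne : i2 ≠ i1 := by
      intro h; rw [h, hi1] at hi2; exact absurd hi2 (by decide)
    apply dep2 hg hne (algC_of_algR hxalg)
    rw [hsfun i1, hsfun i2, hi1, hi2]
    show (Real.log 17 : ℂ) = (x:ℂ) * (Real.log y : ℂ)
    rw [← Complex.ofReal_mul, ← h2]
  · rcases not_and_or.mp hhit with hmiss | hmiss
    · push_neg at hmiss
      obtain ⟨a, ha⟩ := missSurj hsinj 1 hmiss 0 (by decide)
      obtain ⟨b, hb⟩ := missSurj hsinj 1 hmiss 2 (by decide)
      obtain ⟨c, hc⟩ := missSurj hsinj 1 hmiss 3 (by decide)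
      have hca : c ≠ a := by intro h; rw [h, ha] at hc; exact absurd hc (by decide)
      have hcb : c ≠ b := by intro h; rw [h, hb] at hc; exact absurd hc (by decide)
      have hab : a ≠ b := by intro h; rw [h, hb] at ha; exact absurd ha (by decide)
      refine dep3 hg (i := c) (j := a) (l := b) hca hcb hab hkC ?_
      rw [hsfun a, hsfun b, hsfun c, ha, hb, hc]
      show (y:ℂ) * (Real.log x : ℂ) = ((k:ℕ):ℂ) * (Real.log 17 : ℂ)
      rw [← Complex.ofReal_mul]
      rw [show ((k:ℕ):ℂ) = ((k:ℝ):ℂ) by push_cast; ring]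
      rw [← Complex.ofReal_mul, h1]
    · push_neg at hmiss
      obtain ⟨a, ha⟩ := missSurj hsinj 2 hmiss 0 (by decide)
      obtain ⟨b, hb⟩ := missSurj hsinj 2 hmiss 1 (by decide)
      obtain ⟨c, hc⟩ := missSurj hsinj 2 hmiss 3 (by decide)
      have hca : c ≠ a := by intro h; rw [h, ha] at hc; exact absurd hc (by decide)
      have hcb : c ≠ b := by intro h; rw [h, hb] at hc; exact absurd hc (by decide)
      have hab : a ≠ b := by intro h; rw [h, hb] at ha; exact absurd ha (by decide)
      refine dep3 hg (i := c) (j := a) (l := b) hca hcb hab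
        (IsAlgebraicQ.mul hkC (algC_of_algR hxalg)) ?_
      rw [hsfun a, hsfun b, hsfun c, ha, hb, hc]
      show (y:ℂ) * (Real.log x : ℂ) = ((k:ℕ):ℂ) * (x:ℂ) * (Real.log y : ℂ)
      rw [← Complex.ofReal_mul]
      rw [show ((k:ℕ):ℂ) = ((k:ℝ):ℂ) by push_cast; ring]
      rw [← Complex.ofReal_mul, ← Complex.ofReal_mul]
      rw [show y * Real.log x = (k:ℝ) * x * Real.log y by rw [h1]; rw [← h2]; ring]

lemma engineY (hS : SchanuelConjecture) {x y : ℝ} (hx : 1 < x) (hy : 1 < y)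
    (k : ℕ) (hk : 1 ≤ k) (h1 : y * Real.log x = (k : ℝ) * Real.log 17)
    (h2 : x * Real.log y = Real.log 17)
    (hyalg : IsAlgebraic ℚ y) (hxtr : Transcendental ℚ x) : False := by
  have hL17 := log17pos
  have hLx : (0:ℝ) < Real.log x := Real.log_pos hx
  have hLy : (0:ℝ) < Real.log y := Real.log_pos hy
  have hxpos : (0:ℝ) < x := lt_trans one_pos hx
  have hypos : (0:ℝ) < y := lt_trans one_pos hy
  have hkpos : (0:ℝ) < (k:ℝ) := by exact_mod_cast hk
  set α : Fin 3 → ℂ := ![(Real.log x : ℂ), (Real.log y : ℂ),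
    ((k:ℕ):ℂ) * (Real.log 17 : ℂ)] with hα
  have hynotrat : ∀ r : ℚ, (r:ℝ) = y → False := by
    intro r hr
    apply hxtr
    have hrpos : 0 < r := by
      have : (0:ℝ) < (r:ℝ) := by rw [hr]; exact hypos
      exact_mod_cast this
    apply ratLogAlg hxpos (t := k / r) (by positivity)
    rw [← hr] at h1
    have hrne : (r:ℝ) ≠ 0 := by positivity
    push_cast
    field_simp
    linarith [h1]
  have hlin : LinearIndependent ℚ α := by
    rw [Fintype.linearIndependent_iff]
    intro q hq
    rw [Fin.sum_univ_three] at hq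
    have hq' : (q 0 : ℂ) * (Real.log x : ℂ) + (q 1 : ℂ) * (Real.log y : ℂ)
        + (q 2 : ℂ) * (((k:ℕ):ℂ) * (Real.log 17 : ℂ)) = 0 := by
      simpa [hα, Rat.smul_def] using hq
    have hreal : (q 0 : ℝ) * Real.log x + (q 1 : ℝ) * Real.log y
        + (q 2 : ℝ) * ((k:ℝ) * Real.log 17) = 0 := by
      have h3 : (((q 0 : ℝ) * Real.log x + (q 1 : ℝ) * Real.log y
        + (q 2 : ℝ) * ((k:ℝ) * Real.log 17) : ℝ) : ℂ) = 0 := by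
        push_cast
        linear_combination hq'
      exact_mod_cast h3
    -- multiply by x*y: q0 x y Lx + q1 x y Ly + q2 k x y L17 = 0
    -- x y Lx = x k L17; x y Ly = y L17 ⇒ L17 (q0 k x + q1 y + q2 k x y) = 0
    have hz : (((q 0:ℝ) * k * x + (q 1:ℝ) * y + (q 2:ℝ) * k * x * y) * Real.log 17) = 0 := by
      linear_combination x * y * hreal - (q 0:ℝ) * x * h1 - (q 1:ℝ) * y * h2
    have hkey : (q 0:ℝ) * k * x + (q 1:ℝ) * y + (q 2:ℝ) * k * x * y = 0 := by
      rcases mul_eq_zero.mp hz with h | h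
      · exact h
      · exact absurd h (ne_of_gt hL17)
    -- x * (k (q0 + q2 y)) = -q1 y
    by_cases hB : (q 0:ℝ) + (q 2:ℝ) * y = 0
    · have hq1 : q 1 = 0 := by
        have h4 : (q 1:ℝ) * y = 0 := by
          linear_combination hkey - (k:ℝ) * x * hB
        rcases mul_eq_zero.mp h4 with h | h
        · exact_mod_cast h
        · exact absurd h (ne_of_gt hypos)
      by_cases hq2 : q 2 = 0
      · have hq0 : q 0 = 0 := by
          have : (q 0 : ℝ) = 0 := by
            have hc : ((q 2 : ℚ) : ℝ) = 0 := by exact_mod_cast hq2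
            rw [hc] at hB; linarith
          exact_mod_cast this
        intro i; fin_cases i <;> assumption
      · exfalso
        apply hynotrat (-(q 0)/(q 2))
        have hne : (q 2:ℝ) ≠ 0 := by exact_mod_cast hq2
        push_cast
        field_simp
        linarith [hB]
    · exfalso
      refine transSolve hxtr (A := -((q 1:ℝ) * y)) (B := ((q 0:ℝ) + (q 2:ℝ) * y) * (k:ℝ))
        ?_ ?_ (mul_ne_zero hB (ne_of_gt hkpos)) (by linear_combination hkey)
      · have he : -((q 1:ℝ) * y) = ((-(q 1) : ℚ):ℝ) * y := by push_cast; ring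
        rw [he]; exact IsAlgebraicQ.mul (algRatR _) hyalg
      · have he : ((k:ℕ):ℝ) = (((k:ℕ):ℚ):ℝ) := by push_cast; ring
        rw [he]
        exact IsAlgebraicQ.mul
          (IsAlgebraicQ.add (algRatR _) (IsAlgebraicQ.mul (algRatR _) hyalg)) (algRatR _)
  obtain ⟨g, hmem, hg⟩ := hS 3 α hlin
  simp only [Set.mem_union, Set.mem_range] at hmem
  have hexp0 : Complex.exp (α 0) = (x:ℂ) := by
    simp only [hα, Matrix.cons_val_zero]
    rw [← Complex.ofReal_exp, Real.exp_log hxpos]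
  have hexp1 : Complex.exp (α 1) = (y:ℂ) := by
    simp only [hα, Matrix.cons_val_one, Matrix.head_cons, Matrix.cons_val_zero]
    rw [← Complex.ofReal_exp, Real.exp_log hypos]
  have hexp2 : Complex.exp (α 2) = ((((17:ℝ)) ^ k : ℝ) : ℂ) := by
    have he : α 2 = (((k:ℝ) * Real.log 17 : ℝ) : ℂ) := by
      show ((k:ℕ):ℂ) * (Real.log 17 : ℂ) = _
      push_cast
      ring
    rw [he, ← Complex.ofReal_exp, Real.exp_nat_mul, Real.exp_log (by norm_num : (0:ℝ) < 17)]
  have h17kalg : IsAlgebraic ℚ (((((17:ℝ)) ^ k : ℝ) : ℂ)) := by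
    have : ((((17:ℝ)) ^ k : ℝ) : ℂ) = (((17 ^ k : ℚ)) : ℂ) := by push_cast; ring
    rw [this]; exact algRatC _
  set v : Fin 4 → ℂ := ![α 0, α 1, α 2, (x:ℂ)] with hv
  have hslot : ∀ i, ∃ j : Fin 4, g i = v j := by
    intro i
    have htr := hg.transcendental i
    rcases hmem i with h | h
    · rcases fin3_or h with hj | hj | hj
      · exact ⟨0, hj.symm⟩
      · exact ⟨1, hj.symm⟩
      · exact ⟨2, hj.symm⟩
    · rcases fin3_or h with hj | hj | hj
      · exact ⟨3, by rw [← hj, hexp0]; simp [hv]⟩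
      · exact absurd (by rw [← hj, hexp1]; exact algC_of_algR hyalg) htr
      · exact absurd (by rw [← hj, hexp2]; exact h17kalg) htr
  choose sfun hsfun using hslot
  have hsinj : Function.Injective sfun := by
    intro i j hij
    apply hg.injective
    rw [hsfun i, hsfun j, hij]
  have hkC : IsAlgebraic ℚ ((k:ℕ) : ℂ) := by
    have : ((k:ℕ) : ℂ) = ((k : ℚ) : ℂ) := by push_cast; ring
    rw [this]; exact algRatC _
  have hkCne : ((k:ℕ) : ℂ) ≠ 0 := by
    have : ((k:ℕ) : ℂ) = (((k:ℝ)) : ℂ) := by push_cast; ring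
    rw [this]
    simpa using ne_of_gt hkpos
  -- relation: α 2 = k * L17 = y * Lx (h1)
  have hrel02 : α 2 = (y:ℂ) * α 0 := by
    show ((k:ℕ):ℂ) * (Real.log 17 : ℂ) = (y:ℂ) * (Real.log x : ℂ)
    rw [show ((k:ℕ):ℂ) = ((k:ℝ):ℂ) by push_cast; ring]
    rw [← Complex.ofReal_mul, ← Complex.ofReal_mul, ← h1]
  by_cases hhit : (∃ i, sfun i = 0) ∧ (∃ i, sfun i = 2)
  · obtain ⟨⟨i1, hi1⟩, ⟨i2, hi2⟩⟩ := hhit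
    have hne : i2 ≠ i1 := by
      intro h; rw [h, hi1] at hi2; exact absurd hi2 (by decide)
    apply dep2 hg hne (algC_of_algR hyalg)
    rw [hsfun i1, hsfun i2, hi1, hi2]
    exact hrel02
  · rcases not_and_or.mp hhit with hmiss | hmiss
    · push_neg at hmiss
      obtain ⟨a, ha⟩ := missSurj hsinj 0 hmiss 1 (by decide)
      obtain ⟨b, hb⟩ := missSurj hsinj 0 hmiss 2 (by decide)
      obtain ⟨c, hc⟩ := missSurj hsinj 0 hmiss 3 (by decide)
      have hca : c ≠ a := by intro h; rw [h, ha] at hc; exact absurd hc (by decide)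
      have hcb : c ≠ b := by intro h; rw [h, hb] at hc; exact absurd hc (by decide)
      have hab : a ≠ b := by intro h; rw [h, hb] at ha; exact absurd ha (by decide)
      -- g c * g a = x * Ly = (1/k) * (k L17) = k⁻¹ * g b
      refine dep3 hg (i := c) (j := a) (l := b) hca hcb hab (hkC.inv) ?_
      rw [hsfun a, hsfun b, hsfun c, ha, hb, hc]
      show (x:ℂ) * (Real.log y : ℂ) = ((k:ℕ):ℂ)⁻¹ * (((k:ℕ):ℂ) * (Real.log 17 : ℂ))
      rw [inv_mul_cancel_left₀ hkCne, ← Complex.ofReal_mul, h2]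
    · push_neg at hmiss
      obtain ⟨a, ha⟩ := missSurj hsinj 2 hmiss 0 (by decide)
      obtain ⟨b, hb⟩ := missSurj hsinj 2 hmiss 1 (by decide)
      obtain ⟨c, hc⟩ := missSurj hsinj 2 hmiss 3 (by decide)
      have hca : c ≠ a := by intro h; rw [h, ha] at hc; exact absurd hc (by decide)
      have hcb : c ≠ b := by intro h; rw [h, hb] at hc; exact absurd hc (by decide)
      have hab : a ≠ b := by intro h; rw [h, hb] at ha; exact absurd ha (by decide)
      -- g c * g b = x * Ly = (y/k) * Lx = (y/k) * g a
      have hyne : (y:ℂ) ≠ 0 := by simpa using ne_of_gt hypos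
      refine dep3 hg (i := c) (j := b) (l := a) hcb hca hab.symm
        (IsAlgebraicQ.mul (algC_of_algR hyalg) hkC.inv) ?_
      rw [hsfun a, hsfun b, hsfun c, ha, hb, hc]
      show (x:ℂ) * (Real.log y : ℂ) = (y:ℂ) * ((k:ℕ):ℂ)⁻¹ * (Real.log x : ℂ)
      rw [show ((k:ℕ):ℂ) = ((k:ℝ):ℂ) by push_cast; ring]
      rw [← Complex.ofReal_inv, ← Complex.ofReal_mul, ← Complex.ofReal_mul,
        ← Complex.ofReal_mul]
      congr 1
      have hkne : (k:ℝ) ≠ 0 := ne_of_gt hkpos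
      field_simp
      linear_combination (k:ℝ) * h2 - h1

lemma mainTrans (hS : SchanuelConjecture) {x y : ℝ} (hx : 1 < x) (hy : 1 < y)
    (k : ℕ) (hk : 1 ≤ k) (h1 : y * Real.log x = (k : ℝ) * Real.log 17)
    (h2 : x * Real.log y = Real.log 17) :
    Transcendental ℚ x ∧ Transcendental ℚ y := by
  constructor
  · intro hxalg
    by_cases hyalg : IsAlgebraic ℚ y
    · exact bothAlg hS hx hy k hk h1 h2 hxalg hyalg
    · exact engineX hS hx hy k hk h1 h2 hxalg hyalg
  · intro hyalg
    by_cases hxalg : IsAlgebraic ℚ x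
    · exact bothAlg hS hx hy k hk h1 h2 hxalg hyalg
    · exact engineY hS hx hy k hk h1 h2 hyalg hxalg

lemma exist1 : ∃ x y : ℝ, 1 < x ∧ 1 < y ∧
    y * Real.log x = 2 * Real.log 17 ∧ x * Real.log y = Real.log 17 := by
  have hL17 := log17pos
  set f : ℝ → ℝ := fun x => Real.exp (x * Real.log (2 * Real.log 17 / Real.log x)) with hf
  have hcont : ContinuousOn f (Set.Icc 17 289) := by
    apply Real.continuous_exp.comp_continuousOn
    apply ContinuousOn.mul continuousOn_id
    apply ContinuousOn.log
    · apply ContinuousOn.div continuousOn_const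
      · apply ContinuousOn.log continuousOn_id
        intro z hz
        simp only [Set.mem_Icc] at hz
        intro h0
        simp only [id_eq] at h0
        rw [h0] at hz; norm_num at hz
      · intro z hz
        simp only [Set.mem_Icc] at hz
        have : (0:ℝ) < Real.log z := Real.log_pos (by linarith [hz.1])
        exact ne_of_gt this
    · intro z hz
      simp only [Set.mem_Icc] at hz
      have hlz : (0:ℝ) < Real.log z := Real.log_pos (by linarith [hz.1])
      have : (0:ℝ) < 2 * Real.log 17 / Real.log z := by positivity
      exact ne_of_gt this
  have hlog289 : Real.log 289 = 2 * Real.log 17 := by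
    rw [show (289:ℝ) = 17 ^ 2 by norm_num, Real.log_pow]
    push_cast; ring
  have hf289 : f 289 = 1 := by
    rw [hf]
    simp only
    rw [hlog289, div_self (by positivity), Real.log_one, mul_zero, Real.exp_zero]
  have hf17 : f 17 = 2 ^ (17:ℕ) := by
    rw [hf]
    simp only
    rw [show 2 * Real.log 17 / Real.log 17 = 2 by field_simp]
    rw [show (17:ℝ) * Real.log 2 = ((17:ℕ):ℝ) * Real.log 2 by norm_num]
    rw [Real.exp_nat_mul, Real.exp_log two_pos]
  have hmem : (17:ℝ) ∈ Set.Icc (f 289) (f 17) := by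
    rw [hf289, hf17]
    constructor <;> norm_num
  obtain ⟨x₀, hx₀mem, hfx₀⟩ := intermediate_value_Icc' (by norm_num : (17:ℝ) ≤ 289) hcont hmem
  obtain ⟨hx₀l, hx₀r⟩ := hx₀mem
  have hx₀ne17 : x₀ ≠ 17 := by
    intro h; rw [h, hf17] at hfx₀; norm_num at hfx₀
  have hx₀ne289 : x₀ ≠ 289 := by
    intro h; rw [h, hf289] at hfx₀; norm_num at hfx₀
  have hx₀gt : (1:ℝ) < x₀ := by linarith
  have hLx₀ : (0:ℝ) < Real.log x₀ := Real.log_pos hx₀gt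
  set y₀ : ℝ := 2 * Real.log 17 / Real.log x₀ with hy₀
  have hy₀pos : 0 < y₀ := by positivity
  have hy₀gt : (1:ℝ) < y₀ := by
    rw [hy₀, lt_div_iff₀ hLx₀, one_mul]
    rw [← hlog289]
    exact Real.log_lt_log (by linarith) (lt_of_le_of_ne hx₀r hx₀ne289)
  refine ⟨x₀, y₀, hx₀gt, hy₀gt, ?_, ?_⟩
  · rw [hy₀]; field_simp
  · have : Real.log (f x₀) = Real.log 17 := by rw [hfx₀]
    rw [hf] at this
    simp only [Real.log_exp] at this
    exact this

lemma exist2 : ∃ s t : ℝ, 1 < s ∧ 1 < t ∧ s ≠ t ∧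
    t * Real.log s = Real.log 17 ∧ s * Real.log t = Real.log 17 := by
  have hL17 := log17pos
  have hL2 : (0:ℝ) < Real.log 2 := Real.log_pos (by norm_num)
  have hsq := Real.sq_sqrt (show (0:ℝ) ≤ 2 by norm_num)
  have hsqnn := Real.sqrt_nonneg 2
  have hsqrt2lt : Real.sqrt 2 < 2 := by nlinarith
  have hsqrt2gt : (1:ℝ) < Real.sqrt 2 := by nlinarith
  set f : ℝ → ℝ := fun s => Real.exp (s * Real.log (Real.log 17 / Real.log s)) with hf
  have hcont : ContinuousOn f (Set.Icc (Real.sqrt 2) 2) := by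
    apply Real.continuous_exp.comp_continuousOn
    apply ContinuousOn.mul continuousOn_id
    apply ContinuousOn.log
    · apply ContinuousOn.div continuousOn_const
      · apply ContinuousOn.log continuousOn_id
        intro z hz
        simp only [Set.mem_Icc] at hz
        simp only [id_eq]
        intro h0
        rw [h0] at hz
        linarith [hz.1]
      · intro z hz
        simp only [Set.mem_Icc] at hz
        have : (0:ℝ) < Real.log z := Real.log_pos (by linarith [hz.1])
        exact ne_of_gt this
    · intro z hz
      simp only [Set.mem_Icc] at hz
      have hlz : (0:ℝ) < Real.log z := Real.log_pos (by linarith [hz.1])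
      have : (0:ℝ) < Real.log 17 / Real.log z := by positivity
      exact ne_of_gt this
  have hc4 : 4 * Real.log 2 < Real.log 17 := by
    have h1 : Real.log (2^(4:ℕ)) < Real.log 17 :=
      Real.log_lt_log (by positivity) (by norm_num)
    rw [Real.log_pow] at h1
    push_cast at h1
    linarith
  have hc103 : 25 * Real.log 17 ≤ 103 * Real.log 2 := by
    have h1 : Real.log ((17:ℝ)^(25:ℕ)) ≤ Real.log (2^(103:ℕ)) := by
      apply Real.log_le_log (by positivity)
      norm_num
    rw [Real.log_pow, Real.log_pow] at h1
    push_cast at h1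
    linarith
  have hf2 : f 2 < 17 := by
    rw [hf]
    simp only
    have hcpos : 0 < Real.log 17 / Real.log 2 := by positivity
    rw [show (2:ℝ) * Real.log (Real.log 17 / Real.log 2)
        = ((2:ℕ):ℝ) * Real.log (Real.log 17 / Real.log 2) by norm_num,
      Real.exp_nat_mul, Real.exp_log hcpos]
    have hle : Real.log 17 / Real.log 2 ≤ 103/25 := by
      rw [div_le_iff₀ hL2]; linarith
    calc (Real.log 17 / Real.log 2) ^ (2:ℕ) ≤ (103/25) ^ (2:ℕ) := by
          apply pow_le_pow_left₀ hcpos.le hle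
      _ < 17 := by norm_num
  have hfs : 17 < f (Real.sqrt 2) := by
    rw [hf]
    simp only
    have hlogs : Real.log (Real.sqrt 2) = Real.log 2 / 2 := Real.log_sqrt (by norm_num)
    rw [hlogs, show Real.log 17 / (Real.log 2 / 2) = 2 * (Real.log 17 / Real.log 2) by ring]
    have h8 : (8:ℝ) ≤ 2 * (Real.log 17 / Real.log 2) := by
      have h4 : (4:ℝ) ≤ Real.log 17 / Real.log 2 := by
        rw [le_div_iff₀ hL2]; linarith
      linarith
    have hsq75 : (7/5:ℝ) ≤ Real.sqrt 2 := by
      rw [show (7/5:ℝ) = Real.sqrt ((7/5)^2) from (Real.sqrt_sq (by norm_num)).symm]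
      apply Real.sqrt_le_sqrt
      norm_num
    have hlog8pos : (0:ℝ) < Real.log 8 := Real.log_pos (by norm_num)
    have hmono : (7/5:ℝ) * Real.log 8 ≤ Real.sqrt 2 * Real.log (2*(Real.log 17/Real.log 2)) := by
      apply mul_le_mul hsq75 (Real.log_le_log (by norm_num) h8) hlog8pos.le (by positivity)
    have hkey : (17:ℝ) < Real.exp ((7/5) * Real.log 8) := by
      set u := Real.exp ((7/5) * Real.log 8) with hu
      have hupos : 0 < u := Real.exp_pos _
      have hu5 : u ^ (5:ℕ) = 8 ^ (7:ℕ) := by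
        rw [hu, ← Real.exp_nat_mul]
        rw [show ((5:ℕ):ℝ) * ((7/5) * Real.log 8) = ((7:ℕ):ℝ) * Real.log 8 by push_cast; ring]
        rw [Real.exp_nat_mul, Real.exp_log (by norm_num : (0:ℝ) < 8)]
      by_contra hcon
      push_neg at hcon
      have h5 : u ^ (5:ℕ) ≤ 17 ^ (5:ℕ) := pow_le_pow_left₀ hupos.le hcon 5
      rw [hu5] at h5
      norm_num at h5
    calc (17:ℝ) < Real.exp ((7/5) * Real.log 8) := hkey
      _ ≤ _ := Real.exp_le_exp.mpr hmono
  have hmem : (17:ℝ) ∈ Set.Icc (f 2) (f (Real.sqrt 2)) := ⟨hf2.le, hfs.le⟩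
  obtain ⟨s₀, hs₀mem, hfs₀⟩ := intermediate_value_Icc' (le_of_lt hsqrt2lt) hcont hmem
  obtain ⟨hs₀l, hs₀r⟩ := hs₀mem
  have hs₀gt : (1:ℝ) < s₀ := lt_of_lt_of_le hsqrt2gt hs₀l
  have hLs₀ : (0:ℝ) < Real.log s₀ := Real.log_pos hs₀gt
  set t₀ : ℝ := Real.log 17 / Real.log s₀ with ht₀
  have ht₀4 : (4:ℝ) < t₀ := by
    rw [ht₀]
    have hlogle : Real.log s₀ ≤ Real.log 2 := Real.log_le_log (by linarith) hs₀r
    have h1 : Real.log 17 / Real.log 2 ≤ Real.log 17 / Real.log s₀ :=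
      div_le_div_of_nonneg_left hL17.le hLs₀ hlogle
    have h2 : (4:ℝ) < Real.log 17 / Real.log 2 := by
      rw [lt_div_iff₀ hL2]; linarith
    linarith
  have hst : s₀ ≠ t₀ := by
    intro h
    have : s₀ ≤ 2 := hs₀r
    rw [h] at this
    linarith
  refine ⟨s₀, t₀, hs₀gt, by linarith, hst, ?_, ?_⟩
  · rw [ht₀]; field_simp
  · have hlg : Real.log (f s₀) = Real.log 17 := by rw [hfs₀]
    rw [hf] at hlg
    simp only [Real.log_exp] at hlg
    exact hlg

/-- Assuming Schanuel's conjecture, there exist transcendental positive reals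
`x, y` and `s ≠ t` with `x^y ≠ y^x` and `s^t = t^s` all integers. -/
theorem exists_transcendental_with_integer_powers (hS : SchanuelConjecture) :
    ∃ x y s t : ℝ, 0 < x ∧ 0 < y ∧ 0 < s ∧ 0 < t ∧ s ≠ t ∧
      Transcendental ℚ x ∧ Transcendental ℚ y ∧
      Transcendental ℚ s ∧ Transcendental ℚ t ∧
      (∃ a : ℤ, (a : ℝ) = x ^ y) ∧ (∃ b : ℤ, (b : ℝ) = y ^ x) ∧
      (∃ c : ℤ, (c : ℝ) = s ^ t) ∧ (∃ d : ℤ, (d : ℝ) = t ^ s) ∧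
      x ^ y ≠ y ^ x ∧ s ^ t = t ^ s := by
  obtain ⟨x, y, hx, hy, h1, h2⟩ := exist1
  obtain ⟨s, t, hs, ht, hst, g1, g2⟩ := exist2
  have hxpos : (0:ℝ) < x := by linarith
  have hypos : (0:ℝ) < y := by linarith
  have hspos : (0:ℝ) < s := by linarith
  have htpos : (0:ℝ) < t := by linarith
  have hlog289 : Real.log 289 = 2 * Real.log 17 := by
    rw [show (289:ℝ) = 17 ^ 2 by norm_num, Real.log_pow]
    push_cast; ring
  have hxy := mainTrans hS hx hy 2 (by norm_num)
    (by rw [show ((2:ℕ):ℝ) = 2 by norm_num]; exact h1) h2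
  have hstT := mainTrans hS hs ht 1 (le_refl 1)
    (by rw [show ((1:ℕ):ℝ) = 1 by norm_num, one_mul]; exact g1) g2
  have hxy1 : x ^ y = (289:ℝ) := by
    rw [Real.rpow_def_of_pos hxpos, mul_comm, h1, ← hlog289,
      Real.exp_log (by norm_num : (0:ℝ) < 289)]
  have hyx1 : y ^ x = (17:ℝ) := by
    rw [Real.rpow_def_of_pos hypos, mul_comm, h2,
      Real.exp_log (by norm_num : (0:ℝ) < 17)]
  have hst1 : s ^ t = (17:ℝ) := by
    rw [Real.rpow_def_of_pos hspos, mul_comm, g1,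
      Real.exp_log (by norm_num : (0:ℝ) < 17)]
  have hts1 : t ^ s = (17:ℝ) := by
    rw [Real.rpow_def_of_pos htpos, mul_comm, g2,
      Real.exp_log (by norm_num : (0:ℝ) < 17)]
  refine ⟨x, y, s, t, hxpos, hypos, hspos, htpos, hst,
    hxy.1, hxy.2, hstT.1, hstT.2,
    ⟨289, by rw [hxy1]; norm_num⟩, ⟨17, by rw [hyx1]; norm_num⟩,
    ⟨17, by rw [hst1]; norm_num⟩, ⟨17, by rw [hts1]; norm_num⟩,
    by rw [hxy1, hyx1]; norm_num, by rw [hst1, hts1]⟩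
end
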